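/- arXiv:2302.09492 — 6 statements merged into one kernel-verified Lean document; each statement's English description precedes it below -/
import Mathlib

section
/- Assume the continuum hypothesis 2^{ℵ₀} = ℵ₁. Then ω₂ → (ω₂-stationary, ω₁)²: for every coloring d : [ω₂]² → {0,1} of the pairs of ordinals below ω₂, either there exists a set X ⊆ ω₂ of order type ω₁ such that d is constantly 1 on [X]², or there exists a stationary set S ⊆ ω₂ such that d is constantly 0 on [S]². -/
noncomputable def omega1 : Ordinal := (Cardinal.aleph 1).ord
noncomputable def omega2 : Ordinal := (Cardinal.aleph 2).ord

/-- `C` is a club in `κ`: a subset of `κ` that is unbounded in `κ` and closed,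
i.e. it contains every limit ordinal `δ < κ` in which `C ∩ δ` is unbounded. -/
def IsClubIn (C : Set Ordinal) (κ : Ordinal) : Prop :=
  C ⊆ Set.Iio κ ∧
  (∀ α < κ, ∃ β ∈ C, α < β) ∧
  (∀ δ < κ, Order.IsSuccLimit δ → (∀ α < δ, ∃ β ∈ C, α < β ∧ β < δ) → δ ∈ C)

/-- `S` is stationary in `κ`: it meets every club subset of `κ`. -/
def IsStationaryIn (S : Set Ordinal) (κ : Ordinal) : Prop :=
  ∀ C : Set Ordinal, IsClubIn C κ → (S ∩ C).Nonempty

namespace Stmt0Aux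

universe u

open Ordinal Cardinal Set

/-! ### Basic facts about `omega1` and `omega2` -/

lemma aleph1_lt_aleph2 : Cardinal.aleph.{u} 1 < Cardinal.aleph 2 := by
  rw [Cardinal.aleph_lt_aleph]; norm_num

lemma isRegular_aleph2 : (Cardinal.aleph.{u} 2).IsRegular := by
  have : (2 : Ordinal) = Order.succ 1 := by rw [Order.succ_eq_add_one, one_add_one_eq_two]
  rw [this]
  exact Cardinal.isRegular_aleph_succ 1

lemma cof_omega2 : omega2.{u}.cof = Cardinal.aleph 2 := isRegular_aleph2.cof_eq

lemma cof_omega1 : omega1.{u}.cof = Cardinal.aleph 1 := Cardinal.isRegular_aleph_one.cof_eq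

lemma isLimit_omega2 : Order.IsSuccLimit omega2.{u} :=
  Cardinal.isSuccLimit_ord (Cardinal.aleph0_le_aleph 2)

lemma isLimit_omega1 : Order.IsSuccLimit omega1.{u} :=
  Cardinal.isSuccLimit_ord (Cardinal.aleph0_le_aleph 1)

lemma omega1_lt_omega2 : omega1.{u} < omega2 := by
  rw [omega1, omega2]; exact Cardinal.ord_lt_ord.2 aleph1_lt_aleph2

lemma card_omega1 : omega1.{u}.card = Cardinal.aleph 1 := Cardinal.card_ord _

lemma card_le_of_lt_omega2 {β : Ordinal.{u}} (h : β < omega2) : β.card ≤ Cardinal.aleph 1 := by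
  have h1 : β.card < Cardinal.aleph 2 := Cardinal.lt_ord.1 h
  have h2 : Cardinal.aleph.{u} 2 = Order.succ (Cardinal.aleph 1) := by
    have h3 : (2 : Ordinal) = Order.succ 1 := by rw [Order.succ_eq_add_one, one_add_one_eq_two]
    rw [h3, Cardinal.aleph_succ]
  rw [h2, Order.lt_succ_iff] at h1
  exact h1

lemma card_le_of_lt_omega1 {β : Ordinal.{u}} (h : β < omega1) : β.card ≤ Cardinal.aleph 0 := by
  have h1 : β.card < Cardinal.aleph 1 := Cardinal.lt_ord.1 h
  have h2 : Cardinal.aleph.{u} 1 = Order.succ (Cardinal.aleph 0) := by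
    have h3 : (1 : Ordinal) = Order.succ 0 := by simp
    rw [h3, Cardinal.aleph_succ]
  rw [h2, Order.lt_succ_iff] at h1
  exact h1

lemma bsup_lt_omega2 {o : Ordinal.{u}} (ho : o < omega2) {f : ∀ a < o, Ordinal.{u}}
    (hf : ∀ i h, f i h < omega2) : Ordinal.bsup.{u, u} o f < omega2 := by
  apply Ordinal.bsup_lt_ord _ hf
  rw [cof_omega2]
  exact Cardinal.lt_ord.1 ho

lemma bsup_lt_omega1 {o : Ordinal.{u}} (ho : o < omega1) {f : ∀ a < o, Ordinal.{u}}
    (hf : ∀ i h, f i h < omega1) : Ordinal.bsup.{u, u} o f < omega1 := by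
  apply Ordinal.bsup_lt_ord _ hf
  rw [cof_omega1]
  exact Cardinal.lt_ord.1 ho

lemma bsup_omega1_lt_omega2 {f : ∀ a < omega1.{u}, Ordinal.{u}}
    (hf : ∀ i h, f i h < omega2) : Ordinal.bsup.{u, u} omega1 f < omega2 :=
  bsup_lt_omega2 omega1_lt_omega2 hf

/-! ### Next element of an unbounded set -/

/-- An unbounded-in-`omega2` predicate. -/
def Unbdd (X : Set Ordinal.{u}) : Prop := ∀ α < omega2, ∃ β ∈ X, α < β

noncomputable def nxt (X : Set Ordinal.{u}) (x : Ordinal.{u}) : Ordinal.{u} :=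
  sInf {y | y ∈ X ∧ x < y}

lemma nxt_spec {X : Set Ordinal.{u}} (hX : Unbdd X) {x : Ordinal.{u}} (hx : x < omega2) :
    nxt X x ∈ X ∧ x < nxt X x := by
  obtain ⟨β, hβ, hβ2⟩ := hX x hx
  have hne : {y | y ∈ X ∧ x < y}.Nonempty := ⟨β, hβ, hβ2⟩
  exact csInf_mem hne

lemma nxt_mono {X : Set Ordinal.{u}} (hX : Unbdd X) {x y : Ordinal.{u}} (hxy : x ≤ y)
    (hy : y < omega2) : nxt X x ≤ nxt X y := by
  obtain ⟨β, hβ, hβ2⟩ := hX y hy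
  have hne : {y' | y' ∈ X ∧ y < y'}.Nonempty := ⟨β, hβ, hβ2⟩
  apply csInf_le_csInf (OrderBot.bddBelow _) hne
  intro z hz
  exact ⟨hz.1, lt_of_le_of_lt hxy hz.2⟩

lemma isClubIn_Iio : IsClubIn (Set.Iio omega2.{u}) omega2 := by
  refine ⟨le_refl _, fun α hα => ⟨α + 1, isLimit_omega2.succ_lt hα, lt_add_one α⟩,
    fun δ hδ _ _ => hδ⟩

/-! ### Closure points -/

lemma exists_closure_point (F : Ordinal.{u} → Ordinal.{u})
    (hF1 : ∀ x < omega2, F x < omega2)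
    (hF2 : ∀ x < omega2, x < F x)
    (hmono : ∀ x y, x ≤ y → y < omega2 → F x ≤ F y)
    {α : Ordinal.{u}} (hα : α < omega2) :
    ∃ δ, α < δ ∧ δ < omega2 ∧ Order.IsSuccLimit δ ∧ ∀ x < δ, F x < δ := by
  set s : ℕ → Ordinal.{u} := fun n => Nat.rec (α + 1) (fun _ ih => F ih) n with hs
  have hslt : ∀ n, s n < omega2 := by
    intro n
    induction n with
    | zero => exact isLimit_omega2.succ_lt hα
    | succ n ih => exact hF1 _ ih
  have hsmono : ∀ n, s n < s (n + 1) := fun n => hF2 _ (hslt n)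
  set δ := ⨆ n, s n with hδ
  have hle : ∀ n, s n ≤ δ := fun n => Ordinal.le_iSup s n
  have hδ2 : δ < omega2 := by
    apply Ordinal.iSup_lt_ord_lift _ hslt
    rw [cof_omega2, Cardinal.mk_nat, Cardinal.lift_aleph0]
    exact (Cardinal.aleph0_le_aleph 1).trans_lt aleph1_lt_aleph2
  have hlt : ∀ x < δ, ∃ n, x < s n := by
    intro x hx
    exact (Ordinal.lt_iSup_iff).1 hx
  have hsn : ∀ n, s n < δ := fun n => lt_of_lt_of_le (hsmono n) (hle (n + 1))
  refine ⟨δ, lt_of_lt_of_le (lt_add_one α) (hle 0), hδ2, ?_, ?_⟩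
  · refine Ordinal.isSuccLimit_iff.2 ⟨?_, Order.isSuccPrelimit_iff_succ_lt.2 ?_⟩
    · intro h0
      exact absurd (h0 ▸ hsn 0) (by simp)
    · intro x hx
      obtain ⟨n, hn⟩ := hlt x hx
      exact lt_of_le_of_lt (Order.succ_le_of_lt hn) (lt_of_lt_of_le (hsmono n) (hle (n + 1)))
  · intro x hx
    obtain ⟨n, hn⟩ := hlt x hx
    calc F x ≤ F (s n) := hmono _ _ hn.le (hslt n)
    _ = s (n + 1) := rfl
    _ < δ := hsn (n + 1)
/-! ### Intersections of clubs -/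

lemma club_iInter (C : Ordinal.{u} → Set Ordinal.{u})
    (hC : ∀ i < omega1, IsClubIn (C i) omega2) :
    IsClubIn {β | β < omega2 ∧ ∀ i < omega1, β ∈ C i} omega2 := by
  refine ⟨fun x hx => hx.1, ?_, ?_⟩
  · -- unbounded
    intro α hα
    set F : Ordinal.{u} → Ordinal.{u} :=
      fun x => max (Ordinal.bsup.{u,u} omega1 (fun i _ => nxt (C i) x)) (x + 1) with hF
    have hF1 : ∀ x < omega2, F x < omega2 := by
      intro x hx
      apply max_lt _ (isLimit_omega2.succ_lt hx)
      apply bsup_omega1_lt_omega2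
      intro i hi
      exact (hC i hi).1 ((nxt_spec (hC i hi).2.1 hx).1)
    have hF2 : ∀ x < omega2, x < F x := fun x _ => lt_of_lt_of_le (lt_add_one x) (le_max_right _ _)
    have hmono : ∀ x y, x ≤ y → y < omega2 → F x ≤ F y := by
      intro x y hxy hy
      apply max_le_max _ (by simpa using hxy)
      apply Ordinal.bsup_le
      intro i hi
      exact le_trans (nxt_mono (hC i hi).2.1 hxy hy) (Ordinal.le_bsup _ i hi)
    obtain ⟨δ, hαδ, hδ2, hδlim, hδcl⟩ := exists_closure_point F hF1 hF2 hmono hα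
    refine ⟨δ, ⟨hδ2, ?_⟩, hαδ⟩
    intro i hi
    apply (hC i hi).2.2 δ hδ2 hδlim
    intro γ hγ
    have hγ1 : γ + 1 < δ := hδlim.succ_lt hγ
    have h1 := nxt_spec (hC i hi).2.1 (hγ1.trans hδ2)
    refine ⟨nxt (C i) (γ + 1), h1.1, lt_of_lt_of_le (lt_add_one γ) h1.2.le, ?_⟩
    calc nxt (C i) (γ + 1) ≤ Ordinal.bsup.{u,u} omega1 (fun i _ => nxt (C i) (γ + 1)) :=
        Ordinal.le_bsup _ i hi
    _ ≤ F (γ + 1) := le_max_left _ _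
    _ < δ := hδcl _ hγ1
  · -- closed
    intro δ hδ hδlim hcof
    refine ⟨hδ, fun i hi => ?_⟩
    apply (hC i hi).2.2 δ hδ hδlim
    intro α hα
    obtain ⟨β, hβ, hβ1, hβ2⟩ := hcof α hα
    exact ⟨β, hβ.2 i hi, hβ1, hβ2⟩

lemma club_diag (C : Ordinal.{u} → Set Ordinal.{u})
    (hC : ∀ i < omega2, IsClubIn (C i) omega2) :
    IsClubIn {β | β < omega2 ∧ ∀ i < β, β ∈ C i} omega2 := by
  refine ⟨fun x hx => hx.1, ?_, ?_⟩
  · -- unbounded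
    intro α hα
    set F : Ordinal.{u} → Ordinal.{u} :=
      fun x => max (Ordinal.bsup.{u,u} x (fun i _ => nxt (C i) x)) (x + 1) with hF
    have hF1 : ∀ x < omega2, F x < omega2 := by
      intro x hx
      apply max_lt _ (isLimit_omega2.succ_lt hx)
      apply bsup_lt_omega2 hx
      intro i hi
      exact (hC i (hi.trans hx)).1 ((nxt_spec (hC i (hi.trans hx)).2.1 hx).1)
    have hF2 : ∀ x < omega2, x < F x := fun x _ => lt_of_lt_of_le (lt_add_one x) (le_max_right _ _)
    have hmono : ∀ x y, x ≤ y → y < omega2 → F x ≤ F y := by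
      intro x y hxy hy
      apply max_le_max _ (by simpa using hxy)
      apply Ordinal.bsup_le
      intro i hi
      exact le_trans (nxt_mono (hC i ((hi.trans_le hxy).trans hy)).2.1 hxy hy)
        (Ordinal.le_bsup _ i (hi.trans_le hxy))
    obtain ⟨δ, hαδ, hδ2, hδlim, hδcl⟩ := exists_closure_point F hF1 hF2 hmono hα
    refine ⟨δ, ⟨hδ2, ?_⟩, hαδ⟩
    intro i hi
    apply (hC i (hi.trans hδ2)).2.2 δ hδ2 hδlim
    intro γ hγ
    set x := max i γ + 1 with hx
    have hx1 : x < δ := hδlim.succ_lt (max_lt hi hγ)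
    have hix : i < x := lt_of_le_of_lt (le_max_left _ _) (lt_add_one _)
    have h1 := nxt_spec (hC i (hi.trans hδ2)).2.1 (hx1.trans hδ2)
    refine ⟨nxt (C i) x, h1.1,
      lt_of_le_of_lt (le_trans (le_max_right i γ) (le_of_lt (lt_add_one _))) h1.2, ?_⟩
    calc nxt (C i) x ≤ Ordinal.bsup.{u,u} x (fun j _ => nxt (C j) x) := Ordinal.le_bsup _ i hix
    _ ≤ F x := le_max_left _ _
    _ < δ := hδcl _ hx1
  · -- closed
    intro δ hδ hδlim hcof
    refine ⟨hδ, fun i hi => ?_⟩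
    apply (hC i (hi.trans hδ)).2.2 δ hδ hδlim
    intro α hα
    obtain ⟨β, hβ, hβ1, hβ2⟩ := hcof (max i α) (max_lt hi hα)
    have hiβ : i < β := lt_of_le_of_lt (le_max_left _ _) hβ1
    exact ⟨β, hβ.2 i hiβ, lt_of_le_of_lt (le_max_right i α) hβ1, hβ2⟩

/-! ### Points of uncountable cofinality within a given club -/

noncomputable def cseq (D : Set Ordinal.{u}) : Ordinal.{u} → Ordinal.{u} :=
  Ordinal.lt_wf.fix (fun ξ IH => nxt D (Ordinal.bsup.{u,u} ξ (fun η h => IH η h)))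

lemma cseq_eq (D : Set Ordinal.{u}) (ξ : Ordinal.{u}) :
    cseq D ξ = nxt D (Ordinal.bsup.{u,u} ξ (fun η _ => cseq D η)) :=
  Ordinal.lt_wf.fix_eq _ ξ

lemma exists_unb_in_club (D : Set Ordinal.{u}) (hD : IsClubIn D omega2) :
    ∃ δ ∈ D, δ < omega2 ∧
      ∀ (ρ : Ordinal.{u}) (h : Ordinal.{u} → Ordinal.{u}), ρ < omega1 → (∀ ξ < ρ, h ξ < δ) →
        ∃ β < δ, ∀ ξ < ρ, h ξ < β := by
  have hDu : Unbdd D := hD.2.1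
  have main : ∀ ξ < omega1, cseq D ξ ∈ D ∧ cseq D ξ < omega2 ∧
      Ordinal.bsup.{u,u} ξ (fun η _ => cseq D η) < cseq D ξ := by
    intro ξ hξ
    induction ξ using Ordinal.lt_wf.induction with
    | _ ξ IH =>
      have hbs : Ordinal.bsup.{u,u} ξ (fun η _ => cseq D η) < omega2 := by
        apply bsup_lt_omega2 (hξ.trans omega1_lt_omega2)
        intro η hη
        exact (IH η hη (hη.trans hξ)).2.1
      obtain ⟨h1, h2⟩ := nxt_spec hDu hbs
      rw [← cseq_eq] at h1 h2
      exact ⟨h1, hD.1 h1, h2⟩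
  have hsm : ∀ η ξ, η < ξ → ξ < omega1 → cseq D η < cseq D ξ := by
    intro η ξ hηξ hξ
    exact lt_of_le_of_lt (Ordinal.le_bsup (fun η _ => cseq D η) η hηξ) (main ξ hξ).2.2
  set δ := Ordinal.bsup.{u,u} omega1 (fun η _ => cseq D η) with hδdef
  have hδ2 : δ < omega2 := bsup_omega1_lt_omega2 (fun η hη => (main η hη).2.1)
  have hcle : ∀ η < omega1, cseq D η < δ := by
    intro η hη
    exact lt_of_lt_of_le (hsm η (η + 1) (lt_add_one η) (isLimit_omega1.succ_lt hη))
      (Ordinal.le_bsup _ (η + 1) (isLimit_omega1.succ_lt hη))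
  have hδlim : Order.IsSuccLimit δ := by
    refine Ordinal.isSuccLimit_iff.2 ⟨?_, Order.isSuccPrelimit_iff_succ_lt.2 ?_⟩
    · intro h0
      have h1 := hcle 0 isLimit_omega1.pos
      rw [h0] at h1
      exact absurd h1 (by simp)
    · intro x hx
      obtain ⟨η, hη, hx2⟩ := (Ordinal.lt_bsup.{u,u} _).1 hx
      exact lt_of_le_of_lt (Order.succ_le_of_lt hx2) (hcle η hη)
  have hδD : δ ∈ D := by
    apply hD.2.2 δ hδ2 hδlim
    intro α hα
    obtain ⟨η, hη, hx2⟩ := (Ordinal.lt_bsup.{u,u} _).1 hα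
    exact ⟨cseq D η, (main η hη).1, hx2, hcle η hη⟩
  refine ⟨δ, hδD, hδ2, ?_⟩
  intro ρ h hρ hh
  have hW : ∀ ξ, ξ < ρ → ∃ η, η < omega1 ∧ h ξ < cseq D η := by
    intro ξ hξ
    obtain ⟨η, hη, hx2⟩ := (Ordinal.lt_bsup.{u,u} _).1 (hh ξ hξ)
    exact ⟨η, hη, hx2⟩
  choose W hW1 hW2 using hW
  set η' := Ordinal.bsup.{u,u} ρ (fun ξ hξ => W ξ hξ + 1) with hη'
  have hη'1 : η' < omega1 := by
    apply bsup_lt_omega1 hρ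
    intro ξ hξ
    exact isLimit_omega1.succ_lt (hW1 ξ hξ)
  refine ⟨cseq D η', hcle η' hη'1, ?_⟩
  intro ξ hξ
  have hWη : W ξ hξ < η' := lt_of_lt_of_le (lt_add_one _) (Ordinal.le_bsup _ ξ hξ)
  exact lt_trans (hW2 ξ hξ) (hsm _ _ hWη hη'1)
/-! ### The greedy maximal 1-homogeneous chain below `y` -/

variable (d : Ordinal.{u} → Ordinal.{u} → Fin 2)

def gset (y : Ordinal.{u}) (g : Ordinal.{u} → Ordinal.{u}) (ξ : Ordinal.{u}) :
    Set Ordinal.{u} :=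
  {x | x < y ∧ d x y = 1 ∧ ∀ η, η < ξ → g η < x ∧ d (g η) x = 1}

lemma gset_congr {y : Ordinal.{u}} {g g' : Ordinal.{u} → Ordinal.{u}} {ξ : Ordinal.{u}}
    (h : ∀ η < ξ, g η = g' η) : gset d y g ξ = gset d y g' ξ := by
  ext x
  unfold gset
  constructor <;> intro ⟨h1, h2, h3⟩ <;> refine ⟨h1, h2, fun η hη => ?_⟩
  · rw [← h η hη]; exact h3 η hη
  · rw [h η hη]; exact h3 η hη

open Classical in
noncomputable def gfun (y : Ordinal.{u}) : Ordinal.{u} → Ordinal.{u} :=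
  Ordinal.lt_wf.fix (fun ξ IH =>
    let g' : Ordinal.{u} → Ordinal.{u} := fun η => if h : η < ξ then IH η h else 0
    if (gset d y g' ξ).Nonempty then sInf (gset d y g' ξ) else y)

open Classical in
lemma gfun_eq (y ξ : Ordinal.{u}) :
    gfun d y ξ = if (gset d y (gfun d y) ξ).Nonempty then sInf (gset d y (gfun d y) ξ) else y := by
  have h0 := Ordinal.lt_wf.fix_eq (fun ξ (IH : ∀ η, η < ξ → Ordinal.{u}) =>
    let g' : Ordinal.{u} → Ordinal.{u} := fun η => if h : η < ξ then IH η h else 0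
    if (gset d y g' ξ).Nonempty then sInf (gset d y g' ξ) else y) ξ
  have hg : gset d y (fun η => if h : η < ξ then gfun d y η else 0) ξ =
      gset d y (gfun d y) ξ := by
    apply gset_congr
    intro η hη
    simp [hη]
  refine h0.trans ?_
  show (if (gset d y (fun η => if h : η < ξ then gfun d y η else 0) ξ).Nonempty then
      sInf (gset d y (fun η => if h : η < ξ then gfun d y η else 0) ξ) else y) = _
  rw [hg]

lemma gfun_mem {y ξ : Ordinal.{u}} (h : (gset d y (gfun d y) ξ).Nonempty) :
    gfun d y ξ ∈ gset d y (gfun d y) ξ := by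
  rw [gfun_eq, if_pos h]
  exact csInf_mem h

lemma gfun_eq_self {y ξ : Ordinal.{u}} (h : ¬(gset d y (gfun d y) ξ).Nonempty) :
    gfun d y ξ = y := by
  rw [gfun_eq, if_neg h]

/-! ### Assuming there is no 1-homogeneous chain of type `omega1` -/

def NoChain : Prop :=
  ¬ ∃ f : Ordinal.{u} → Ordinal.{u},
      StrictMonoOn f (Set.Iio omega1) ∧
      (∀ i < omega1, f i < omega2) ∧
      (∀ i < omega1, ∀ j < omega1, i < j → d (f i) (f j) = 1)

lemma exists_stop (H1 : NoChain d) {y : Ordinal.{u}} (hy : y < omega2) :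
    ∃ ξ < omega1, gfun d y ξ = y := by
  by_contra hcon
  push_neg at hcon
  have hmem : ∀ ξ < omega1, gfun d y ξ ∈ gset d y (gfun d y) ξ := by
    intro ξ hξ
    by_cases h : (gset d y (gfun d y) ξ).Nonempty
    · exact gfun_mem d h
    · exact absurd (gfun_eq_self d h) (hcon ξ hξ)
  apply H1
  refine ⟨gfun d y, ?_, ?_, ?_⟩
  · intro η hη ξ hξ hlt
    exact ((hmem ξ hξ).2.2 η hlt).1
  · intro ξ hξ
    exact (hmem ξ hξ).1.trans hy
  · intro η hη ξ hξ hlt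
    exact ((hmem ξ hξ).2.2 η hlt).2

noncomputable def rho (y : Ordinal.{u}) : Ordinal.{u} := sInf {ξ | gfun d y ξ = y}

lemma rho_lt (H1 : NoChain d) {y : Ordinal.{u}} (hy : y < omega2) : rho d y < omega1 := by
  obtain ⟨ξ, hξ, h2⟩ := exists_stop d H1 hy
  exact lt_of_le_of_lt (csInf_le' h2) hξ

lemma gfun_rho (H1 : NoChain d) {y : Ordinal.{u}} (hy : y < omega2) :
    gfun d y (rho d y) = y := by
  obtain ⟨ξ, hξ, h2⟩ := exists_stop d H1 hy
  have hne : {ξ | gfun d y ξ = y}.Nonempty := ⟨ξ, h2⟩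
  exact csInf_mem hne

lemma gfun_mem_of_lt_rho {y η : Ordinal.{u}} (hη : η < rho d y) :
    gfun d y η ∈ gset d y (gfun d y) η := by
  by_cases h : (gset d y (gfun d y) η).Nonempty
  · exact gfun_mem d h
  · exact absurd hη (not_lt.2 (csInf_le' (gfun_eq_self d h)))

lemma gset_rho_empty (H1 : NoChain d) {y : Ordinal.{u}} (hy0 : y < omega2) :
    ¬(gset d y (gfun d y) (rho d y)).Nonempty := by
  intro h
  have h1 := gfun_mem d h
  have h2 := gfun_rho d H1 hy0
  rw [h2] at h1
  exact absurd h1.1 (lt_irrefl y)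

/-! ### Fibers -/

noncomputable def Fib (δ₀ : Ordinal.{u}) : Set Ordinal.{u} :=
  {δ | δ < omega2 ∧ rho d δ = rho d δ₀ ∧ ∀ η < rho d δ₀, gfun d δ η = gfun d δ₀ η}

lemma Fib_self {δ₀ : Ordinal.{u}} (h : δ₀ < omega2) : δ₀ ∈ Fib d δ₀ :=
  ⟨h, rfl, fun _ _ => rfl⟩

lemma Fib_eq_of_mem {δ δ₀ : Ordinal.{u}} (h : δ ∈ Fib d δ₀) : Fib d δ = Fib d δ₀ := by
  obtain ⟨h1, h2, h3⟩ := h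
  ext x
  simp only [Fib, Set.mem_setOf_eq, h2]
  constructor
  · rintro ⟨g1, g2, g3⟩
    exact ⟨g1, g2, fun η hη => by rw [g3 η hη, h3 η hη]⟩
  · rintro ⟨g1, g2, g3⟩
    exact ⟨g1, g2, fun η hη => by rw [g3 η hη, ← h3 η hη]⟩

lemma fin2_eq_zero {a : Fin 2} (h : a ≠ 1) : a = 0 := by omega

lemma Fib_zeroHomog (H1 : NoChain d) (δ₀ : Ordinal.{u}) :
    ∀ δ ∈ Fib d δ₀, ∀ δ' ∈ Fib d δ₀, δ < δ' → d δ δ' = 0 := by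
  intro δ hδ δ' hδ' hlt
  apply fin2_eq_zero
  intro hcolor
  apply gset_rho_empty d H1 hδ'.1
  rw [show rho d δ' = rho d δ₀ from hδ'.2.1]
  refine ⟨δ, hlt, hcolor, ?_⟩
  intro η hη
  have hη'' : η < rho d δ := hδ.2.1 ▸ hη
  have hmem := gfun_mem_of_lt_rho d hη''
  have heq : gfun d δ' η = gfun d δ η := by
    rw [hδ'.2.2 η hη, hδ.2.2 η hη]
  rw [heq]
  exact ⟨hmem.1, hmem.2.1⟩
/-! ### Counting: CH computations -/

lemma aleph1_pow_aleph0 (hCH : (2 : Cardinal.{u}) ^ Cardinal.aleph 0 = Cardinal.aleph 1) :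
    (Cardinal.aleph.{u} 1) ^ (Cardinal.aleph0.{u}) = Cardinal.aleph 1 := by
  rw [Cardinal.aleph_zero] at hCH
  rw [← hCH, ← Cardinal.power_mul, Cardinal.aleph0_mul_aleph0, hCH]

lemma CH_transfer (hCH : (2 : Cardinal.{v}) ^ Cardinal.aleph 0 = Cardinal.aleph 1) :
    (2 : Cardinal.{u}) ^ Cardinal.aleph 0 = Cardinal.aleph 1 := by
  have h1 : (2 : Cardinal.{max v u}) ^ Cardinal.aleph0.{max v u} = Cardinal.aleph 1 := by
    have h := congrArg (Cardinal.lift.{u}) hCH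
    rwa [Cardinal.lift_power, Cardinal.lift_two, Cardinal.aleph_zero, Cardinal.lift_aleph0,
      Cardinal.lift_aleph, Ordinal.lift_one] at h
  apply Cardinal.lift_injective.{v}
  rw [Cardinal.lift_power, Cardinal.lift_two, Cardinal.aleph_zero, Cardinal.lift_aleph0,
    Cardinal.lift_aleph, Ordinal.lift_one]
  exact h1

lemma Fib_congr {a b : Ordinal.{u}} (h1 : rho d a = rho d b)
    (h2 : ∀ η < rho d b, gfun d a η = gfun d b η) : Fib d a = Fib d b := by
  ext x
  simp only [Fib, Set.mem_setOf_eq, h1]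
  constructor
  · rintro ⟨g1, g2, g3⟩
    exact ⟨g1, g2, fun η hη => by rw [g3 η hη, h2 η hη]⟩
  · rintro ⟨g1, g2, g3⟩
    exact ⟨g1, g2, fun η hη => by rw [g3 η hη, ← h2 η hη]⟩

/-- The set of "canonical" ordinals whose associated chain is bounded by `β`. -/
def Rset (β : Ordinal.{u}) : Set Ordinal.{u} :=
  {δ₀ | δ₀ < omega2 ∧ δ₀ = sInf (Fib d δ₀) ∧ ∀ η < rho d δ₀, gfun d δ₀ η < β}

lemma R_small (hCH : (2 : Cardinal.{u}) ^ Cardinal.aleph 0 = Cardinal.aleph 1)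
    (H1 : NoChain d) {β : Ordinal.{u}} (hβ : β < omega2) :
    ∃ e : Ordinal.{u} → Ordinal.{u}, ∀ δ₀ ∈ Rset d β, ∃ i < omega1, e i = δ₀ := by
  -- fixed injections of countable initial segments into ℕ
  have hE : ∀ ρ : Ordinal.{u}, ∃ E : Ordinal.{u} → ℕ, ρ < omega1 → Set.InjOn E (Set.Iio ρ) := by
    intro ρ
    by_cases hρ : ρ < omega1
    · have hc : #(Set.Iio ρ) ≤ Cardinal.aleph0 := by
        rw [Ordinal.mk_Iio_ordinal, ← Cardinal.lift_aleph0.{u+1, u}]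
        refine Cardinal.lift_le.2 ?_
        have := card_le_of_lt_omega1 hρ
        rwa [Cardinal.aleph_zero] at this
      haveI : Countable (Set.Iio ρ) := Cardinal.mk_le_aleph0_iff.1 hc
      obtain ⟨f, hf⟩ := Countable.exists_injective_nat (Set.Iio ρ)
      refine ⟨fun x => if h : x < ρ then f ⟨x, h⟩ else 0, fun _ => ?_⟩
      intro x hx y hy hxy
      simp only [dif_pos (Set.mem_Iio.1 hx), dif_pos (Set.mem_Iio.1 hy)] at hxy
      exact congrArg Subtype.val (hf hxy)
    · exact ⟨fun _ => 0, fun h => absurd h hρ⟩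
  choose EE hEE using hE
  set B := max omega1 β with hB
  have hB2 : B < omega2 := max_lt omega1_lt_omega2 hβ
  -- the coding function
  classical
  set code : Ordinal.{u} → ℕ → Ordinal.{u} := fun δ₀ n =>
    if n = 0 then rho d δ₀
    else if h : ∃ η, η < rho d δ₀ ∧ EE (rho d δ₀) η + 1 = n then gfun d δ₀ h.choose else 0
    with hcode
  have hdecode : ∀ δ₀ < omega2, ∀ η < rho d δ₀,
      code δ₀ (EE (rho d δ₀) η + 1) = gfun d δ₀ η := by
    intro δ₀ hδ₀ η hη
    have hex : ∃ η', η' < rho d δ₀ ∧ EE (rho d δ₀) η' + 1 = EE (rho d δ₀) η + 1 :=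
      ⟨η, hη, rfl⟩
    simp only [hcode, Nat.succ_ne_zero, if_false, dif_pos hex]
    have hspec := hex.choose_spec
    have heq : hex.choose = η := by
      apply hEE (rho d δ₀) (rho_lt d H1 hδ₀) (Set.mem_Iio.2 hspec.1) (Set.mem_Iio.2 hη)
      exact Nat.succ_injective hspec.2
    rw [heq]
  have hbound : ∀ δ₀ ∈ Rset d β, ∀ n, code δ₀ n < B := by
    intro δ₀ hδ₀ n
    rcases hδ₀ with ⟨hδ₀1, hδ₀2, hδ₀3⟩
    by_cases h0 : n = 0
    · simp only [hcode, h0, if_true]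
      exact lt_of_lt_of_le (rho_lt d H1 hδ₀1) (le_max_left _ _)
    · simp only [hcode, h0, if_false]
      by_cases hex : ∃ η, η < rho d δ₀ ∧ EE (rho d δ₀) η + 1 = n
      · rw [dif_pos hex]
        exact lt_of_lt_of_le (hδ₀3 _ hex.choose_spec.1) (le_max_right _ _)
      · rw [dif_neg hex]
        exact lt_of_lt_of_le isLimit_omega1.pos (le_max_left _ _)
  -- the injection into ℕ → Iio B
  set j : ↥(Rset d β) → (ℕ → ↥(Set.Iio B)) :=
    fun x n => ⟨code x.1 n, hbound x.1 x.2 n⟩ with hj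
  have hjinj : Function.Injective j := by
    intro x y hxy
    have hfun : ∀ n, code x.1 n = code y.1 n := by
      intro n
      have := congrFun hxy n
      exact Subtype.ext_iff.1 this
    have hρeq : rho d x.1 = rho d y.1 := by
      have := hfun 0
      simpa only [hcode, if_true] using this
    have hgeq : ∀ η < rho d y.1, gfun d x.1 η = gfun d y.1 η := by
      intro η hη
      have hηx : η < rho d x.1 := hρeq ▸ hη
      have h1 := hdecode x.1 x.2.1 η hηx
      have h2 := hdecode y.1 y.2.1 η hη
      rw [← h1, ← h2, hρeq]
      exact hfun _
    have hFib : Fib d x.1 = Fib d y.1 := Fib_congr d hρeq hgeq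
    apply Subtype.ext
    rw [x.2.2.1, y.2.2.1, hFib]
  -- cardinality chain
  have hcard : #(↥(Rset d β)) ≤ #(↥(Set.Iio omega1.{u})) := by
    calc #(↥(Rset d β)) ≤ #(ℕ → ↥(Set.Iio B)) := Cardinal.mk_le_of_injective hjinj
    _ = Cardinal.lift.{0} #(↥(Set.Iio B)) ^ Cardinal.lift.{u+1} #ℕ := Cardinal.mk_arrow _ _
    _ = #(↥(Set.Iio B)) ^ Cardinal.aleph0.{u+1} := by
        rw [Cardinal.lift_uzero, Cardinal.mk_nat, Cardinal.lift_aleph0]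
    _ ≤ (Cardinal.lift.{u+1, u} (Cardinal.aleph.{u} 1)) ^ Cardinal.aleph0.{u+1} := by
        apply Cardinal.power_le_power_right
        rw [Ordinal.mk_Iio_ordinal]
        exact Cardinal.lift_le.2 (card_le_of_lt_omega2 hB2)
    _ = Cardinal.lift.{u+1, u} ((Cardinal.aleph.{u} 1) ^ Cardinal.aleph0.{u}) := by
        rw [Cardinal.lift_power, Cardinal.lift_aleph0]
    _ = Cardinal.lift.{u+1, u} (Cardinal.aleph.{u} 1) := by rw [aleph1_pow_aleph0 hCH]
    _ = #(↥(Set.Iio omega1.{u})) := by rw [Ordinal.mk_Iio_ordinal, card_omega1]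
  obtain ⟨emb⟩ := (Cardinal.le_def _ _).1 hcard
  classical
  refine ⟨fun i => if h : ∃ x : ↥(Rset d β), ((emb x : ↥(Set.Iio omega1.{u})) : Ordinal.{u}) = i
      then (h.choose : Ordinal.{u}) else 0, ?_⟩
  intro δ₀ hδ₀
  set x₀ : ↥(Rset d β) := ⟨δ₀, hδ₀⟩ with hx₀
  refine ⟨((emb x₀ : ↥(Set.Iio omega1.{u})) : Ordinal.{u}), (emb x₀).2, ?_⟩
  have hex : ∃ x : ↥(Rset d β), ((emb x : ↥(Set.Iio omega1.{u})) : Ordinal.{u}) =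
      ((emb x₀ : ↥(Set.Iio omega1.{u})) : Ordinal.{u}) := ⟨x₀, rfl⟩
  show (if h : ∃ x : ↥(Rset d β), ((emb x : ↥(Set.Iio omega1.{u})) : Ordinal.{u}) =
      ((emb x₀ : ↥(Set.Iio omega1.{u})) : Ordinal.{u}) then (h.choose : Ordinal.{u}) else 0) = δ₀
  rw [dif_pos hex]
  have h1 : emb hex.choose = emb x₀ := Subtype.ext hex.choose_spec
  have h2 : hex.choose = x₀ := emb.injective h1
  rw [h2]
/-! ### Transferring a chain to another domain universe -/

lemma lift_omega1 : Ordinal.lift.{u} omega1.{v} = Ordinal.lift.{v} omega1.{u} := by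
  rw [omega1, omega1, Cardinal.lift_ord, Cardinal.lift_ord, Cardinal.lift_aleph,
    Cardinal.lift_aleph, Ordinal.lift_one, Ordinal.lift_one]

lemma chain_down (d : Ordinal.{u} → Ordinal.{u} → Fin 2)
    (h : ∃ g : Ordinal.{u} → Ordinal.{u},
      StrictMonoOn g (Set.Iio omega1) ∧
      (∀ i < omega1, g i < omega2) ∧
      (∀ i < omega1, ∀ j < omega1, i < j → d (g i) (g j) = 1)) :
    ∃ f : Ordinal.{v} → Ordinal.{u},
      StrictMonoOn f (Set.Iio omega1.{v}) ∧
      (∀ i < omega1.{v}, f i < omega2.{u}) ∧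
      (∀ i < omega1.{v}, ∀ j < omega1.{v}, i < j → d (f i) (f j) = 1) := by
  obtain ⟨g, hg1, hg2, hg3⟩ := h
  have key : ∀ i : Ordinal.{v}, ∃ j : Ordinal.{u}, i < omega1.{v} →
      (j < omega1.{u} ∧ Ordinal.lift.{v} j = Ordinal.lift.{u} i) := by
    intro i
    by_cases hi : i < omega1.{v}
    · have h1 : Ordinal.lift.{u} i < Ordinal.lift.{u} omega1.{v} := Ordinal.lift_lt.2 hi
      rw [lift_omega1] at h1
      obtain ⟨j, hj1, hj2⟩ := Ordinal.lt_lift_iff.1 h1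
      exact ⟨j, fun _ => ⟨hj1, hj2⟩⟩
    · exact ⟨0, fun h' => absurd h' hi⟩
  choose dn hdn using key
  have hdnlt : ∀ i < omega1.{v}, dn i < omega1.{u} := fun i hi => (hdn i hi).1
  have hdnmono : ∀ i j, i < omega1.{v} → j < omega1.{v} → i < j → dn i < dn j := by
    intro i j hi hj hij
    have h1 : Ordinal.lift.{v} (dn i) < Ordinal.lift.{v} (dn j) := by
      rw [(hdn i hi).2, (hdn j hj).2]
      exact Ordinal.lift_lt.2 hij
    exact Ordinal.lift_lt.1 h1
  refine ⟨fun i => g (dn i), ?_, ?_, ?_⟩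
  · intro i hi j hj hij
    exact hg1 (Set.mem_Iio.2 (hdnlt i hi)) (Set.mem_Iio.2 (hdnlt j hj))
      (hdnmono i j hi hj hij)
  · intro i hi
    exact hg2 _ (hdnlt i hi)
  · intro i hi j hj hij
    exact hg3 _ (hdnlt i hi) _ (hdnlt j hj) (hdnmono i j hi hj hij)
/-! ### The main theorem -/

theorem main (hCH : (2 : Cardinal.{u}) ^ Cardinal.aleph 0 = Cardinal.aleph 1)
    (d : Ordinal.{u} → Ordinal.{u} → Fin 2) :
    (∃ f : Ordinal.{u} → Ordinal.{u},
      StrictMonoOn f (Set.Iio omega1) ∧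
      (∀ i < omega1, f i < omega2) ∧
      (∀ i < omega1, ∀ j < omega1, i < j → d (f i) (f j) = 1)) ∨
    (∃ S : Set Ordinal.{u},
      S ⊆ Set.Iio omega2 ∧
      IsStationaryIn S omega2 ∧
      (∀ α ∈ S, ∀ β ∈ S, α < β → d α β = 0)) := by
  by_contra hcon
  rw [not_or] at hcon
  obtain ⟨H1, H2⟩ := hcon
  have H1' : NoChain d := H1
  -- a club disjoint from each fiber
  have hclub : ∀ δ₀ : Ordinal.{u}, ∃ C, IsClubIn C omega2 ∧
      (δ₀ < omega2 → Fib d δ₀ ∩ C = ∅) := by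
    intro δ₀
    by_cases h : δ₀ < omega2
    · have hns : ¬ IsStationaryIn (Fib d δ₀) omega2 := by
        intro hst
        exact H2 ⟨Fib d δ₀, fun x hx => hx.1, hst, Fib_zeroHomog d H1' δ₀⟩
      unfold IsStationaryIn at hns
      push_neg at hns
      obtain ⟨C, hC1, hC2⟩ := hns
      exact ⟨C, hC1, fun _ => hC2⟩
    · exact ⟨Set.Iio omega2, isClubIn_Iio, fun h' => absurd h' h⟩
  choose Cl hCl1 hCl2 using hclub
  -- enumerations of the canonical representatives bounded by β
  have hsmall : ∀ β : Ordinal.{u}, ∃ e : Ordinal.{u} → Ordinal.{u},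
      β < omega2 → ∀ δ₀ ∈ Rset d β, ∃ i < omega1, e i = δ₀ := by
    intro β
    by_cases hβ : β < omega2
    · obtain ⟨e, he⟩ := R_small d hCH H1' hβ
      exact ⟨e, fun _ => he⟩
    · exact ⟨fun _ => 0, fun h => absurd h hβ⟩
  choose e he using hsmall
  -- the small intersections and the diagonal club
  set DD : Ordinal.{u} → Set Ordinal.{u} :=
    fun β => {x | x < omega2 ∧ ∀ i < omega1, x ∈ Cl (e β i)} with hDD
  have hDDclub : ∀ β, IsClubIn (DD β) omega2 :=
    fun β => club_iInter _ (fun i _ => hCl1 (e β i))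
  have hDclub : IsClubIn {x | x < omega2 ∧ ∀ β < x, x ∈ DD β} omega2 :=
    club_diag _ (fun β _ => hDDclub β)
  obtain ⟨δ', hδ'D, hδ'2, hUnb⟩ := exists_unb_in_club _ hDclub
  -- a bound below δ' for the chain of δ'
  have hρ : rho d δ' < omega1 := rho_lt d H1' hδ'2
  have hvals : ∀ ξ < rho d δ', gfun d δ' ξ < δ' :=
    fun ξ hξ => (gfun_mem_of_lt_rho d hξ).1
  obtain ⟨b, hb1, hb2⟩ := hUnb (rho d δ') (gfun d δ') hρ hvals
  -- the canonical representative of the fiber of δ'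
  have hFne : (Fib d δ').Nonempty := ⟨δ', Fib_self d hδ'2⟩
  have hδ₀mem : sInf (Fib d δ') ∈ Fib d δ' := csInf_mem hFne
  set δ₀ := sInf (Fib d δ') with hδ₀
  have hFeq : Fib d δ₀ = Fib d δ' := Fib_eq_of_mem d hδ₀mem
  have hδ₀R : δ₀ ∈ Rset d b := by
    refine ⟨hδ₀mem.1, by rw [hFeq], ?_⟩
    intro η hη
    have hη' : η < rho d δ' := hδ₀mem.2.1 ▸ hη
    rw [hδ₀mem.2.2 η hη']
    exact hb2 η hη'
  obtain ⟨i, hi, hei⟩ := he b (hb1.trans hδ'2) δ₀ hδ₀R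
  -- the contradiction
  have h1 : δ' ∈ DD b := hδ'D.2 b hb1
  have h2 : δ' ∈ Cl (e b i) := h1.2 i hi
  rw [hei] at h2
  have h3 : δ' ∈ Fib d δ₀ := hFeq ▸ Fib_self d hδ'2
  have h4 := hCl2 δ₀ hδ₀mem.1
  have h5 : δ' ∈ Fib d δ₀ ∩ Cl δ₀ := ⟨h3, h2⟩
  rw [h4] at h5
  exact h5

end Stmt0Aux

/-- Assume CH.  Then `ω₂ → (ω₂-stationary, ω₁)²`: for every 2-coloring `d` of pairs of
ordinals below `ω₂`, either there is a set of order type `ω₁` (given as the image of a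
strictly monotone map on `ω₁`, with values below `ω₂`) on whose pairs `d` is constantly `1`,
or there is a stationary subset of `ω₂` on whose pairs `d` is constantly `0`. -/
theorem stmt0
    (hCH : (2 : Cardinal) ^ Cardinal.aleph 0 = Cardinal.aleph 1)
    (d : Ordinal → Ordinal → Fin 2) :
    (∃ f : Ordinal → Ordinal,
      StrictMonoOn f (Set.Iio omega1) ∧
      (∀ i < omega1, f i < omega2) ∧
      (∀ i < omega1, ∀ j < omega1, i < j → d (f i) (f j) = 1)) ∨
    (∃ S : Set Ordinal,
      S ⊆ Set.Iio omega2 ∧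
      IsStationaryIn S omega2 ∧
      (∀ α ∈ S, ∀ β ∈ S, α < β → d α β = 0)) :=
  by
  rcases Stmt0Aux.main (Stmt0Aux.CH_transfer hCH) d with h1 | h2
  · exact Or.inl (Stmt0Aux.chain_down d h1)
  · exact Or.inr h2
end

section
/- Assume the continuum hypothesis 2^{ℵ₀} = ℵ₁. Let T ⊆ S^{ω₂}_{ω₁} be stationary in ω₂. Then T → (ω₂-stationary, ω₁)²: for every coloring d : [T]² → {0,1}, either there exists a set X ⊆ T of order type ω₁ such that d is constantly 1 on [X]², or there exists a stationary set S ⊆ T such that d is constantly 0 on [S]². -/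
/-- `S^{ω₂}_{ω₁}`: the set of ordinals below `ω₂` of cofinality `ω₁`. -/
noncomputable def Somega2omega1 : Set Ordinal :=
  {δ : Ordinal | δ < omega2 ∧ δ.cof = Cardinal.aleph 1}

namespace Stmt1Aux
open Cardinal Ordinal Set
universe v u

lemma regA2 : (Cardinal.aleph.{u} 2).IsRegular := by
  have : aleph.{u} 2 = aleph (Order.succ 1) := by norm_num
  rw [this]; exact isRegular_aleph_succ 1

lemma omega2_cof : omega2.{u}.cof = aleph 2 := regA2.cof_eq

lemma omega2_isLimit : Order.IsSuccLimit omega2.{u} :=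
  Cardinal.isSuccLimit_ord (by simp [Cardinal.aleph0_le_aleph])

lemma card_le_a1 {β : Ordinal.{u}} (h : β < omega2) : β.card ≤ aleph 1 := by
  have h1 := Cardinal.lt_ord.mp h
  have h2 : aleph.{u} 2 = Order.succ (aleph 1) := by
    have : aleph.{u} 2 = aleph (Order.succ 1) := by norm_num
    rw [this, aleph_succ]
  rw [h2, Order.lt_succ_iff] at h1; exact h1

lemma a1_lt_a2 : (aleph.{u} 1) < aleph 2 := by
  apply Cardinal.aleph_lt_aleph.mpr; norm_num

lemma a0_lt_a2 : ℵ₀ < aleph.{u} 2 :=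
  aleph0_lt_aleph_one.trans_le (aleph_le_aleph.mpr one_le_two)

lemma omega1_lt_omega2 : omega1.{u} < omega2 :=
  Cardinal.ord_lt_ord.mpr a1_lt_a2

lemma iSup_lt_omega2 {ι : Type u} (f : ι → Ordinal.{u}) (hι : #ι ≤ aleph 1)
    (hf : ∀ i, f i < omega2.{u}) : (⨆ i, f i) < omega2 := by
  apply Ordinal.iSup_lt_ord _ hf
  rw [omega2_cof]
  exact lt_of_le_of_lt hι a1_lt_a2

lemma isClubIn_Iio : IsClubIn (Set.Iio omega2.{u}) omega2 :=
  ⟨le_refl _, fun α hα => ⟨α + 1, omega2_isLimit.succ_lt hα, lt_add_one α⟩,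
    fun δ hδ _ _ => hδ⟩

/-- The basic "iterate ω many times" construction. -/
lemma exists_limit_iterate (g : Ordinal.{u} → Ordinal.{u})
    (hg : ∀ α < omega2.{u}, α < g α ∧ g α < omega2) {α : Ordinal} (hα : α < omega2) :
    ∃ δ, α < δ ∧ δ < omega2 ∧ Order.IsSuccLimit δ ∧
      ∀ β < δ, ∃ y, β ≤ y ∧ y < δ ∧ y < omega2 ∧ g y < δ := by
  set seq : ℕ → Ordinal.{u} := fun n => g^[n] (α + 1) with hseq
  have h0 : seq 0 = α + 1 := rfl
  have hstep : ∀ n, seq (n + 1) = g (seq n) := fun n => Function.iterate_succ_apply' g n _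
  have key : ∀ n, seq n < omega2 ∧ seq n < seq (n + 1) := by
    intro n; induction n with
    | zero =>
      have h1 : α + 1 < omega2 := omega2_isLimit.succ_lt hα
      exact ⟨h1, by rw [hstep]; exact (hg _ h1).1⟩
    | succ n ih =>
      have h1 : seq (n+1) < omega2 := by rw [hstep]; exact (hg _ ih.1).2
      exact ⟨h1, by rw [hstep (n+1)]; exact (hg _ h1).1⟩
  set δ := ⨆ n, seq n with hδ
  have hlt : ∀ n, seq n < δ := fun n => lt_of_lt_of_le (key n).2 (Ordinal.le_iSup seq (n+1))
  have hδ2 : δ < omega2 := by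
    apply Ordinal.iSup_lt_ord_lift _ (fun n => (key n).1)
    rw [omega2_cof]
    have : Cardinal.lift.{u} #ℕ = ℵ₀ := by simp
    rw [this]; exact a0_lt_a2
  have hunb : ∀ β < δ, ∃ n, β < seq n := fun β hβ => Ordinal.lt_iSup_iff.mp hβ
  have hlim : Order.IsSuccLimit δ := by
    refine Order.isSuccLimit_iff_of_orderBot.mpr ⟨fun h0' => absurd (h0' ▸ hlt 0) not_lt_bot,
      Order.isSuccPrelimit_of_succ_lt fun β hβ => ?_⟩
    obtain ⟨n, hn⟩ := hunb β hβ
    exact lt_of_le_of_lt (Order.succ_le_of_lt hn) (hlt n)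
  refine ⟨δ, lt_of_le_of_lt (le_of_lt (lt_add_one α)) (h0 ▸ hlt 0), hδ2, hlim, ?_⟩
  intro β hβ
  obtain ⟨n, hn⟩ := hunb β hβ
  exact ⟨seq n, hn.le, hlt n, (key n).1, by rw [← hstep]; exact hlt (n+1)⟩

lemma isClubIn_iInter {ι : Type u} [Nonempty ι] (hι : #ι ≤ aleph 1)
    (C : ι → Set Ordinal.{u}) (hC : ∀ i, IsClubIn (C i) omega2) :
    IsClubIn (⋂ i, C i) omega2 := by
  classical
  have hnext : ∀ (i : ι) (β : Ordinal.{u}), ∃ c, β < omega2 → c ∈ C i ∧ β < c ∧ c < omega2 := by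
    intro i β
    by_cases h : β < omega2
    · obtain ⟨c, hc, hbc⟩ := (hC i).2.1 β h
      exact ⟨c, fun _ => ⟨hc, hbc, (hC i).1 hc⟩⟩
    · exact ⟨0, fun h' => absurd h' h⟩
  choose next hnext using hnext
  set g : Ordinal.{u} → Ordinal.{u} := fun β => ⨆ i, next i β with hgdef
  have hgood : ∀ β < omega2.{u}, β < g β ∧ g β < omega2 := by
    intro β hβ
    refine ⟨lt_of_lt_of_le (hnext (Classical.arbitrary ι) β hβ).2.1 (Ordinal.le_iSup _ _), ?_⟩
    exact iSup_lt_omega2 _ hι fun i => (hnext i β hβ).2.2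
  refine ⟨fun x hx => (hC (Classical.arbitrary ι)).1 (mem_iInter.mp hx _), ?_, ?_⟩
  · intro α hα
    obtain ⟨δ, hαδ, hδ2, hlim, hcl⟩ := exists_limit_iterate g hgood hα
    refine ⟨δ, mem_iInter.mpr fun i => (hC i).2.2 δ hδ2 hlim ?_, hαδ⟩
    intro x hx
    obtain ⟨y, hxy, hyδ, hyω, hgy⟩ := hcl x hx
    exact ⟨next i y, (hnext i y hyω).1, lt_of_le_of_lt hxy (hnext i y hyω).2.1,
      lt_of_le_of_lt (Ordinal.le_iSup (fun i => next i y) i) hgy⟩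
  · intro δ hδ hlim h
    refine mem_iInter.mpr fun i => (hC i).2.2 δ hδ hlim ?_
    intro α hα
    obtain ⟨β, hβ, hαβ, hβδ⟩ := h α hα
    exact ⟨β, mem_iInter.mp hβ i, hαβ, hβδ⟩

/-- diagonal intersection -/
def diagInter (D : Ordinal.{u} → Set Ordinal.{u}) : Set Ordinal.{u} :=
  {δ | δ < omega2 ∧ ∀ γ < δ, δ ∈ D γ}

lemma isClubIn_diagInter (D : Ordinal.{u} → Set Ordinal.{u})
    (hD : ∀ γ, IsClubIn (D γ) omega2) : IsClubIn (diagInter D) omega2 := by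
  classical
  have hnext : ∀ (γ β : Ordinal.{u}), ∃ c, β < omega2 → c ∈ D γ ∧ β < c ∧ c < omega2 := by
    intro γ β
    by_cases h : β < omega2
    · obtain ⟨c, hc, hbc⟩ := (hD γ).2.1 β h
      exact ⟨c, fun _ => ⟨hc, hbc, (hD γ).1 hc⟩⟩
    · exact ⟨0, fun h' => absurd h' h⟩
  choose next hnext using hnext
  set g : Ordinal.{u} → Ordinal.{u} :=
    fun β => max (β + 1) (⨆ x : β.ToType, next ((ToType.mk (o := β)).symm x).1 β) with hgdef
  have hgle : ∀ β γ, γ < β → next γ β ≤ g β := by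
    intro β γ hγβ
    have : next γ β = (fun x : β.ToType => next ((ToType.mk (o := β)).symm x).1 β)
        (ToType.mk (o := β) ⟨γ, hγβ⟩) := by simp
    rw [this]
    exact le_trans (Ordinal.le_iSup
      (fun x : β.ToType => next ((ToType.mk (o := β)).symm x).1 β) _) (le_max_right _ _)
  have hgood : ∀ β < omega2.{u}, β < g β ∧ g β < omega2 := by
    intro β hβ
    refine ⟨lt_of_lt_of_le (lt_add_one β) (le_max_left _ _), ?_⟩
    apply max_lt (omega2_isLimit.succ_lt hβ)
    apply iSup_lt_omega2 _ ?_ fun x => (hnext _ β hβ).2.2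
    rw [mk_toType]; exact card_le_a1 hβ
  refine ⟨fun x hx => hx.1, ?_, ?_⟩
  · intro α hα
    obtain ⟨δ, hαδ, hδ2, hlim, hcl⟩ := exists_limit_iterate g hgood hα
    refine ⟨δ, ⟨hδ2, fun γ hγδ => (hD γ).2.2 δ hδ2 hlim ?_⟩, hαδ⟩
    intro x hx
    have hx' : max (γ + 1) x < δ := max_lt (hlim.succ_lt hγδ) hx
    obtain ⟨y, hxy, hyδ, hyω, hgy⟩ := hcl _ hx'
    have hγy : γ < y := lt_of_lt_of_le (lt_of_lt_of_le (lt_add_one γ) (le_max_left _ _)) hxy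
    refine ⟨next γ y, (hnext γ y hyω).1, ?_, lt_of_le_of_lt (hgle y γ hγy) hgy⟩
    exact lt_of_le_of_lt (le_trans (le_max_right _ _) hxy) (hnext γ y hyω).2.1
  · intro δ hδ hlim h
    refine ⟨hδ, fun γ hγδ => (hD γ).2.2 δ hδ hlim ?_⟩
    intro α hα
    have hα' : max γ α < δ := max_lt hγδ hα
    obtain ⟨β, hβ, hαβ, hβδ⟩ := h _ hα'
    exact ⟨β, hβ.2 γ (lt_of_le_of_lt (le_max_left _ _) hαβ),
      lt_of_le_of_lt (le_max_right _ _) hαβ, hβδ⟩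

lemma stationary_of_union {ι : Type u} (hι : #ι ≤ aleph 1) {S : Set Ordinal.{u}}
    (hS : IsStationaryIn S omega2) (P : ι → Set Ordinal.{u}) (hcov : S ⊆ ⋃ i, P i) :
    ∃ i, IsStationaryIn (S ∩ P i) omega2 := by
  classical
  by_contra hcon
  push_neg at hcon
  simp only [IsStationaryIn, not_forall] at hcon
  have hne : Nonempty ι := by
    by_contra he
    obtain ⟨δ, hδS, _⟩ := hS _ isClubIn_Iio
    obtain ⟨i, -⟩ := mem_iUnion.mp (hcov hδS)
    exact he ⟨i⟩
  choose Cl hCl hClne using hcon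
  have hint := isClubIn_iInter hι Cl hCl
  obtain ⟨δ, hδS, hδC⟩ := hS _ hint
  obtain ⟨i, hi⟩ := mem_iUnion.mp (hcov hδS)
  exact hClne i ⟨δ, ⟨hδS, hi⟩, mem_iInter.mp hδC i⟩

lemma exists_bound_stationary {S : Set Ordinal.{u}} (hS : IsStationaryIn S omega2)
    (hlim : ∀ δ ∈ S, Order.IsSuccLimit δ) (f : Ordinal.{u} → Ordinal.{u}) (hf : ∀ δ ∈ S, f δ < δ) :
    ∃ γ < omega2.{u}, IsStationaryIn {δ ∈ S | f δ < γ} omega2 := by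
  classical
  by_contra hcon
  push_neg at hcon
  have hcon' : ∀ γ : Ordinal.{u}, ∃ Cl, IsClubIn Cl omega2 ∧
      (γ < omega2 → ({δ ∈ S | f δ < γ} ∩ Cl) = ∅) := by
    intro γ
    by_cases h : γ < omega2
    · have h2 := hcon γ h
      simp only [IsStationaryIn, not_forall] at h2
      obtain ⟨Cl, hCl, hne⟩ := h2
      exact ⟨Cl, hCl, fun _ => not_nonempty_iff_eq_empty.mp hne⟩
    · exact ⟨Set.Iio omega2, isClubIn_Iio, fun h' => absurd h' h⟩
  choose D hD hDe using hcon'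
  obtain ⟨δ, hδS, hδ2, hδdiag⟩ := hS _ (isClubIn_diagInter D hD)
  have hfδ : f δ < δ := hf δ hδS
  have hγδ : f δ + 1 < δ := (hlim δ hδS).succ_lt hfδ
  have hmem : δ ∈ D (f δ + 1) := hδdiag _ hγδ
  have hthis : δ ∈ ({δ' ∈ S | f δ' < f δ + 1} ∩ D (f δ + 1)) :=
    ⟨⟨hδS, lt_add_one _⟩, hmem⟩
  rw [hDe (f δ + 1) (lt_trans hγδ hδ2)] at hthis
  exact hthis

lemma csSup_lt_of_countable {s : Set Ordinal.{u}} (hs : s.Countable) {δ : Ordinal.{u}}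
    (hδ : δ.cof = aleph 1) (h : ∀ x ∈ s, x < δ) : sSup s < δ := by
  have hδ0 : 0 < δ := by
    rcases eq_zero_or_pos δ with h0 | h0
    · exfalso; rw [h0, Ordinal.cof_zero] at hδ
      exact (Cardinal.aleph_pos 1).ne hδ
    · exact h0
  rcases s.eq_empty_or_nonempty with rfl | hne
  · simpa using hδ0
  · obtain ⟨f, rfl⟩ := hs.exists_eq_range hne
    have heq : sSup (Set.range f) = ⨆ n, f n := rfl
    rw [heq]
    apply Ordinal.iSup_lt_ord_lift _ (fun n => h _ (mem_range_self n))
    rw [hδ]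
    have h1 : Cardinal.lift.{u} #ℕ = ℵ₀ := by simp
    rw [h1]
    have h2 : ℵ₀ = aleph.{u} 0 := by simp
    rw [h2]; exact aleph_lt_aleph.mpr zero_lt_one

lemma CH_transfer (h : (2 : Cardinal.{v}) ^ Cardinal.aleph 0 = Cardinal.aleph 1) :
    (2 : Cardinal.{u}) ^ Cardinal.aleph 0 = Cardinal.aleph 1 := by
  have key : ∀ (c : Cardinal.{u}), Cardinal.lift.{v} c = Cardinal.lift.{u}
      ((2 : Cardinal.{v}) ^ Cardinal.aleph 0) → c = Cardinal.aleph 1 := by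
    intro c hc
    rw [h] at hc
    have h2 : Cardinal.lift.{u} (Cardinal.aleph.{v} 1) = Cardinal.lift.{v} (Cardinal.aleph.{u} 1) := by
      rw [Cardinal.lift_aleph, Cardinal.lift_aleph, Ordinal.lift_one, Ordinal.lift_one]
    rw [h2] at hc
    exact Cardinal.lift_inj.mp hc
  apply key
  rw [Cardinal.lift_power, Cardinal.lift_power, Cardinal.lift_aleph, Cardinal.lift_aleph,
    Ordinal.lift_zero, Ordinal.lift_zero, Cardinal.lift_two, Cardinal.lift_two]

lemma exists_f_of_uncountable {X : Set Ordinal.{u}} (hX : ¬ X.Countable) :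
    ∃ f : Ordinal.{v} → Ordinal.{u}, StrictMonoOn f (Set.Iio omega1.{v}) ∧
      ∀ i < omega1.{v}, f i ∈ X := by
  classical
  have hcard : (ℵ₁ : Cardinal.{u+1}) ≤ #X := by
    rw [← Set.countable_coe_iff, ← Cardinal.mk_le_aleph0_iff, not_le] at hX
    rw [← Cardinal.succ_aleph0]; exact Order.succ_le_of_lt hX
  set r : X → X → Prop := ((· < ·) : X → X → Prop) with hr
  have hro : omega1.{u+1} ≤ type r := by
    rw [omega1, Cardinal.ord_le, Ordinal.card_type]; exact hcard
  have homega : Ordinal.lift.{u+1, v} omega1.{v} = Ordinal.lift.{v, u+1} omega1.{u+1} := by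
    rw [omega1, omega1, Cardinal.lift_ord, Cardinal.lift_ord, Cardinal.lift_aleph,
      Cardinal.lift_aleph, Ordinal.lift_one, Ordinal.lift_one]
  have hJ : ∀ i : Ordinal.{v}, ∃ j : Ordinal.{u+1}, i < omega1.{v} →
      Ordinal.lift.{v, u+1} j = Ordinal.lift.{u+1, v} i ∧ j < omega1.{u+1} := by
    intro i
    by_cases hi : i < omega1.{v}
    · have hle : Ordinal.lift.{u+1, v} i ≤ Ordinal.lift.{v, u+1} omega1.{u+1} := by
        rw [← homega]; exact (Ordinal.lift_lt.mpr hi).le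
      obtain ⟨j, hj⟩ := Ordinal.mem_range_lift_of_le hle
      refine ⟨j, fun _ => ⟨hj, ?_⟩⟩
      rw [← Ordinal.lift_lt.{v, u+1}, hj, ← homega]
      exact Ordinal.lift_lt.mpr hi
    · exact ⟨0, fun h' => absurd h' hi⟩
  choose J hJ using hJ
  set f : Ordinal.{v} → Ordinal.{u} := fun i =>
    if h : i < omega1.{v} then
      ((enum r ⟨J i, lt_of_lt_of_le (hJ i h).2 hro⟩ : X) : Ordinal.{u}) else 0
    with hf
  have hfval : ∀ i (hi : i < omega1.{v}),
      f i = (enum r ⟨J i, lt_of_lt_of_le (hJ i hi).2 hro⟩ : X) := by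
    intro i hi; simp only [hf, dif_pos hi]
  have hJmono : ∀ i j (hi : i < omega1.{v}) (hj : j < omega1.{v}), i < j → J i < J j := by
    intro i j hi hj hij
    rw [← Ordinal.lift_lt.{v, u+1}, (hJ i hi).1, (hJ j hj).1]
    exact Ordinal.lift_lt.mpr hij
  refine ⟨f, ?_, ?_⟩
  · intro i hi j hj hij
    rw [hfval i hi, hfval j hj]
    have hlt : (⟨J i, lt_of_lt_of_le (hJ i hi).2 hro⟩ : {o // o < type r}) <
        ⟨J j, lt_of_lt_of_le (hJ j hj).2 hro⟩ := by
      simp only [Subtype.mk_lt_mk]; exact hJmono i j hi hj hij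
    exact_mod_cast (enum r).toRelEmbedding.map_rel_iff.mpr hlt
  · intro i hi
    rw [hfval i hi]; exact (enum r _).2

lemma count_codes {γ : Ordinal.{u}} (hγ : γ < omega2.{u})
    (hCH : (2 : Cardinal.{u}) ^ Cardinal.aleph 0 = Cardinal.aleph 1) :
    #(ULift.{u} ℕ → Option γ.ToType) ≤ aleph 1 := by
  have h1 : #(ULift.{u} ℕ → Option γ.ToType) = #(Option γ.ToType) ^ ℵ₀ := by
    have h0 : (ℵ₀ : Cardinal.{u}) = #(ULift.{u} ℕ) := by
      rw [Cardinal.mk_uLift, Cardinal.mk_denumerable, Cardinal.lift_aleph0]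
    rw [h0, Cardinal.power_def]
  rw [h1, Cardinal.mk_option, mk_toType γ]
  have h2 : γ.card + 1 ≤ aleph 1 := by
    calc γ.card + 1 ≤ aleph 1 + 1 := by gcongr; exact card_le_a1 hγ
    _ = aleph 1 := Cardinal.add_one_eq (aleph0_le_aleph 1)
  calc (γ.card + 1) ^ (ℵ₀ : Cardinal.{u}) ≤ (aleph 1) ^ (ℵ₀ : Cardinal.{u}) :=
        Cardinal.power_le_power_right h2
  _ = ((2 : Cardinal.{u}) ^ aleph 0) ^ (ℵ₀ : Cardinal.{u}) := by rw [hCH]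
  _ = (2 : Cardinal.{u}) ^ (aleph 0 * ℵ₀) := (Cardinal.power_mul).symm
  _ = (2 : Cardinal.{u}) ^ (aleph 0) := by
        rw [Cardinal.aleph_zero, Cardinal.aleph0_mul_aleph0]
  _ = aleph 1 := hCH

end Stmt1Aux

/-- Assume CH and let `T ⊆ S^{ω₂}_{ω₁}` be stationary in `ω₂`.
Then `T → (ω₂-stationary, ω₁)²`: for every 2-coloring `d` of pairs from `T`, either there
is a subset of `T` of order type `ω₁` (given as the image of a strictly monotone map on
`ω₁` with values in `T`) on whose pairs `d` is constantly `1`, or there is a stationary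
subset of `T` on whose pairs `d` is constantly `0`. -/
theorem stmt1
    (hCH : (2 : Cardinal) ^ Cardinal.aleph 0 = Cardinal.aleph 1)
    (T : Set Ordinal)
    (hT : T ⊆ Somega2omega1)
    (hTstat : IsStationaryIn T omega2)
    (d : Ordinal → Ordinal → Fin 2) :
    (∃ f : Ordinal → Ordinal,
      StrictMonoOn f (Set.Iio omega1) ∧
      (∀ i < omega1, f i ∈ T) ∧
      (∀ i < omega1, ∀ j < omega1, i < j → d (f i) (f j) = 1)) ∨
    (∃ S : Set Ordinal,
      S ⊆ T ∧
      IsStationaryIn S omega2 ∧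
      (∀ α ∈ S, ∀ β ∈ S, α < β → d α β = 0)) := by
  classical
  rw [or_iff_not_imp_left]
  intro hno
  -- every 1-homogeneous subset of T is countable
  have hhom : ∀ X : Set Ordinal, X ⊆ T → (∀ α ∈ X, ∀ β ∈ X, α < β → d α β = 1) →
      X.Countable := by
    intro X hXT hX1
    by_contra hXc
    obtain ⟨f, hf1, hf2⟩ := Stmt1Aux.exists_f_of_uncountable hXc
    exact hno ⟨f, hf1, fun i hi => hXT (hf2 i hi), fun i hi j hj hij =>
      hX1 _ (hf2 i hi) _ (hf2 j hj) (hf1 hi hj hij)⟩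
  -- maximal 1-homogeneous sets below δ
  set P : Ordinal → Set Ordinal → Prop := fun δ A =>
    A ⊆ T ∧ (∀ α ∈ A, α < δ) ∧ (∀ α ∈ A, d α δ = 1) ∧
      (∀ α ∈ A, ∀ β ∈ A, α < β → d α β = 1) with hP
  have hmax : ∀ δ : Ordinal, ∃ A, Maximal (fun A => P δ A) A := by
    intro δ
    apply zorn_subset
    intro c hc hchain
    refine ⟨⋃₀ c, ⟨?_, ?_, ?_, ?_⟩, fun s hs => Set.subset_sUnion_of_mem hs⟩
    · exact Set.sUnion_subset fun s hs => (hc hs).1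
    · rintro α ⟨s, hs, hαs⟩; exact (hc hs).2.1 α hαs
    · rintro α ⟨s, hs, hαs⟩; exact (hc hs).2.2.1 α hαs
    · rintro α ⟨s, hs, hαs⟩ β ⟨t, ht, hβt⟩ hαβ
      rcases hchain.total hs ht with hst | hts
      · exact (hc ht).2.2.2 α (hst hαs) β hβt hαβ
      · exact (hc hs).2.2.2 α hαs β (hts hβt) hαβ
  choose A hA using hmax
  have hAcount : ∀ δ, (A δ).Countable := fun δ => hhom _ (hA δ).1.1 (hA δ).1.2.2.2
  have hsup : ∀ δ ∈ T, sSup (A δ) < δ := fun δ hδ =>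
    Stmt1Aux.csSup_lt_of_countable (hAcount δ) (hT hδ).2 (hA δ).1.2.1
  have hTlim : ∀ δ ∈ T, Order.IsSuccLimit δ := by
    intro δ hδ
    rw [← Ordinal.aleph0_le_cof, (hT hδ).2]
    exact Cardinal.aleph0_le_aleph 1
  obtain ⟨γ₀, hγ₀, hS₁⟩ :=
    Stmt1Aux.exists_bound_stationary hTstat hTlim (fun δ => sSup (A δ)) hsup
  set S₁ : Set Ordinal := {δ ∈ T | sSup (A δ) < γ₀} with hS₁def
  have hAsub : ∀ δ ∈ S₁, A δ ⊆ Set.Iio γ₀ := by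
    intro δ hδ x hx
    have hbdd : BddAbove (A δ) := ⟨δ, fun y hy => ((hA δ).1.2.1 y hy).le⟩
    exact lt_of_le_of_lt (le_csSup hbdd hx) hδ.2
  -- coding countable subsets of Iio γ₀
  set decode : (ULift ℕ → Option γ₀.ToType) → Set Ordinal := fun u =>
    {x | ∃ n : ULift ℕ, ∃ h : x < γ₀, u n = some (Ordinal.ToType.mk (o := γ₀) ⟨x, h⟩)}
    with hdecode
  have hcode : ∀ δ ∈ S₁, ∃ u, decode u = A δ := by
    intro δ hδ
    rcases (A δ).eq_empty_or_nonempty with he | hne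
    · refine ⟨fun _ => none, ?_⟩
      rw [he]
      ext x
      simp [hdecode]
    · obtain ⟨g, hg⟩ := Set.Countable.exists_eq_range (hAcount δ) hne
      have hglt : ∀ n : ℕ, g n < γ₀ := fun n =>
        hAsub δ hδ (by rw [hg]; exact Set.mem_range_self n)
      refine ⟨fun n => some (Ordinal.ToType.mk (o := γ₀) ⟨g n.down, hglt n.down⟩), ?_⟩
      ext x
      constructor
      · rintro ⟨n, h, heq⟩
        have := Option.some_injective _ heq
        have := (Ordinal.ToType.mk (o := γ₀)).injective this
        have hx : g n.down = x := congrArg Subtype.val this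
        rw [hg, ← hx]; exact Set.mem_range_self n.down
      · intro hx
        rw [hg] at hx
        obtain ⟨n, hn⟩ := hx
        subst hn
        exact ⟨⟨n⟩, hglt n, rfl⟩
  choose! u hu using hcode
  obtain ⟨v, hv⟩ := Stmt1Aux.stationary_of_union
    (Stmt1Aux.count_codes hγ₀ (Stmt1Aux.CH_transfer hCH)) hS₁ (fun w => {δ | u δ = w})
    (fun δ _ => Set.mem_iUnion.mpr ⟨u δ, rfl⟩)
  set S : Set Ordinal := S₁ ∩ {δ | u δ = v} with hSdef
  have hconst : ∀ δ ∈ S, ∀ δ' ∈ S, A δ = A δ' := by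
    intro δ hδ δ' hδ'
    rw [← hu δ hδ.1, ← hu δ' hδ'.1, hδ.2, hδ'.2]
  refine ⟨S, fun δ hδ => hδ.1.1, hv, ?_⟩
  intro δ hδ δ' hδ' hlt
  by_contra hne1
  have h1 : d δ δ' = 1 := by
    have : ∀ x : Fin 2, x ≠ 0 → x = 1 := by decide
    exact this _ hne1
  have hAconst : A δ' = A δ := (hconst δ hδ δ' hδ').symm
  have hPins : P δ' (insert δ (A δ')) := by
    refine ⟨?_, ?_, ?_, ?_⟩
    · intro x hx
      rcases Set.mem_insert_iff.mp hx with hxe | hx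
      · rw [hxe]; exact hδ.1.1
      · exact (hA δ').1.1 hx
    · intro x hx
      rcases Set.mem_insert_iff.mp hx with hxe | hx
      · rw [hxe]; exact hlt
      · exact (hA δ').1.2.1 x hx
    · intro x hx
      rcases Set.mem_insert_iff.mp hx with hxe | hx
      · rw [hxe]; exact h1
      · exact (hA δ').1.2.2.1 x hx
    · intro x hx y hy hxy
      rcases Set.mem_insert_iff.mp hx with hxe | hx
      · rcases Set.mem_insert_iff.mp hy with hye | hy
        · rw [hxe, hye] at hxy; exact absurd hxy (lt_irrefl _)
        · exfalso
          have hyδ : y < δ := (hA δ).1.2.1 y (hAconst ▸ hy)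
          rw [hxe] at hxy
          exact absurd hxy (not_lt_of_gt hyδ)
      · rcases Set.mem_insert_iff.mp hy with hye | hy
        · rw [hye]
          exact (hA δ).1.2.2.1 x (hAconst ▸ hx)
        · exact (hA δ').1.2.2.2 x hx y hy hxy
  have hsub := (hA δ').2 hPins (Set.subset_insert _ _)
  have hδin : δ ∈ A δ' := hsub (Set.mem_insert δ _)
  have hcontr : δ < δ := (hA δ).1.2.1 δ (hAconst ▸ hδin)
  exact absurd hcontr (lt_irrefl δ)
end

section
/- Let G = (V, E) be a graph with no infinite path, let A be a set of vertices, and let B be an infinite independent set of vertices such that every vertex v ∉ A is adjacent to at most finitely many elements of B. Then there exist distinct x, y ∈ B such that no vertex v ∉ A is adjacent to both x and y. -/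
/-- A set of vertices is independent if no two of its elements are adjacent. -/
def IsIndependent {α : Type*} (G : SimpleGraph α) (W : Set α) : Prop :=
  ∀ x ∈ W, ∀ y ∈ W, ¬ G.Adj x y

/-- `G` has an infinite path: an injective sequence of vertices in which any two
consecutive vertices are adjacent. -/
def HasInfinitePath {α : Type*} (G : SimpleGraph α) : Prop :=
  ∃ f : ℕ → α, Function.Injective f ∧ ∀ n : ℕ, G.Adj (f n) (f (n + 1))

open Classical in
noncomputable def auxStep {α : Type*} (V : α → α → α) (N : α → Set α) (B : Set α)
    (p : α × Set α) : α × Set α :=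
  ((if h : (B \ insert p.1 p.2).Nonempty then h.choose else p.1),
   insert p.1 p.2 ∪
     N (V p.1 (if h : (B \ insert p.1 p.2).Nonempty then h.choose else p.1)))

noncomputable def auxSeq {α : Type*} (V : α → α → α) (N : α → Set α) (B : Set α)
    (x0 : α) : ℕ → α × Set α
  | 0 => (x0, ∅)
  | n + 1 => auxStep V N B (auxSeq V N B x0 n)

/-- Let `G` be a graph with no infinite path, `A` a set of vertices and `B` an infinite
independent set such that every vertex outside `A` has only finitely many neighbours in
`B`.  Then some two distinct elements `x, y ∈ B` have no common neighbour outside `A`. -/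
theorem stmt5 {α : Type*} (G : SimpleGraph α) (hG : ¬ HasInfinitePath G)
    (A B : Set α)
    (hBinf : B.Infinite)
    (hBind : IsIndependent G B)
    (hfin : ∀ v ∉ A, {b ∈ B | G.Adj v b}.Finite) :
    ∃ x ∈ B, ∃ y ∈ B, x ≠ y ∧ ∀ v ∉ A, ¬ (G.Adj v x ∧ G.Adj v y) := by
  classical
  by_contra hcon
  push_neg at hcon
  apply hG
  obtain ⟨x0, hx0⟩ := hBinf.nonempty
  have hVex : ∀ x ∈ B, ∀ y ∈ B, x ≠ y →
      ∃ w, w ∉ A ∧ G.Adj w x ∧ G.Adj w y := by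
    intro x hx y hy hxy
    obtain ⟨w, hw1, hw2⟩ := hcon x hx y hy hxy
    exact ⟨w, hw1, hw2⟩
  set V : α → α → α := fun x y =>
    if h : x ∈ B ∧ y ∈ B ∧ x ≠ y then (hVex x h.1 y h.2.1 h.2.2).choose else x
    with hVdef
  have hVspec : ∀ x y, x ∈ B → y ∈ B → x ≠ y →
      V x y ∉ A ∧ G.Adj (V x y) x ∧ G.Adj (V x y) y := by
    intro x y hx hy hxy
    have h : x ∈ B ∧ y ∈ B ∧ x ≠ y := ⟨hx, hy, hxy⟩
    simp only [hVdef, dif_pos h]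
    exact (hVex x h.1 y h.2.1 h.2.2).choose_spec
  set N : α → Set α := fun w => {c ∈ B | G.Adj w c} with hNdef
  set s : ℕ → α × Set α := auxSeq V N B x0 with hs
  set b : ℕ → α := fun n => (s n).1 with hb
  set F : ℕ → Set α := fun n => (s n).2 with hF
  have hstep' : ∀ n, b n ∈ B → (F n).Finite →
      b (n + 1) ∈ B \ insert (b n) (F n) ∧
      F (n + 1) = insert (b n) (F n) ∪ N (V (b n) (b (n + 1))) := by
    intro n hbn hFn
    have hne : (B \ insert (b n) (F n)).Nonempty :=
      (hBinf.diff (hFn.insert (b n))).nonempty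
    have e1 : b (n + 1) =
        if h : (B \ insert (b n) (F n)).Nonempty then h.choose else b n := by
      show (auxStep V N B (s n)).1 = _
      rfl
    have e2 : F (n + 1) = insert (b n) (F n) ∪ N (V (b n)
        (if h : (B \ insert (b n) (F n)).Nonempty then h.choose else b n)) := by
      show (auxStep V N B (s n)).2 = _
      rfl
    rw [dif_pos hne] at e1 e2
    rw [e1, e2]
    exact ⟨hne.choose_spec, rfl⟩
  have hmain : ∀ n, b n ∈ B ∧ (F n).Finite := by
    intro n
    induction n with
    | zero => exact ⟨hx0, Set.finite_empty⟩
    | succ n ih =>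
      obtain ⟨h1, h2⟩ := hstep' n ih.1 ih.2
      have hby : b (n + 1) ∈ B := h1.1
      have hxy : b n ≠ b (n + 1) := by
        intro h; exact h1.2 (h ▸ Set.mem_insert _ _)
      have hvA : V (b n) (b (n + 1)) ∉ A := (hVspec _ _ ih.1 hby hxy).1
      refine ⟨hby, ?_⟩
      rw [h2]
      exact ((ih.2.insert (b n)).union (hfin _ hvA))
  have hbB : ∀ n, b n ∈ B := fun n => (hmain n).1
  have hstep : ∀ n, b (n + 1) ∈ B \ insert (b n) (F n) ∧
      F (n + 1) = insert (b n) (F n) ∪ N (V (b n) (b (n + 1))) :=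
    fun n => hstep' n (hbB n) (hmain n).2
  have hFmono : ∀ m n, m ≤ n → F m ⊆ F n := by
    intro m n hmn
    induction hmn with
    | refl => exact subset_rfl
    | @step k h ih =>
      refine ih.trans ?_
      rw [(hstep k).2]
      exact (Set.subset_insert _ _).trans Set.subset_union_left
  have hbF : ∀ n, b n ∈ F (n + 1) := by
    intro n
    rw [(hstep n).2]
    exact Set.mem_union_left _ (Set.mem_insert _ _)
  have hbne : ∀ i j, i < j → b i ≠ b j := by
    intro i j hij heq
    obtain ⟨k, rfl⟩ := Nat.exists_eq_add_of_lt hij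
    have h1 := (hstep (i + k)).1.2
    rcases Nat.eq_or_lt_of_le (Nat.le.intro rfl : i ≤ i + k) with h | h
    · exact h1 (heq ▸ h ▸ Set.mem_insert _ _)
    · exact h1 (Set.mem_insert_iff.mpr (Or.inr
        (hFmono _ _ h (heq ▸ hbF i))))
  have hbinj : Function.Injective b := by
    intro m n h
    rcases lt_trichotomy m n with hl | hl | hl
    · exact absurd h (hbne _ _ hl)
    · exact hl
    · exact absurd h.symm (hbne _ _ hl)
  set v : ℕ → α := fun n => V (b n) (b (n + 1)) with hv
  have hvspec : ∀ n, v n ∉ A ∧ G.Adj (v n) (b n) ∧ G.Adj (v n) (b (n + 1)) :=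
    fun n => hVspec _ _ (hbB n) (hbB (n + 1)) (hbne n (n + 1) (Nat.lt_succ_self n))
  have hvnB : ∀ n, v n ∉ B :=
    fun n h => hBind _ h _ (hbB n) (hvspec n).2.1
  have hNsub : ∀ n, N (v n) ⊆ F (n + 1) := by
    intro n
    rw [(hstep n).2]
    exact Set.subset_union_right
  have hvne : ∀ i j, i < j → v i ≠ v j := by
    intro i j hij heq
    have h1 : b (j + 1) ∈ N (v j) := ⟨hbB (j + 1), (hvspec j).2.2⟩
    rw [← heq] at h1
    have h2 : b (j + 1) ∈ F j := hFmono (i + 1) j hij (hNsub i h1)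
    exact (hstep j).1.2 (Set.mem_insert_iff.mpr (Or.inr h2))
  have hvinj : Function.Injective v := by
    intro m n h
    rcases lt_trichotomy m n with hl | hl | hl
    · exact absurd h (hvne _ _ hl)
    · exact hl
    · exact absurd h.symm (hvne _ _ hl)
  refine ⟨fun k => if Even k then b (k / 2) else v (k / 2), ?_, ?_⟩
  · intro k l h
    simp only at h
    rcases Nat.even_or_odd' k with ⟨m, hk | hk⟩ <;>
      rcases Nat.even_or_odd' l with ⟨m', hl | hl⟩ <;> subst hk <;> subst hl
    · have e1 : Even (2 * m) := even_two_mul m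
      have e2 : Even (2 * m') := even_two_mul m'
      rw [if_pos e1, if_pos e2] at h
      have : m = m' := by
        have := hbinj (by simpa [Nat.mul_div_cancel_left] using h)
        omega
      omega
    · have e1 : Even (2 * m) := even_two_mul m
      have e2 : ¬ Even (2 * m' + 1) := by simp [Nat.even_add_one, parity_simps]
      rw [if_pos e1, if_neg e2] at h
      exact absurd (h ▸ hbB _) (hvnB _)
    · have e1 : ¬ Even (2 * m + 1) := by simp [Nat.even_add_one, parity_simps]
      have e2 : Even (2 * m') := even_two_mul m'
      rw [if_neg e1, if_pos e2] at h
      exact absurd (h ▸ hvnB _) (by simp [hbB])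
    · have e1 : ¬ Even (2 * m + 1) := by simp [Nat.even_add_one, parity_simps]
      have e2 : ¬ Even (2 * m' + 1) := by simp [Nat.even_add_one, parity_simps]
      rw [if_neg e1, if_neg e2] at h
      have : m = m' := by
        have := hvinj (by simpa [Nat.mul_add_div] using h)
        omega
      omega
  · intro n
    rcases Nat.even_or_odd' n with ⟨m, hn | hn⟩ <;> subst hn
    · have e1 : Even (2 * m) := even_two_mul m
      have e2 : ¬ Even (2 * m + 1) := by simp [Nat.even_add_one, parity_simps]
      simp only [if_pos e1, if_neg e2]
      have d1 : 2 * m / 2 = m := by omega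
      have d2 : (2 * m + 1) / 2 = m := by omega
      rw [d1, d2]
      exact ((hvspec m).2.1).symm
    · have e1 : ¬ Even (2 * m + 1) := by simp [Nat.even_add_one, parity_simps]
      have e2 : Even (2 * m + 1 + 1) := by simp [Nat.even_add_one, parity_simps]
      simp only [if_neg e1, if_pos e2]
      have d1 : (2 * m + 1) / 2 = m := by omega
      have d2 : (2 * m + 1 + 1) / 2 = m + 1 := by omega
      rw [d1, d2]
      exact (hvspec m).2.2
end

section
/- Let G = (V, E) be a graph with V ⊆ ω₂ × ω and with no infinite path, let β < ω₂, and let C ⊆ V ∩ ({β} × ω) be infinite. Then there exist a finite set A of vertices and an infinite set B ⊆ C such that: (a) every element of A is adjacent to every element of B; (b) every vertex not in A is adjacent to at most one element of B; and (c) B is independent. -/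
section Helpers

/-- Infinite Ramsey theorem for pairs, for a symmetric relation. -/
lemma my_ramsey {α : Type*} (r : α → α → Prop) (hs : ∀ x y, r x y → r y x)
    (S : Set α) (hS : S.Infinite) :
    ∃ T ⊆ S, T.Infinite ∧
      ((∀ x ∈ T, ∀ y ∈ T, x ≠ y → r x y) ∨ (∀ x ∈ T, ∀ y ∈ T, x ≠ y → ¬ r x y)) := by
  classical
  have step : ∀ p : α × Set α, ∃ q : α × Set α, p.2.Infinite →
      (q.1 ∈ p.2 ∧ q.2 ⊆ p.2 \ {q.1} ∧ q.2.Infinite ∧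
        ((∀ x ∈ q.2, r q.1 x) ∨ (∀ x ∈ q.2, ¬ r q.1 x))) := by
    intro p
    by_cases hp : p.2.Infinite
    · obtain ⟨a, ha⟩ := hp.nonempty
      by_cases h1 : {x ∈ p.2 \ {a} | r a x}.Infinite
      · exact ⟨(a, {x ∈ p.2 \ {a} | r a x}), fun _ =>
          ⟨ha, fun x hx => hx.1, h1, Or.inl fun x hx => hx.2⟩⟩
      · refine ⟨(a, {x ∈ p.2 \ {a} | ¬ r a x}), fun _ =>
          ⟨ha, fun x hx => hx.1, ?_, Or.inr fun x hx => hx.2⟩⟩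
        have hd : (p.2 \ {a}).Infinite := hp.diff (Set.finite_singleton a)
        by_contra h2
        rw [Set.not_infinite] at h1 h2
        have : (p.2 \ {a}) ⊆ {x ∈ p.2 \ {a} | r a x} ∪ {x ∈ p.2 \ {a} | ¬ r a x} := by
          intro x hx; by_cases hr : r a x
          · exact Or.inl ⟨hx, hr⟩
          · exact Or.inr ⟨hx, hr⟩
        exact hd ((h1.union h2).subset this)
    · exact ⟨(p.1, ∅), fun h => absurd h hp⟩
  choose nx hnx using step
  obtain ⟨a0, ha0⟩ := hS.nonempty
  let s : ℕ → α × Set α := fun n => Nat.rec (a0, S) (fun _ q => nx q) n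
  set a : ℕ → α := fun n => (s (n + 1)).1 with ha_def
  have hinf : ∀ n, (s n).2.Infinite := by
    intro n; induction n with
    | zero => exact hS
    | succ k ih => exact (hnx (s k) ih).2.2.1
  have hmem : ∀ n, a n ∈ (s n).2 := fun n => (hnx (s n) (hinf n)).1
  have hsub : ∀ n, (s (n + 1)).2 ⊆ (s n).2 \ {a n} := fun n => (hnx (s n) (hinf n)).2.1
  have hdich : ∀ n, (∀ x ∈ (s (n+1)).2, r (a n) x) ∨ (∀ x ∈ (s (n+1)).2, ¬ r (a n) x) :=
    fun n => (hnx (s n) (hinf n)).2.2.2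
  have hmono : ∀ m n, m ≤ n → (s n).2 ⊆ (s m).2 := by
    intro m n hmn
    induction n, hmn using Nat.le_induction with
    | base => exact subset_rfl
    | succ k hk ih => exact ((hsub k).trans Set.diff_subset).trans ih
  have hlt : ∀ m n, m < n → a n ∈ (s (m + 1)).2 := fun m n h =>
    hmono (m + 1) n h (hmem n)
  have hainj : Function.Injective a := by
    intro m n hmn
    by_contra hne
    rcases Ne.lt_or_gt hne with h | h
    · exact ((hsub m) (hlt m n h)).2 (by simp [hmn])
    · exact ((hsub n) (hlt n m h)).2 (by simp [hmn])
  have haS : ∀ n, a n ∈ S := fun n => hmono 0 n (Nat.zero_le _) (hmem n)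
  have hpig : {n | ∀ x ∈ (s (n+1)).2, r (a n) x}.Infinite ∨
      {n | ∀ x ∈ (s (n+1)).2, ¬ r (a n) x}.Infinite := by
    by_contra h
    push_neg at h
    obtain ⟨h1, h2⟩ := h
    have h1 := h1
    have h2 := h2
    have : (Set.univ : Set ℕ) ⊆ {n | ∀ x ∈ (s (n+1)).2, r (a n) x} ∪
        {n | ∀ x ∈ (s (n+1)).2, ¬ r (a n) x} := by
      intro n _
      rcases hdich n with h | h
      · exact Or.inl h
      · exact Or.inr h
    exact Set.infinite_univ ((h1.union h2).subset this)
  rcases hpig with hI | hI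
  · refine ⟨a '' {n | ∀ x ∈ (s (n+1)).2, r (a n) x}, ?_, ?_, Or.inl ?_⟩
    · rintro x ⟨n, _, rfl⟩; exact haS n
    · exact hI.image (hainj.injOn)
    · rintro x ⟨m, hm, rfl⟩ y ⟨n, hn, rfl⟩ hne
      have hmn : m ≠ n := fun h => hne (by rw [h])
      rcases Ne.lt_or_gt hmn with h | h
      · exact hm _ (hlt m n h)
      · exact hs _ _ (hn _ (hlt n m h))
  · refine ⟨a '' {n | ∀ x ∈ (s (n+1)).2, ¬ r (a n) x}, ?_, ?_, Or.inr ?_⟩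
    · rintro x ⟨n, _, rfl⟩; exact haS n
    · exact hI.image (hainj.injOn)
    · rintro x ⟨m, hm, rfl⟩ y ⟨n, hn, rfl⟩ hne
      have hmn : m ≠ n := fun h => hne (by rw [h])
      rcases Ne.lt_or_gt hmn with h | h
      · exact hm _ (hlt m n h)
      · exact fun hr => (hn _ (hlt n m h)) (hs _ _ hr)

/-- Two injective disjoint sequences with alternating adjacency give an infinite path. -/
lemma alt_path {α : Type*} (G : SimpleGraph α) (x b : ℕ → α)
    (hx : Function.Injective x) (hb : Function.Injective b)
    (hd : ∀ m n, x m ≠ b n)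
    (h1 : ∀ n, G.Adj (x n) (b n)) (h2 : ∀ n, G.Adj (b n) (x (n + 1))) :
    HasInfinitePath G := by
  refine ⟨fun n => if n % 2 = 0 then x (n / 2) else b (n / 2), ?_, ?_⟩
  · intro m n hmn
    by_cases hm : m % 2 = 0 <;> by_cases hn : n % 2 = 0 <;> simp only [hm, hn, if_true,
      if_false, reduceIte] at hmn
    · have := hx hmn; omega
    · exact absurd hmn (hd _ _)
    · exact absurd hmn.symm (hd _ _)
    · have := hb hmn; omega
  · intro n
    by_cases h : n % 2 = 0
    · obtain ⟨p, rfl⟩ : ∃ p, n = 2 * p := ⟨n / 2, by omega⟩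
      simp only [Nat.mul_mod_right, show (2*p+1) % 2 = 1 by omega,
        show (2*p) / 2 = p by omega, show (2*p+1) / 2 = p by omega, if_true, reduceIte]
      exact h1 p
    · obtain ⟨p, rfl⟩ : ∃ p, n = 2 * p + 1 := ⟨n / 2, by omega⟩
      simp only [show (2*p+1) % 2 = 1 by omega, show (2*p+2) % 2 = 0 by omega,
        show (2*p+1) / 2 = p by omega, show (2*p+1+1) / 2 = p + 1 by omega, reduceIte]
      exact h2 p

/-- If an infinite subset `K` of an independent set pairwise has common neighbours
outside `A`, while every vertex outside `A` has only finitely many neighbours in `K`,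
then there is an infinite path. -/
lemma clique_path {α : Type*} (G : SimpleGraph α) (C : Set α)
    (hCind : ∀ x ∈ C, ∀ y ∈ C, ¬ G.Adj x y)
    (A K : Set α) (hKC : K ⊆ C) (hKinf : K.Infinite)
    (hcl : ∀ p ∈ K, ∀ q ∈ K, p ≠ q → ∃ v, v ∉ A ∧ G.Adj v p ∧ G.Adj v q)
    (hfin : ∀ x, x ∉ A → {c ∈ K | G.Adj x c}.Finite) :
    HasInfinitePath G := by
  classical
  have claim : ∀ p : α × Finset α, ∃ q : α × α, (p.1 ∈ K ∧ p.1 ∈ p.2) →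
      (q.1 ∈ K ∧ q.1 ∉ p.2 ∧ q.2 ∉ p.2 ∧ q.2 ∉ A ∧ G.Adj q.2 p.1 ∧ G.Adj q.2 q.1) := by
    rintro ⟨bcur, U⟩
    by_cases hp : bcur ∈ K ∧ bcur ∈ U
    · suffices h : ∃ q : α × α, (q.1 ∈ K ∧ q.1 ∉ U ∧ q.2 ∉ U ∧ q.2 ∉ A ∧
          G.Adj q.2 bcur ∧ G.Adj q.2 q.1) by
        obtain ⟨q, hq⟩ := h; exact ⟨q, fun _ => hq⟩
      by_contra hno
      have key : (K \ ↑U) ⊆ ⋃ v ∈ (↑U : Set α), {c ∈ K | v ∉ A ∧ G.Adj v c} := by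
        intro b' hb'
        obtain ⟨hb'K, hb'U⟩ := hb'
        have hne : bcur ≠ b' := fun h => hb'U (h ▸ hp.2)
        obtain ⟨v, hvA, hvb, hvb'⟩ := hcl bcur hp.1 b' hb'K hne
        have hvU : v ∈ U := by
          by_contra hvU
          exact hno ⟨(b', v), hb'K, hb'U, hvU, hvA, hvb, hvb'⟩
        exact Set.mem_biUnion hvU ⟨hb'K, hvA, hvb'⟩
      have hfin2 : (⋃ v ∈ (↑U : Set α), {c ∈ K | v ∉ A ∧ G.Adj v c}).Finite := by
        apply Set.Finite.biUnion U.finite_toSet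
        intro v _
        by_cases hv : v ∈ A
        · refine Set.Finite.subset (Set.finite_empty) ?_
          intro c hc; exact (hc.2.1 hv).elim
        · exact (hfin v hv).subset (fun c hc => ⟨hc.1, hc.2.2⟩)
      exact (hKinf.diff U.finite_toSet) (hfin2.subset key)
    · exact ⟨(bcur, bcur), fun h => absurd h hp⟩
  choose nxt hnxt using claim
  obtain ⟨b0, hb0⟩ := hKinf.nonempty
  let u : ℕ → α × Finset α := fun n =>
    Nat.rec (b0, {b0}) (fun _ q => ((nxt q).1, insert (nxt q).1 (insert (nxt q).2 q.2))) n
  have husucc : ∀ n, u (n + 1) =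
      ((nxt (u n)).1, insert (nxt (u n)).1 (insert (nxt (u n)).2 (u n).2)) := fun n => rfl
  set v : ℕ → α := fun n => (nxt (u n)).2 with hv_def
  set bs : ℕ → α := fun n => (u n).1 with hbs_def
  have hinv : ∀ n, bs n ∈ K ∧ bs n ∈ (u n).2 := by
    intro n; induction n with
    | zero => exact ⟨hb0, Finset.mem_singleton_self b0⟩
    | succ k ih =>
      refine ⟨(hnxt (u k) ih).1, ?_⟩
      rw [show bs (k+1) = (nxt (u k)).1 from rfl, husucc]
      exact Finset.mem_insert_self _ _
  have hprop := fun n => hnxt (u n) (hinv n)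
  have hUmono : ∀ m n, m ≤ n → (u m).2 ⊆ (u n).2 := by
    intro m n hmn
    induction n, hmn using Nat.le_induction with
    | base => exact subset_rfl
    | succ k hk ih =>
      refine ih.trans ?_
      rw [husucc]
      exact fun x hx => Finset.mem_insert_of_mem (Finset.mem_insert_of_mem hx)
  have hbnew : ∀ n, bs (n + 1) ∉ (u n).2 := fun n => (hprop n).2.1
  have hvnew : ∀ n, v n ∉ (u n).2 := fun n => (hprop n).2.2.1
  have hvmem : ∀ n, v n ∈ (u (n + 1)).2 := fun n => by
    rw [husucc]; exact Finset.mem_insert_of_mem (Finset.mem_insert_self _ _)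
  have hadj1 : ∀ n, G.Adj (v n) (bs n) := fun n => (hprop n).2.2.2.2.1
  have hadj2 : ∀ n, G.Adj (v n) (bs (n + 1)) := fun n => (hprop n).2.2.2.2.2
  have hbK : ∀ n, bs n ∈ K := fun n => (hinv n).1
  have hvC : ∀ n, v n ∉ C := fun n hvC => hCind _ hvC _ (hKC (hbK n)) (hadj1 n)
  have hbsinj : Function.Injective bs := by
    have key : ∀ m n, m < n → bs m ≠ bs n := by
      intro m n hmn heq
      obtain ⟨k, rfl⟩ : ∃ k, n = k + 1 := ⟨n - 1, by omega⟩
      exact hbnew k (heq ▸ hUmono m k (by omega) (hinv m).2)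
    intro m n h
    by_contra hne
    rcases Ne.lt_or_gt hne with hlt | hlt
    · exact key m n hlt h
    · exact key n m hlt h.symm
  have hvinj : Function.Injective v := by
    have key : ∀ m n, m < n → v m ≠ v n := by
      intro m n hmn heq
      exact hvnew n (heq ▸ hUmono (m + 1) n (by omega) (hvmem m))
    intro m n h
    by_contra hne
    rcases Ne.lt_or_gt hne with hlt | hlt
    · exact key m n hlt h
    · exact key n m hlt h.symm
  exact alt_path G bs v hbsinj hvinj
    (fun m n h => hvC n (h ▸ hKC (hbK m)))
    (fun n => (hadj1 n).symm) hadj2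

/-- The key dichotomy: given any set `A` and an infinite subset `B` of an independent
set `C`, either some infinite `B' ⊆ B` has the property that every vertex outside `A`
has at most one neighbour in `B'`, or some new vertex outside `A ∪ C` is adjacent to
all elements of an infinite subset of `B`. -/
lemma step_lemma {α : Type*} (G : SimpleGraph α) (hG : ¬ HasInfinitePath G)
    (C : Set α) (hCind : ∀ x ∈ C, ∀ y ∈ C, ¬ G.Adj x y)
    (A B : Set α) (hBC : B ⊆ C) (hBinf : B.Infinite) :
    (∃ B' ⊆ B, B'.Infinite ∧
        ∀ v, v ∉ A → ∀ x ∈ B', ∀ y ∈ B', G.Adj v x → G.Adj v y → x = y) ∨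
    (∃ x, x ∉ A ∧ x ∉ C ∧ ∃ B' ⊆ B, B'.Infinite ∧ ∀ b ∈ B', G.Adj x b) := by
  obtain ⟨T, hTB, hTinf, hT⟩ := my_ramsey (fun b b' => ∃ v, v ∉ A ∧ G.Adj v b ∧ G.Adj v b')
    (fun x y h => by obtain ⟨v, h1, h2, h3⟩ := h; exact ⟨v, h1, h3, h2⟩) B hBinf
  rcases hT with hclique | hind
  · right
    by_cases hex : ∃ x, x ∉ A ∧ {c ∈ T | G.Adj x c}.Infinite
    · obtain ⟨x, hxA, hxinf⟩ := hex
      obtain ⟨b, hb⟩ := hxinf.nonempty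
      have hxC : x ∉ C := fun hxC => hCind x hxC b (hBC (hTB hb.1)) hb.2
      exact ⟨x, hxA, hxC, {c ∈ T | G.Adj x c}, (fun c hc => hTB hc.1), hxinf,
        fun b hb => hb.2⟩
    · exfalso; apply hG
      push_neg at hex
      exact clique_path G C hCind A T (hTB.trans hBC) hTinf
        (fun p hp q hq hne => hclique p hp q hq hne)
        (fun x hx => (hex x hx))
  · left
    refine ⟨T, hTB, hTinf, ?_⟩
    intro v hv x hx y hy hvx hvy
    by_contra hne
    exact hind x hx y hy hne ⟨v, hv, hvx, hvy⟩

end Helpers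

/-- Let `G = (V, E)` be a graph with `V ⊆ ω₂ × ω` and no infinite path, let `β < ω₂` and
let `C ⊆ V ∩ ({β} × ω)` be infinite.  Then there are a finite set `A` of vertices and an
infinite `B ⊆ C` such that every element of `A` is adjacent to every element of `B`,
every vertex not in `A` is adjacent to at most one element of `B`, and `B` is
independent. -/
theorem stmt6
    (G : SimpleGraph (Ordinal × ℕ)) (V : Set (Ordinal × ℕ))
    (hV : ∀ p ∈ V, p.1 < omega2)
    (hE : ∀ x y : Ordinal × ℕ, G.Adj x y → x ∈ V ∧ y ∈ V)
    (hG : ¬ HasInfinitePath G)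
    (β : Ordinal) (hβ : β < omega2)
    (C : Set (Ordinal × ℕ))
    (hC : C ⊆ V ∩ {p : Ordinal × ℕ | p.1 = β})
    (hCinf : C.Infinite) :
    ∃ A B : Set (Ordinal × ℕ),
      A ⊆ V ∧ A.Finite ∧ B ⊆ C ∧ B.Infinite ∧
      (∀ x ∈ A, ∀ y ∈ B, G.Adj x y) ∧
      (∀ v ∉ A, ∀ x ∈ B, ∀ y ∈ B, G.Adj v x → G.Adj v y → x = y) ∧
      IsIndependent G B := by
  classical
  by_contra hcon
  obtain ⟨a0, ha0⟩ := hCinf.nonempty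
  -- First, shrink C to an infinite independent set C₁.
  obtain ⟨C₁, hC₁C, hC₁inf, hram⟩ :=
    my_ramsey (fun x y => G.Adj x y) (fun x y h => h.symm) C hCinf
  have hC₁ind : ∀ x ∈ C₁, ∀ y ∈ C₁, ¬ G.Adj x y := by
    rcases hram with hcl | hind
    · exfalso; apply hG
      let e := hC₁inf.natEmbedding
      refine ⟨fun n => (e n : (Ordinal × ℕ)), fun m n h => e.injective (Subtype.val_injective h), ?_⟩
      intro n
      refine hcl _ (e n).2 _ (e (n + 1)).2 ?_
      intro h
      have := e.injective (Subtype.val_injective h)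
      omega
    · intro x hx y hy
      by_cases hxy : x = y
      · subst hxy; exact fun h => G.irrefl h
      · exact hind x hx y hy hxy
  -- The iteration step, as a total choice function.
  have key : ∀ p : Set (Ordinal × ℕ) × Set (Ordinal × ℕ), ∃ q : (Ordinal × ℕ) × Set (Ordinal × ℕ),
      (p.1 ⊆ V ∧ p.1.Finite ∧ p.2 ⊆ C₁ ∧ p.2.Infinite ∧
        ∀ a ∈ p.1, ∀ b ∈ p.2, G.Adj a b) →
      (q.1 ∉ p.1 ∧ q.1 ∉ C₁ ∧ q.2 ⊆ p.2 ∧ q.2.Infinite ∧ ∀ b ∈ q.2, G.Adj q.1 b) := by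
    rintro ⟨A, B⟩
    by_cases hp : A ⊆ V ∧ A.Finite ∧ B ⊆ C₁ ∧ B.Infinite ∧ ∀ a ∈ A, ∀ b ∈ B, G.Adj a b
    · obtain ⟨hAV, hAfin, hBC₁, hBinf, hcomp⟩ := hp
      rcases step_lemma G hG C₁ hC₁ind A B hBC₁ hBinf with
        ⟨B', hB'B, hB'inf, hB'⟩ | ⟨x, hxA, hxC, B', hB'B, hB'inf, hB'⟩
      · exfalso; apply hcon
        refine ⟨A, B', hAV, hAfin, (hB'B.trans hBC₁).trans hC₁C, hB'inf,
          (fun a ha b hb => hcomp a ha b (hB'B hb)), hB', ?_⟩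
        intro x hx y hy
        exact hC₁ind x (hBC₁ (hB'B hx)) y (hBC₁ (hB'B hy))
      · exact ⟨(x, B'), fun _ => ⟨hxA, hxC, hB'B, hB'inf, hB'⟩⟩
    · exact ⟨(a0, ∅), fun h => absurd h hp⟩
  choose nxt hnxt using key
  let s : ℕ → Set (Ordinal × ℕ) × Set (Ordinal × ℕ) := fun n =>
    Nat.rec (∅, C₁) (fun _ p => (insert (nxt p).1 p.1, (nxt p).2)) n
  have hssucc : ∀ n, s (n + 1) = (insert (nxt (s n)).1 (s n).1, (nxt (s n)).2) :=
    fun n => rfl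
  set xs : ℕ → (Ordinal × ℕ) := fun n => (nxt (s n)).1 with hxs_def
  have hgood : ∀ n, (s n).1 ⊆ V ∧ (s n).1.Finite ∧ (s n).2 ⊆ C₁ ∧ (s n).2.Infinite ∧
      ∀ a ∈ (s n).1, ∀ b ∈ (s n).2, G.Adj a b := by
    intro n; induction n with
    | zero =>
      exact ⟨Set.empty_subset _, Set.finite_empty, subset_rfl, hC₁inf,
        fun a ha => absurd ha (Set.notMem_empty a)⟩
    | succ k ih =>
      have h := hnxt (s k) ih
      obtain ⟨b, hb⟩ := h.2.2.2.1.nonempty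
      have hxV : xs k ∈ V := (hE _ _ (h.2.2.2.2 b hb)).1
      rw [hssucc]
      refine ⟨?_, ih.2.1.insert _, h.2.2.1.trans ih.2.2.1, h.2.2.2.1, ?_⟩
      · intro a ha
        rcases Set.mem_insert_iff.mp ha with rfl | ha
        · exact hxV
        · exact ih.1 ha
      · intro a ha b hb'
        rcases Set.mem_insert_iff.mp ha with rfl | ha
        · exact h.2.2.2.2 b hb'
        · exact ih.2.2.2.2 a ha b (h.2.2.1 hb')
  have hprop := fun n => hnxt (s n) (hgood n)
  have hxmem : ∀ n, xs n ∈ (s (n + 1)).1 := fun n => by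
    rw [hssucc]; exact Set.mem_insert _ _
  have hxnew : ∀ n, xs n ∉ (s n).1 := fun n => (hprop n).1
  have hxC : ∀ n, xs n ∉ C₁ := fun n => (hprop n).2.1
  have hAmono : ∀ m n, m ≤ n → (s m).1 ⊆ (s n).1 := by
    intro m n hmn
    induction n, hmn using Nat.le_induction with
    | base => exact subset_rfl
    | succ k hk ih =>
      refine ih.trans ?_
      rw [hssucc]
      exact Set.subset_insert _ _
  have hBmono : ∀ m n, m ≤ n → (s n).2 ⊆ (s m).2 := by
    intro m n hmn
    induction n, hmn using Nat.le_induction with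
    | base => exact subset_rfl
    | succ k hk ih =>
      refine Set.Subset.trans ?_ ih
      rw [hssucc]
      exact (hprop k).2.2.1
  have hxinj : Function.Injective xs := by
    have key2 : ∀ m n, m < n → xs m ≠ xs n := by
      intro m n hmn heq
      exact hxnew n (heq ▸ hAmono (m + 1) n (by omega) (hxmem m))
    intro m n h
    by_contra hne
    rcases Ne.lt_or_gt hne with hlt | hlt
    · exact key2 m n hlt h
    · exact key2 n m hlt h.symm
  have hcompx : ∀ n, ∀ b ∈ (s (n + 1)).2, G.Adj (xs n) b := fun n => by
    rw [hssucc]; exact (hprop n).2.2.2.2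
  -- choose the b-sequence
  have pick : ∀ p : ℕ × Finset (Ordinal × ℕ), ∃ a, a ∈ (s p.1).2 \ ↑p.2 :=
    fun p => ((hgood p.1).2.2.2.1.diff p.2.finite_toSet).nonempty
  choose pk hpk using pick
  let t : ℕ → (Ordinal × ℕ) × Finset (Ordinal × ℕ) := fun n =>
    Nat.rec (pk (2, ∅), {pk (2, ∅)})
      (fun k q => (pk (k + 3, q.2), insert (pk (k + 3, q.2)) q.2)) n
  have htsucc : ∀ n, t (n + 1) = (pk (n + 3, (t n).2), insert (pk (n + 3, (t n).2)) (t n).2) :=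
    fun n => rfl
  set bs : ℕ → (Ordinal × ℕ) := fun n => (t n).1 with hbs_def
  have hbB : ∀ n, bs n ∈ (s (n + 2)).2 ∧ bs n ∈ (t n).2 := by
    intro n; induction n with
    | zero => exact ⟨(hpk (2, ∅)).1, Finset.mem_singleton_self _⟩
    | succ k ih =>
      refine ⟨(hpk (k + 3, (t k).2)).1, ?_⟩
      rw [show bs (k + 1) = pk (k + 3, (t k).2) from rfl, htsucc]
      exact Finset.mem_insert_self _ _
  have hbnew : ∀ n, bs (n + 1) ∉ (t n).2 := fun n => (hpk (n + 3, (t n).2)).2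
  have htmono : ∀ m n, m ≤ n → (t m).2 ⊆ (t n).2 := by
    intro m n hmn
    induction n, hmn using Nat.le_induction with
    | base => exact subset_rfl
    | succ k hk ih =>
      refine ih.trans ?_
      rw [htsucc]
      exact fun x hx => Finset.mem_insert_of_mem hx
  have hbinj : Function.Injective bs := by
    have key2 : ∀ m n, m < n → bs m ≠ bs n := by
      intro m n hmn heq
      obtain ⟨k, rfl⟩ : ∃ k, n = k + 1 := ⟨n - 1, by omega⟩
      exact hbnew k (heq ▸ htmono m k (by omega) (hbB m).2)
    intro m n h
    by_contra hne
    rcases Ne.lt_or_gt hne with hlt | hlt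
    · exact key2 m n hlt h
    · exact key2 n m hlt h.symm
  have hbC₁ : ∀ n, bs n ∈ C₁ := fun n => (hgood (n + 2)).2.2.1 (hbB n).1
  refine hG (alt_path G xs bs hxinj hbinj (fun m n h => hxC m (h ▸ hbC₁ n)) ?_ ?_)
  · intro n
    exact hcompx n (bs n) (hBmono (n + 1) (n + 2) (by omega) (hbB n).1)
  · intro n
    exact (hcompx (n + 1) (bs n) (hbB n).1).symm
end

section
/- Let V ⊆ ω₂ × ω be of full type ω*·ω₂ and let G = (V, E) be a graph with no infinite path. Then there exists a set W ⊆ V of full type ω*·ω₂ such that the induced subgraph H = (W, E ∩ [W]²) has clean columns. -/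
/-- The `β`-th column of `W ⊆ ω₂ × ω`. -/
def column (W : Set (Ordinal × ℕ)) (β : Ordinal) : Set (Ordinal × ℕ) :=
  {p ∈ W | p.1 = β}

/-- `W ⊆ ω₂ × ω` is of full type `ω*·ω₂`: the set of `β < ω₂` with infinite `β`-th
column has cardinality `ℵ₂`. -/
def FullType (W : Set (Ordinal × ℕ)) : Prop :=
  Cardinal.mk {β : Ordinal | β < omega2 ∧ (column W β).Infinite} = Cardinal.aleph 2

/-- The graph with vertex set `W` (and adjacency inherited from `G`) has clean columns:
every column is empty or infinite, every column is independent, and every vertex of `W`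
has at most one neighbour in each column of `W`. -/
def CleanColumns (G : SimpleGraph (Ordinal × ℕ)) (W : Set (Ordinal × ℕ)) : Prop :=
  (∀ β : Ordinal, column W β = ∅ ∨ (column W β).Infinite) ∧
  (∀ β : Ordinal, IsIndependent G (column W β)) ∧
  (∀ v ∈ W, ∀ β : Ordinal, ∀ x ∈ column W β, ∀ y ∈ column W β,
    G.Adj v x → G.Adj v y → x = y)

namespace Aux
variable {α : Type*} (G : SimpleGraph α)

def Step (U : Set α) (a b : α) : Prop := a ∈ U ∧ b ∈ U ∧ G.Adj a b

def Conn (U : Set α) (x y : α) : Prop := Relation.ReflTransGen (Step G U) x y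

def cmp (U : Set α) (x : α) : Set α := {y | y ∈ U ∧ Conn G U x y}

variable {G}

lemma step_symm {U : Set α} : Symmetric (Step G U) := fun _ _ h => ⟨h.2.1, h.1, h.2.2.symm⟩

lemma conn_symm {U : Set α} {x y : α} (h : Conn G U x y) : Conn G U y x :=
  by
    haveI : Std.Symm (Step G U) := ⟨fun _ _ h => step_symm h⟩
    exact Std.Symm.symm (r := Relation.ReflTransGen (Step G U)) _ _ h

lemma conn_trans {U : Set α} {x y z : α} (h : Conn G U x y) (h' : Conn G U y z) :
    Conn G U x z := h.trans h'

lemma cmp_subset {U : Set α} {x : α} : cmp G U x ⊆ U := fun _ h => h.1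

lemma mem_cmp_self {U : Set α} {x : α} (hx : x ∈ U) : x ∈ cmp G U x :=
  ⟨hx, Relation.ReflTransGen.refl⟩

lemma cmp_eq_of_mem {U : Set α} {x y : α} (hy : y ∈ cmp G U x) :
    cmp G U y = cmp G U x := by
  ext z
  constructor
  · exact fun hz => ⟨hz.1, conn_trans hy.2 hz.2⟩
  · exact fun hz => ⟨hz.1, conn_trans (conn_symm hy.2) hz.2⟩

lemma adj_mem_cmp {U : Set α} {a b : α} (ha : a ∈ U) (hb : b ∈ U) (hab : G.Adj a b) :
    b ∈ cmp G U a :=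
  ⟨hb, Relation.ReflTransGen.single ⟨ha, hb, hab⟩⟩

lemma conn_restrict {U : Set α} {x y : α} (hx : x ∈ U) (h : Conn G U x y) :
    y ∈ cmp G U x ∧ Conn G (cmp G U x) x y := by
  induction h with
  | refl => exact ⟨mem_cmp_self hx, Relation.ReflTransGen.refl⟩
  | tail hb hstep ih =>
    have hcmem : _ ∈ cmp G U x := ⟨hstep.2.1, Relation.ReflTransGen.tail hb hstep⟩
    have hbmem : _ ∈ cmp G U x := ih.1
    exact ⟨hcmem, Relation.ReflTransGen.tail ih.2 ⟨hbmem, hcmem, hstep.2.2⟩⟩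

lemma conn_within_cmp {U : Set α} {x w y : α} (hx : x ∈ U)
    (hw : w ∈ cmp G U x) (hy : y ∈ cmp G U x) : Conn G (cmp G U x) w y :=
  conn_trans (conn_symm (conn_restrict hx hw.2).2) (conn_restrict hx hy.2).2

/-- first-hit lemma -/
lemma exists_adj_in_del {U : Set α} {v : α} :
    ∀ y, Conn G U v y → y ≠ v → ∃ w, G.Adj v w ∧ w ∈ U \ {v} ∧ Conn G (U \ {v}) w y := by
  intro y h
  induction h with
  | refl => intro h; exact absurd rfl h
  | @tail b c hb hstep ih =>
    intro hcv
    by_cases hbv : b = v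
    · subst hbv
      exact ⟨c, hstep.2.2, ⟨hstep.2.1, hcv⟩, Relation.ReflTransGen.refl⟩
    · obtain ⟨w, hadj, hwm, hconn⟩ := ih hbv
      exact ⟨w, hadj, hwm,
        Relation.ReflTransGen.tail hconn ⟨⟨hstep.1, hbv⟩, ⟨hstep.2.1, hcv⟩, hstep.2.2⟩⟩

inductive Ranked (G : SimpleGraph α) : Set α → Prop
  | intro (U S : Set α) (hS : S.Finite)
      (h : ∀ x ∈ U \ S, Ranked G (cmp G (U \ S) x)) : Ranked G U

lemma not_ranked_elim {U : Set α} (h : ¬ Ranked G U) (S : Set α) (hS : S.Finite) :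
    ∃ x ∈ U \ S, ¬ Ranked G (cmp G (U \ S) x) := by
  by_contra hc
  push_neg at hc
  exact h (Ranked.intro U S hS hc)

/-- Schmidt: rayless implies every set is ranked. -/
theorem ranked_of_noray (hG : ¬ HasInfinitePath G) (U : Set α) : Ranked G U := by
  by_contra hU
  -- invariant on pairs (v, C)
  set Inv : α × Set α → Prop :=
    fun p => p.1 ∈ p.2 ∧ ¬ Ranked G p.2 ∧ ∀ y ∈ p.2, Conn G p.2 p.1 y with hInv
  -- seed
  obtain ⟨x0, hx0, hnr0⟩ := not_ranked_elim hU ∅ Set.finite_empty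
  have hseed : Inv (x0, cmp G (U \ ∅) x0) := by
    refine ⟨mem_cmp_self hx0, hnr0, ?_⟩
    intro y hy
    exact (conn_restrict hx0 hy.2).2
  -- step: from an Inv pair produce the next one
  have hstep : ∀ p : α × Set α, Inv p → ∃ q : α × Set α, Inv q ∧
      q.2 ⊆ p.2 \ {p.1} ∧ G.Adj p.1 q.1 := by
    rintro ⟨v, C⟩ ⟨hvC, hnrC, hconnC⟩
    obtain ⟨x, hxm, hnrx⟩ := not_ranked_elim hnrC {v} (Set.finite_singleton v)
    have hxC : x ∈ C := hxm.1
    have hxv : x ≠ v := by simpa using hxm.2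
    obtain ⟨w, hadj, hwm, hconn⟩ := exists_adj_in_del x (hconnC x hxC) hxv
    have hwcmp : w ∈ cmp G (C \ {v}) x := ⟨hwm, conn_symm hconn⟩
    refine ⟨(w, cmp G (C \ {v}) x), ⟨hwcmp, hnrx, ?_⟩, ?_, hadj⟩
    · intro y hy
      exact conn_within_cmp hxm hwcmp hy
    · exact cmp_subset
  -- build the infinite path
  classical
  have hVne : Inv (x0, cmp G (U \ ∅) x0) := hseed
  let next : α × Set α → α × Set α := fun p => if h : Inv p then (hstep p h).choose else p
  have hnext : ∀ p, Inv p → Inv (next p) ∧ (next p).2 ⊆ p.2 \ {p.1} ∧ G.Adj p.1 (next p).1 := by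
    intro p hp
    simp only [next, dif_pos hp]
    exact (hstep p hp).choose_spec
  let g : ℕ → α × Set α := fun n => next^[n] (x0, cmp G (U \ ∅) x0)
  have hg : ∀ n, Inv (g n) := by
    intro n
    induction n with
    | zero => exact hseed
    | succ n ih =>
      have : g (n+1) = next (g n) := Function.iterate_succ_apply' _ _ _
      rw [this]
      exact (hnext _ ih).1
  have hgsub : ∀ n, (g (n+1)).2 ⊆ (g n).2 \ {(g n).1} := by
    intro n
    have : g (n+1) = next (g n) := Function.iterate_succ_apply' _ _ _
    rw [this]
    exact (hnext _ (hg n)).2.1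
  have hgadj : ∀ n, G.Adj (g n).1 (g (n+1)).1 := by
    intro n
    have : g (n+1) = next (g n) := Function.iterate_succ_apply' _ _ _
    rw [this]
    exact (hnext _ (hg n)).2.2
  have hchain : ∀ m n, m < n → (g n).2 ⊆ (g m).2 \ {(g m).1} := by
    intro m n
    induction n with
    | zero => intro h; omega
    | succ n ih =>
      intro hmn
      rcases Nat.lt_succ_iff_lt_or_eq.mp hmn with h | h
      · exact (hgsub n).trans (Set.diff_subset.trans (ih h))
      · rw [h]; exact hgsub n
  have hkey : ∀ m n, m < n → (g m).1 ≠ (g n).1 := by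
    intro m n h he
    have hmem := hchain m n h (hg n).1
    exact hmem.2 he.symm
  have hinj : Function.Injective (fun n => (g n).1) := by
    intro m n hmn
    rcases lt_trichotomy m n with h | h | h
    · exact absurd hmn (hkey m n h)
    · exact h
    · exact absurd hmn.symm (hkey n m h)
  exact hG ⟨fun n => (g n).1, hinj, hgadj⟩


section Ramsey

theorem exists_indep (hG : ¬ HasInfinitePath G) {A : Set α} (hA : A.Infinite) :
    ∃ B ⊆ A, B.Infinite ∧ ∀ x ∈ B, ∀ y ∈ B, ¬ G.Adj x y := by
  classical
  obtain ⟨a0, -⟩ := hA.nonempty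
  set sideN : Set α → α → Set α := fun X a => {y ∈ X | ¬ G.Adj a y ∧ y ≠ a} with hsideN
  set sideA : Set α → α → Set α := fun X a => {y ∈ X | G.Adj a y ∧ y ≠ a} with hsideA
  have hsplit : ∀ (X : Set α) (a : α), X.Infinite → (sideN X a).Infinite ∨ (sideA X a).Infinite := by
    intro X a hX
    by_contra hc
    push_neg at hc
    have : X ⊆ (sideN X a) ∪ (sideA X a) ∪ {a} := by
      intro y hy
      by_cases hya : y = a
      · exact Or.inr hya
      · by_cases hadj : G.Adj a y
        · exact Or.inl (Or.inr ⟨hy, hadj, hya⟩)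
        · exact Or.inl (Or.inl ⟨hy, hadj, hya⟩)
    exact hX (Set.Finite.subset (((hc.1.union hc.2).union
      (Set.finite_singleton a))) this)
  set aOf : Set α → α := fun X => if h : X.Infinite then h.nonempty.choose else a0 with haOf
  set nxt : Set α → Set α := fun X =>
    if h : X.Infinite then
      (if (sideN X (aOf X)).Infinite then sideN X (aOf X) else sideA X (aOf X))
    else ∅ with hnxt
  set X : ℕ → Set α := fun n => nxt^[n] A with hX
  have hXsucc : ∀ n, X (n+1) = nxt (X n) := by
    intro n; exact Function.iterate_succ_apply' _ _ _
  have hXinf : ∀ n, (X n).Infinite := by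
    intro n
    induction n with
    | zero => exact hA
    | succ n ih =>
      rw [hXsucc n]
      simp only [hnxt, dif_pos ih]
      rcases hsplit (X n) (aOf (X n)) ih with h | h
      · rw [if_pos h]; exact h
      · by_cases h' : (sideN (X n) (aOf (X n))).Infinite
        · rw [if_pos h']; exact h'
        · rw [if_neg h']; exact h
  set a : ℕ → α := fun n => aOf (X n) with ha
  have hamem : ∀ n, a n ∈ X n := by
    intro n
    simp only [ha, haOf, dif_pos (hXinf n)]
    exact (hXinf n).nonempty.choose_spec
  have hbranch : ∀ n, ((sideN (X n) (a n)).Infinite ∧ X (n+1) = sideN (X n) (a n)) ∨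
      (¬ (sideN (X n) (a n)).Infinite ∧ X (n+1) = sideA (X n) (a n)) := by
    intro n
    rw [hXsucc n]
    simp only [hnxt, dif_pos (hXinf n)]
    by_cases h : (sideN (X n) (a n)).Infinite
    · exact Or.inl ⟨h, by rw [if_pos h]⟩
    · exact Or.inr ⟨h, by rw [if_neg h]⟩
  have hXsub : ∀ n, X (n+1) ⊆ {y ∈ X n | y ≠ a n} := by
    intro n
    rcases hbranch n with ⟨-, h⟩ | ⟨-, h⟩ <;> rw [h] <;> exact fun y hy => ⟨hy.1, hy.2.2⟩
  have hchain : ∀ m n, m < n → X n ⊆ X (m+1) := by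
    intro m n
    induction n with
    | zero => intro h; omega
    | succ n ih =>
      intro hmn
      rcases Nat.lt_succ_iff_lt_or_eq.mp hmn with h | h
      · exact ((hXsub n).trans (Set.sep_subset _ _)).trans (ih h)
      · rw [h]
  have hXA : ∀ n, X n ⊆ A := by
    intro n
    cases n with
    | zero => exact subset_rfl
    | succ n =>
      induction n with
      | zero => exact (hXsub 0).trans (Set.sep_subset _ _)
      | succ k ih => exact ((hXsub (k+1)).trans (Set.sep_subset _ _)).trans ih
  have hane : ∀ m n, m < n → a n ≠ a m := by
    intro m n hmn
    have : a n ∈ X (m+1) := hchain m n hmn (hamem n)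
    exact (hXsub m this).2
  have hainj : Function.Injective a := by
    intro m n h
    rcases lt_trichotomy m n with hc | hc | hc
    · exact absurd h.symm (hane m n hc)
    · exact hc
    · exact absurd h (hane n m hc)
  set I : Set ℕ := {n | (sideN (X n) (a n)).Infinite} with hI
  by_cases hIinf : I.Infinite
  · refine ⟨a '' I, ?_, ?_, ?_⟩
    · rintro x ⟨n, -, rfl⟩; exact hXA n (hamem n)
    · exact hIinf.image (hainj.injOn)
    · rintro x ⟨m, hm, rfl⟩ y ⟨n, hn, rfl⟩ hadj
      rcases lt_trichotomy m n with hc | hc | hc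
      · have h1 : a n ∈ X (m+1) := hchain m n hc (hamem n)
        rcases hbranch m with ⟨-, heq⟩ | ⟨hne, -⟩
        · rw [heq] at h1; exact h1.2.1 hadj
        · exact hne hm
      · subst hc; exact G.irrefl hadj
      · have h1 : a m ∈ X (n+1) := hchain n m hc (hamem m)
        rcases hbranch n with ⟨-, heq⟩ | ⟨hne, -⟩
        · rw [heq] at h1; exact h1.2.1 hadj.symm
        · exact hne hn
  · exfalso
    have hJ : {n | n ∉ I}.Infinite := by
      have := (Set.not_infinite.mp hIinf).infinite_compl
      simpa [Set.compl_def] using this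
    set p : ℕ → Prop := fun n => n ∉ I with hp
    have hpinf : (setOf p).Infinite := hJ
    set f : ℕ → α := fun k => a (Nat.nth p k) with hf
    refine hG ⟨f, hainj.comp (Nat.nth_injective hpinf), ?_⟩
    intro k
    have h1 : Nat.nth p k < Nat.nth p (k+1) := (Nat.nth_lt_nth hpinf).mpr (by omega)
    have h2 : p (Nat.nth p k) := Nat.nth_mem_of_infinite hpinf k
    have h3 : a (Nat.nth p (k+1)) ∈ X (Nat.nth p k + 1) :=
      hchain _ _ h1 (hamem _)
    rcases hbranch (Nat.nth p k) with ⟨hinf, -⟩ | ⟨-, heq⟩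
    · exact absurd hinf h2
    · rw [heq] at h3
      exact h3.2.1

end Ramsey

end Aux

open Aux Cardinal


universe u

lemma mk_lt_omega2_le (P : Ordinal.{u} → Prop) :
    Cardinal.mk {β : Ordinal.{u} | β < omega2 ∧ P β} ≤ Cardinal.aleph 2 := by
  have h1 : {β : Ordinal.{u} | β < omega2 ∧ P β} ⊆ Set.Iio omega2 := fun β hβ => hβ.1
  have h2 : omega2.{u}.card = Cardinal.aleph 2 := Cardinal.card_ord _
  calc Cardinal.mk {β : Ordinal.{u} | β < omega2 ∧ P β}
      ≤ Cardinal.mk (Set.Iio omega2.{u}) := Cardinal.mk_le_mk_of_subset h1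
    _ = Cardinal.lift.{u+1} omega2.{u}.card := Ordinal.mk_Iio_ordinal omega2
    _ = Cardinal.aleph 2 := by rw [h2]; simp

lemma card_split {S T : Set Ordinal}
    (hST : Cardinal.mk ↥(S ∪ T) = Cardinal.aleph 2)
    (hS : Cardinal.mk S ≤ Cardinal.aleph 2) (hT : Cardinal.mk T ≤ Cardinal.aleph 2) :
    Cardinal.mk S = Cardinal.aleph 2 ∨ Cardinal.mk T = Cardinal.aleph 2 := by
  by_contra hc
  push_neg at hc
  have h1 : Cardinal.mk S < Cardinal.aleph 2 := lt_of_le_of_ne hS hc.1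
  have h2 : Cardinal.mk T < Cardinal.aleph 2 := lt_of_le_of_ne hT hc.2
  have h3 := Cardinal.mk_union_le S T
  rw [hST] at h3
  exact absurd h3 (not_le.mpr (Cardinal.add_lt_of_lt (Cardinal.aleph0_le_aleph 2) h1 h2))

lemma le_aleph_one_of_ne {c : Cardinal} (h : c ≤ Cardinal.aleph 2)
    (h' : c ≠ Cardinal.aleph 2) : c ≤ Cardinal.aleph 1 := by
  have h2 : Cardinal.aleph 2 = Order.succ (Cardinal.aleph 1) := by
    rw [← Cardinal.aleph_succ]; norm_num
  have := lt_of_le_of_ne h h'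
  rw [h2, Order.lt_succ_iff] at this
  exact this

section Main
variable {G : SimpleGraph (Ordinal × ℕ)}

/-- Assembly lemma: a union of infinite column pieces that are pairwise clean. -/
lemma assemble (U' : Set (Ordinal × ℕ)) (T' : Set Ordinal) (Bf : Ordinal → Set (Ordinal × ℕ))
    (h1 : ∀ β ∈ T', Bf β ⊆ column U' β)
    (h2 : ∀ β ∈ T', (Bf β).Infinite)
    (h3 : ∀ β ∈ T', β < omega2)
    (h4 : Cardinal.mk T' = Cardinal.aleph 2)
    (h5 : ∀ β ∈ T', ∀ γ ∈ T', ∀ v ∈ Bf β, ∀ x ∈ Bf γ, ∀ y ∈ Bf γ,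
        G.Adj v x → G.Adj v y → x = y)
    (h6 : ∀ β ∈ T', ∀ x ∈ Bf β, ∀ y ∈ Bf β, ¬ G.Adj x y) :
    ∃ W ⊆ U', FullType W ∧ CleanColumns G W := by
  classical
  set W : Set (Ordinal × ℕ) := ⋃ β ∈ T', Bf β with hW
  have hWsub : W ⊆ U' := by
    refine Set.iUnion₂_subset fun β hβ => (h1 β hβ).trans fun p hp => hp.1
  have hcol : ∀ β ∈ T', column W β = Bf β := by
    intro β hβ
    ext p
    constructor
    · rintro ⟨hpW, hp1⟩
      obtain ⟨γ, hγ, hpB⟩ := Set.mem_iUnion₂.mp hpW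
      have : p.1 = γ := (h1 γ hγ hpB).2
      rw [show β = γ from by rw [← hp1, this]]
      exact hpB
    · intro hp
      exact ⟨Set.mem_iUnion₂.mpr ⟨β, hβ, hp⟩, (h1 β hβ hp).2⟩
  have hcol0 : ∀ β, β ∉ T' → column W β = ∅ := by
    intro β hβ
    ext p
    simp only [Set.mem_empty_iff_false, iff_false]
    rintro ⟨hpW, hp1⟩
    obtain ⟨γ, hγ, hpB⟩ := Set.mem_iUnion₂.mp hpW
    have : p.1 = γ := (h1 γ hγ hpB).2
    rw [← hp1, this] at hβ
    exact hβ hγ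
  have hset : {β : Ordinal | β < omega2 ∧ (column W β).Infinite} = T' := by
    ext β
    constructor
    · rintro ⟨-, hinf⟩
      by_contra hβ
      rw [hcol0 β hβ] at hinf
      exact hinf Set.finite_empty
    · intro hβ
      refine ⟨h3 β hβ, ?_⟩
      rw [hcol β hβ]
      exact h2 β hβ
  refine ⟨W, hWsub, ?_, ?_, ?_, ?_⟩
  · rw [FullType, hset]; exact h4
  · intro β
    by_cases hβ : β ∈ T'
    · right; rw [hcol β hβ]; exact h2 β hβ
    · left; exact hcol0 β hβ
  · intro β x hx y hy
    by_cases hβ : β ∈ T'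
    · rw [hcol β hβ] at hx hy
      exact h6 β hβ x hx y hy
    · rw [hcol0 β hβ] at hx
      exact absurd hx (Set.notMem_empty x)
  · intro v hv β x hx y hy hvx hvy
    obtain ⟨γ, hγ, hvB⟩ := Set.mem_iUnion₂.mp hv
    by_cases hβ : β ∈ T'
    · rw [hcol β hβ] at hx hy
      exact h5 γ hγ β hβ v hvB x hx y hy hvx hvy
    · rw [hcol0 β hβ] at hx
      exact absurd hx (Set.notMem_empty x)

lemma main_ranked (hG : ¬ HasInfinitePath G) :
    ∀ U : Set (Ordinal × ℕ), Ranked G U → FullType U →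
      ∃ W ⊆ U, FullType W ∧ CleanColumns G W := by
  intro U hR
  induction hR with
  | intro U S hS h ih =>
    intro hfull
    classical
    set U' : Set (Ordinal × ℕ) := U \ S with hU'
    have hcolU' : ∀ β, column U' β = column U β \ S := by
      intro β; ext p; simp only [column, Set.mem_diff, Set.mem_setOf_eq, hU']; tauto
    have hcolinf : ∀ β, (column U' β).Infinite ↔ (column U β).Infinite := by
      intro β
      rw [hcolU' β]
      constructor
      · exact fun h => h.mono Set.diff_subset
      · exact fun h => h.diff hS
    -- the type-I predicate
    obtain ⟨P1, hP1⟩ : ∃ P1 : Ordinal → Prop,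
        P1 = fun β => ∃ x ∈ column U' β, ((cmp G U' x) ∩ column U' β).Infinite := ⟨_, rfl⟩
    set T1 : Set Ordinal :=
      {β | β < omega2 ∧ ((column U' β).Infinite ∧ P1 β)} with hT1
    set T2 : Set Ordinal :=
      {β | β < omega2 ∧ ((column U' β).Infinite ∧ ¬ P1 β)} with hT2
    have hTunion : T1 ∪ T2 = {β : Ordinal | β < omega2 ∧ (column U β).Infinite} := by
      ext β
      simp only [hT1, hT2, Set.mem_union, Set.mem_setOf_eq, ← hcolinf β]
      by_cases hp : P1 β <;> tauto
    have hTcard : Cardinal.mk ↥(T1 ∪ T2) = Cardinal.aleph 2 := by rw [hTunion]; exact hfull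
    rcases card_split hTcard (mk_lt_omega2_le _) (mk_lt_omega2_le _) with hc1 | hc2
    · -- Case B : ℵ₂ many type-I columns
      have hcolsubU' : ∀ β, column U' β ⊆ U' := fun β p hp => hp.1
      have hwit : ∀ β ∈ T1, ∃ x ∈ column U' β, ((cmp G U' x) ∩ column U' β).Infinite := by
        intro β hβ
        have hh := hβ.2.2
        rw [hP1] at hh
        exact hh
      set xw : Ordinal → Ordinal × ℕ :=
        fun β => if h : β ∈ T1 then (hwit β h).choose else ((0 : Ordinal), (0 : ℕ)) with hxw
      set Fc : Ordinal → Set (Ordinal × ℕ) := fun β => cmp G U' (xw β) with hFc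
      have hxwmem : ∀ β ∈ T1, xw β ∈ column U' β ∧ (Fc β ∩ column U' β).Infinite := by
        intro β hβ
        simp only [hFc, hxw, dif_pos hβ]
        exact (hwit β hβ).choose_spec
      by_cases hB1 : ∃ β0 ∈ T1,
          Cardinal.mk {β : Ordinal | β < omega2 ∧ (β ∈ T1 ∧ Fc β = Fc β0)} = Cardinal.aleph 2
      · -- one component receives ℵ₂ many columns : use the induction hypothesis
        obtain ⟨β0, hβ0, hfib⟩ := hB1
        have hx0 : xw β0 ∈ U' := hcolsubU' β0 (hxwmem β0 hβ0).1
        have hCfull : FullType (Fc β0) := by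
          rw [FullType]
          apply le_antisymm (mk_lt_omega2_le _)
          rw [← hfib]
          apply Cardinal.mk_le_mk_of_subset
          rintro β ⟨hβω, hβT1, hFcβ⟩
          refine ⟨hβω, ?_⟩
          have hpinf := (hxwmem β hβT1).2
          rw [hFcβ] at hpinf
          refine hpinf.mono ?_
          rintro p ⟨hpC, hpcol⟩
          exact ⟨hpC, hpcol.2⟩
        obtain ⟨W, hWsub, hWfull, hWclean⟩ := ih (xw β0) hx0 hCfull
        exact ⟨W, hWsub.trans (cmp_subset.trans Set.diff_subset), hWfull, hWclean⟩
      · -- ℵ₂ many distinct components : Ramsey in each, assemble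
        push_neg at hB1
        have hfibsmall : ∀ β0 ∈ T1,
            Cardinal.mk {β : Ordinal | β < omega2 ∧ (β ∈ T1 ∧ Fc β = Fc β0)} ≤
              Cardinal.aleph 1 :=
          fun β0 hβ0 => le_aleph_one_of_ne (mk_lt_omega2_le _) (hB1 β0 hβ0)
        set Im : Set (Set (Ordinal × ℕ)) := Fc '' T1 with hIm
        have hImbig : Cardinal.aleph 2 ≤ Cardinal.mk Im := by
          by_contra hlt
          push_neg at hlt
          have hIm1 : Cardinal.mk Im ≤ Cardinal.aleph 1 :=
            le_aleph_one_of_ne (le_of_lt hlt) (ne_of_lt hlt)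
          have hT1cov : T1 ⊆
              ⋃ C ∈ Im, {β : Ordinal | β < omega2 ∧ (β ∈ T1 ∧ Fc β = C)} := by
            intro β hβ
            exact Set.mem_biUnion (Set.mem_image_of_mem _ hβ) ⟨hβ.1, hβ, rfl⟩
          have hsup : (⨆ C : ↥Im,
              Cardinal.mk {β : Ordinal | β < omega2 ∧ (β ∈ T1 ∧ Fc β = ↑C)}) ≤
                Cardinal.aleph 1 := by
            apply ciSup_le'
            rintro ⟨C, hC⟩
            obtain ⟨β0, hβ0, rfl⟩ := hC
            exact hfibsmall β0 hβ0
          have hle : Cardinal.mk T1 ≤ Cardinal.aleph 1 := by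
            calc Cardinal.mk T1
                ≤ Cardinal.mk (⋃ C ∈ Im,
                    {β : Ordinal | β < omega2 ∧ (β ∈ T1 ∧ Fc β = C)}) :=
                  Cardinal.mk_le_mk_of_subset hT1cov
              _ ≤ Cardinal.mk Im * ⨆ C : ↥Im,
                    Cardinal.mk {β : Ordinal | β < omega2 ∧ (β ∈ T1 ∧ Fc β = ↑C)} :=
                  Cardinal.mk_biUnion_le _ _
              _ ≤ Cardinal.aleph 1 * Cardinal.aleph 1 := mul_le_mul' hIm1 hsup
              _ = Cardinal.aleph 1 := Cardinal.mul_eq_self (Cardinal.aleph0_le_aleph 1)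
          rw [hc1] at hle
          exact absurd hle (not_le.mpr (Cardinal.aleph_lt_aleph.mpr one_lt_two))
        have hImle : Cardinal.mk Im ≤ Cardinal.aleph 2 := by
          rw [← hc1]; exact Cardinal.mk_image_le
        have hImcard : Cardinal.mk Im = Cardinal.aleph 2 := le_antisymm hImle hImbig
        have hrepex : ∀ C : ↥Im, ∃ β, β ∈ T1 ∧ Fc β = (C : Set (Ordinal × ℕ)) := by
          rintro ⟨C, hC⟩; exact hC
        set rep : ↥Im → Ordinal := fun C => (hrepex C).choose with hrep
        have hrepspec : ∀ C : ↥Im, rep C ∈ T1 ∧ Fc (rep C) = (C : Set (Ordinal × ℕ)) :=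
          fun C => (hrepex C).choose_spec
        have hrepinj : Function.Injective rep := by
          intro C D hCD
          apply Subtype.ext
          rw [← (hrepspec C).2, ← (hrepspec D).2, hCD]
        set T1' : Set Ordinal := Set.range rep with hT1'
        have hT1'card : Cardinal.mk T1' = Cardinal.aleph 2 := by
          rw [hT1', Cardinal.mk_range_eq rep hrepinj]
          exact hImcard
        have hT1'sub : T1' ⊆ T1 := by rintro β ⟨C, rfl⟩; exact (hrepspec C).1
        have hFcinj : ∀ β ∈ T1', ∀ γ ∈ T1', Fc β = Fc γ → β = γ := by
          rintro β ⟨C, rfl⟩ γ ⟨D, rfl⟩ hβγ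
          have hCD : (C : Set (Ordinal × ℕ)) = D := by
            rw [← (hrepspec C).2, ← (hrepspec D).2, hβγ]
          rw [Subtype.ext hCD]
        have hpieceB : ∀ β ∈ T1', ∃ B, B ⊆ Fc β ∩ column U' β ∧ B.Infinite ∧
            (∀ x ∈ B, ∀ y ∈ B, ¬ G.Adj x y) := by
          intro β hβ
          obtain ⟨B, hBs, hBi, hBind⟩ := exists_indep hG ((hxwmem β (hT1'sub hβ)).2)
          exact ⟨B, hBs, hBi, hBind⟩
        set Bf : Ordinal → Set (Ordinal × ℕ) :=
          fun β => if h : β ∈ T1' then (hpieceB β h).choose else ∅ with hBf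
        have hBf1 : ∀ β ∈ T1', Bf β ⊆ Fc β ∩ column U' β ∧ (Bf β).Infinite ∧
            (∀ x ∈ Bf β, ∀ y ∈ Bf β, ¬ G.Adj x y) := by
          intro β hβ
          simp only [hBf, dif_pos hβ]
          exact (hpieceB β hβ).choose_spec
        have hB5 : ∀ β ∈ T1', ∀ γ ∈ T1', ∀ v ∈ Bf β, ∀ x ∈ Bf γ, ∀ y ∈ Bf γ,
            G.Adj v x → G.Adj v y → x = y := by
          intro β hβ γ hγ v hv x hx y hy hvx hvy
          have hvF : v ∈ Fc β := ((hBf1 β hβ).1 hv).1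
          have hxF : x ∈ Fc γ := ((hBf1 γ hγ).1 hx).1
          have hvU : v ∈ U' := cmp_subset hvF
          have hxU : x ∈ U' := cmp_subset hxF
          have h1 : cmp G U' v = Fc β := cmp_eq_of_mem hvF
          have h2 : cmp G U' x = Fc γ := cmp_eq_of_mem hxF
          have h3 : x ∈ cmp G U' v := adj_mem_cmp hvU hxU hvx
          rw [h1] at h3
          have h4 : cmp G U' x = Fc β := cmp_eq_of_mem h3
          have hβγ : β = γ := hFcinj β hβ γ hγ (by rw [← h4, h2])
          subst hβγ
          exact absurd hvx ((hBf1 β hβ).2.2 v hv x hx)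
        have hB6 : ∀ β ∈ T1', ∀ x ∈ Bf β, ∀ y ∈ Bf β, ¬ G.Adj x y :=
          fun β hβ => (hBf1 β hβ).2.2
        obtain ⟨W, hWU', hWfull, hWclean⟩ := assemble U' T1' Bf
          (fun β hβ => ((hBf1 β hβ).1).trans Set.inter_subset_right)
          (fun β hβ => (hBf1 β hβ).2.1)
          (fun β hβ => (hT1'sub hβ).1) hT1'card hB5 hB6
        exact ⟨W, hWU'.trans Set.diff_subset, hWfull, hWclean⟩
    · -- Case A : ℵ₂ many type-II columns, transversal construction
      have hcolsubU' : ∀ β, column U' β ⊆ U' := fun β p hp => hp.1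
      have hpiece : ∀ β ∈ T2, ∃ B, B ⊆ column U' β ∧ B.Infinite ∧
          (∀ x ∈ B, ∀ y ∈ B, cmp G U' x = cmp G U' y → x = y) := by
        intro β hβ
        obtain ⟨hβω, hinf, hnp⟩ := hβ
        simp only [hP1] at hnp
        push_neg at hnp
        have hfin : ∀ x ∈ column U' β, ((cmp G U' x) ∩ column U' β).Finite := by
          intro x hx
          exact hnp x hx
        set R : Set (Set (Ordinal × ℕ)) := (fun p => cmp G U' p) '' (column U' β) with hR
        have hRne : ∀ C : ↥R, ((C : Set (Ordinal × ℕ)) ∩ column U' β).Nonempty := by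
          rintro ⟨C, hC⟩
          obtain ⟨p, hp, rfl⟩ := hC
          exact ⟨p, mem_cmp_self (hcolsubU' β hp), hp⟩
        have hRinf : R.Infinite := by
          by_contra hfinR
          rw [Set.not_infinite] at hfinR
          have hcov : column U' β ⊆ ⋃ C ∈ R, (C ∩ column U' β) := by
            intro p hp
            exact Set.mem_biUnion (Set.mem_image_of_mem _ hp)
              ⟨mem_cmp_self (hcolsubU' β hp), hp⟩
          refine hinf (Set.Finite.subset (Set.Finite.biUnion hfinR ?_) hcov)
          rintro C ⟨p, hp, rfl⟩
          exact hfin p hp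
        haveI : Infinite ↥R := Set.infinite_coe_iff.mpr hRinf
        set g : ↥R → (Ordinal × ℕ) := fun C => (hRne C).choose with hg
        have hgmem : ∀ C : ↥R, g C ∈ (C : Set (Ordinal × ℕ)) ∩ column U' β :=
          fun C => (hRne C).choose_spec
        have hcmpg : ∀ C : ↥R, cmp G U' (g C) = (C : Set (Ordinal × ℕ)) := by
          rintro ⟨C, hC⟩
          obtain ⟨p, hp, hCp⟩ := id hC
          have hCp' : cmp G U' p = C := hCp
          have hm' : g ⟨C, hC⟩ ∈ cmp G U' p := by
            rw [hCp']; exact (hgmem ⟨C, hC⟩).1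
          exact (cmp_eq_of_mem hm').trans hCp'
        have hginj : Function.Injective g := by
          intro C D hCD
          have : (C : Set (Ordinal × ℕ)) = D := by
            rw [← hcmpg C, ← hcmpg D, hCD]
          exact Subtype.ext this
        refine ⟨Set.range g, ?_, ?_, ?_⟩
        · rintro x ⟨C, rfl⟩; exact (hgmem C).2
        · exact Set.infinite_range_of_injective hginj
        · rintro x ⟨C, rfl⟩ y ⟨D, rfl⟩ hxy
          have : (C : Set (Ordinal × ℕ)) = D := by rw [← hcmpg C, ← hcmpg D, hxy]
          rw [Subtype.ext this]
      set Bf : Ordinal → Set (Ordinal × ℕ) :=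
        fun β => if h : β ∈ T2 then (hpiece β h).choose else ∅ with hBf
      have hBf1 : ∀ β ∈ T2, Bf β ⊆ column U' β ∧ (Bf β).Infinite ∧
          (∀ x ∈ Bf β, ∀ y ∈ Bf β, cmp G U' x = cmp G U' y → x = y) := by
        intro β hβ
        simp only [hBf, dif_pos hβ]
        exact (hpiece β hβ).choose_spec
      have hA5 : ∀ β ∈ T2, ∀ γ ∈ T2, ∀ v ∈ Bf β, ∀ x ∈ Bf γ, ∀ y ∈ Bf γ,
          G.Adj v x → G.Adj v y → x = y := by
        intro β hβ γ hγ v hv x hx y hy hvx hvy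
        have hvU : v ∈ U' := hcolsubU' β ((hBf1 β hβ).1 hv)
        have hxU : x ∈ U' := hcolsubU' γ ((hBf1 γ hγ).1 hx)
        have hyU : y ∈ U' := hcolsubU' γ ((hBf1 γ hγ).1 hy)
        have hx1 : cmp G U' x = cmp G U' v := cmp_eq_of_mem (adj_mem_cmp hvU hxU hvx)
        have hy1 : cmp G U' y = cmp G U' v := cmp_eq_of_mem (adj_mem_cmp hvU hyU hvy)
        exact (hBf1 γ hγ).2.2 x hx y hy (hx1.trans hy1.symm)
      have hA6 : ∀ β ∈ T2, ∀ x ∈ Bf β, ∀ y ∈ Bf β, ¬ G.Adj x y := by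
        intro β hβ x hx y hy hxy
        have hxU : x ∈ U' := hcolsubU' β ((hBf1 β hβ).1 hx)
        have hyU : y ∈ U' := hcolsubU' β ((hBf1 β hβ).1 hy)
        have hy1 : cmp G U' y = cmp G U' x := cmp_eq_of_mem (adj_mem_cmp hxU hyU hxy)
        have := (hBf1 β hβ).2.2 x hx y hy hy1.symm
        rw [this] at hxy
        exact G.irrefl hxy
      obtain ⟨W, hWU', hWfull, hWclean⟩ := assemble U' T2 Bf
        (fun β hβ => (hBf1 β hβ).1) (fun β hβ => (hBf1 β hβ).2.1)
        (fun β hβ => hβ.1) hc2 hA5 hA6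
      exact ⟨W, hWU'.trans Set.diff_subset, hWfull, hWclean⟩

end Main

/-- If `V ⊆ ω₂ × ω` is of full type `ω*·ω₂` and `G = (V, E)` has no infinite path, then
there is `W ⊆ V` of full type `ω*·ω₂` such that the induced subgraph on `W` has clean
columns. -/
theorem stmt7
    (G : SimpleGraph (Ordinal × ℕ)) (V : Set (Ordinal × ℕ))
    (hV : ∀ p ∈ V, p.1 < omega2)
    (hfull : FullType V)
    (hE : ∀ x y : Ordinal × ℕ, G.Adj x y → x ∈ V ∧ y ∈ V)
    (hG : ¬ HasInfinitePath G) :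
    ∃ W ⊆ V, FullType W ∧ CleanColumns G W :=
  main_ranked hG V (ranked_of_noray hG V) hfull
end

section
/- Assume the continuum hypothesis 2^{ℵ₀} = ℵ₁. Let H = (V, E) be a graph with V ⊆ ω₂ × ω and with no infinite path, and let (p_α : α < ω₂) be a family of countable independent subsets of V. Then there exist a club C ⊆ ω₂ and a function f : ω₂ → ω₂ which is regressive on C ∩ S^{ω₂}_{ω₁} such that for all α, β ∈ C ∩ S^{ω₂}_{ω₁}, if f(α) = f(β) then p_α ∪ p_β is independent. -/
open Cardinal Set

universe u v

noncomputable def omega1o : Ordinal.{u} := (Cardinal.aleph 1).ord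

noncomputable def bset (A : Set (Ordinal.{u} × ℕ)) : Ordinal.{u} :=
  sInf {o | ∀ z ∈ A, z.1 < o}

lemma bset_spec {A : Set (Ordinal.{u} × ℕ)} (h : ∃ o, ∀ z ∈ A, z.1 < o) :
    ∀ z ∈ A, z.1 < bset A := csInf_mem h

lemma bset_le {A : Set (Ordinal.{u} × ℕ)} {o : Ordinal.{u}} (h : ∀ z ∈ A, z.1 < o) :
    bset A ≤ o := csInf_le' h

lemma natSup_lt {o : Ordinal.{u}} (ho : ℵ₀ < o.cof) {f : ℕ → Ordinal.{u}}
    (hf : ∀ n, f n < o) : iSup f < o := by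
  apply Ordinal.iSup_lt_ord_lift _ hf
  simpa using ho

lemma bound_lemma {o : Ordinal.{u}} (ho : ℵ₀ < o.cof) {A : Set (Ordinal.{u} × ℕ)}
    (hA : A.Countable) (hb : ∀ z ∈ A, z.1 < o) : ∃ γ, γ < o ∧ ∀ z ∈ A, z.1 < γ := by
  have holim : Order.IsSuccLimit o := by
    rw [← Ordinal.aleph0_le_cof]; exact ho.le
  rcases A.eq_empty_or_nonempty with h | h
  · exact ⟨0, holim.pos, by simp [h]⟩
  · obtain ⟨g, hg⟩ := hA.exists_eq_range h
    refine ⟨iSup (fun n : ℕ => (g n).1 + 1), ?_, ?_⟩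
    · apply natSup_lt ho
      intro n
      have hgn : g n ∈ A := by rw [hg]; exact Set.mem_range_self n
      rw [Ordinal.add_one_eq_succ]
      exact holim.succ_lt (hb _ hgn)
    · intro z hz
      rw [hg] at hz
      obtain ⟨n, rfl⟩ := hz
      have h1 : (g n).1 < (g n).1 + 1 := by
        rw [Ordinal.add_one_eq_succ]; exact Order.lt_succ _
      exact lt_of_lt_of_le h1 (Ordinal.le_iSup (fun n : ℕ => (g n).1 + 1) n)


lemma aux_a12b : (Cardinal.aleph 1 : Cardinal.{u}) < Cardinal.aleph 2 :=
  Cardinal.aleph_lt_aleph.mpr (by exact_mod_cast (by norm_num : (1:ℕ) < 2))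

lemma aux_add_lt : ∀ γ < omega2.{u}, γ + omega1o.{u} < omega2.{u} := by
  intro γ hγ
  rw [omega2, Cardinal.lt_ord, Ordinal.card_add]
  rw [omega2, Cardinal.lt_ord] at hγ
  exact Cardinal.add_lt_of_lt (Cardinal.aleph0_le_aleph 2) hγ
    (by rw [omega1o, Cardinal.card_ord]; exact aux_a12b)

lemma aux_omega2_limit : Order.IsSuccLimit (omega2.{u}) :=
  Cardinal.isSuccLimit_ord (Cardinal.aleph0_le_aleph 2)

lemma aux_reg : (Cardinal.aleph 2 : Cardinal.{u}).IsRegular := by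
  have h2 : (Cardinal.aleph 2 : Cardinal.{u}) = Cardinal.aleph (Order.succ 1) := by
    rw [← Ordinal.add_one_eq_succ]; norm_num
  rw [h2]; exact Cardinal.isRegular_aleph_succ 1

lemma aux_cof : (omega2.{u}).cof = Cardinal.aleph 2 := aux_reg.cof_eq

lemma aux_a12 : (Cardinal.aleph 1 : Cardinal.{u}) < Cardinal.aleph 2 :=
  Cardinal.aleph_lt_aleph.mpr (by exact_mod_cast (by norm_num : (1:ℕ) < 2))

lemma aux_a02 : (ℵ₀ : Cardinal.{u}) < omega2.{u}.cof := by
  rw [aux_cof]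
  exact Cardinal.aleph0_lt_aleph_one.trans aux_a12

lemma aux_a0cof1 {δ : Ordinal.{u}} (h : δ.cof = Cardinal.aleph 1) : ℵ₀ < δ.cof := by
  rw [h]; exact Cardinal.aleph0_lt_aleph_one

lemma aux_o1pos : (0:Ordinal.{u}) < omega1o := by
  rw [omega1o, Cardinal.lt_ord]; simp [Cardinal.aleph_pos]

def GoodO (O : Set (Ordinal.{u} × ℕ) × Set (Ordinal.{u} × ℕ)) : Prop :=
  O.1.Countable ∧ O.2.Countable ∧ (∀ z ∈ O.1, z.1 < omega2.{u}) ∧ (∀ z ∈ O.2, z.1 < omega2.{u})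

lemma exists_code (hCH : (2 : Cardinal.{u}) ^ Cardinal.aleph 0 = Cardinal.aleph 1) :
    ∃ code : Set (Ordinal.{u} × ℕ) × Set (Ordinal.{u} × ℕ) → Ordinal.{u},
      (∀ O O', GoodO O → GoodO O' → code O = code O' → O = O') ∧
      (∀ O δ, GoodO O → δ.cof = Cardinal.aleph 1 → (∀ γ < δ, γ + omega1o.{u} < δ) →
        (∀ z ∈ O.1, z.1 < δ) → (∀ z ∈ O.2, z.1 < δ) → code O < δ) := by
  classical
  have hCH' : (2 : Cardinal.{u}) ^ (ℵ₀ : Cardinal.{u}) = Cardinal.aleph 1 := by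
    rwa [Cardinal.aleph_zero] at hCH
  have hpow : (Cardinal.aleph 1 : Cardinal.{u}) ^ (ℵ₀ : Cardinal.{u}) = Cardinal.aleph 1 := by
    rw [← hCH', ← Cardinal.power_mul, Cardinal.aleph0_mul_aleph0]
  set m : (Set (Ordinal.{u} × ℕ) × Set (Ordinal.{u} × ℕ)) → Ordinal.{u} :=
    fun O => omega1o * (bset (O.1 ∪ O.2) / omega1o) with hm
  have hble : ∀ O, m O ≤ bset (O.1 ∪ O.2) := fun O => Ordinal.mul_div_le _ _
  have hblt : ∀ O, bset (O.1 ∪ O.2) < m O + omega1o := by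
    intro O
    conv_lhs => rw [← Ordinal.div_add_mod (bset (O.1 ∪ O.2)) omega1o]
    exact add_lt_add_right (Ordinal.mod_lt _ aux_o1pos.ne') _
  have hGb : ∀ O, GoodO O → (∃ o, ∀ z ∈ O.1 ∪ O.2, z.1 < o) := by
    intro O hO
    exact ⟨omega2.{u}, fun z hz => hz.elim (hO.2.2.1 z) (hO.2.2.2 z)⟩
  have hGm : ∀ O, GoodO O → bset (O.1 ∪ O.2) < omega2.{u} := by
    intro O hO
    obtain ⟨γ, hγ, hγb⟩ := bound_lemma aux_a02 (hO.1.union hO.2.1)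
      (fun z hz => hz.elim (hO.2.2.1 z) (hO.2.2.2 z))
    exact (bset_le hγb).trans_lt hγ
  -- block cardinality
  have hblock : ∀ μ : Ordinal.{u}, μ < omega2.{u} →
      Nonempty ({O : Set (Ordinal.{u} × ℕ) × Set (Ordinal.{u} × ℕ) // GoodO O ∧ m O = μ} ↪
        (Set.Iio omega1o.{u})) := by
    intro μ hμ
    set B : Set (Ordinal.{u} × ℕ) := {z | z.1 < μ + omega1o} with hB
    have hcard : (μ + omega1o.{u}).card ≤ Cardinal.aleph 1 := by
      rw [Ordinal.card_add]
      have h1 : μ.card ≤ Cardinal.aleph 1 := by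
        rw [omega2, Cardinal.lt_ord] at hμ
        have h2 : (Cardinal.aleph 2 : Cardinal.{u}) = Order.succ (Cardinal.aleph 1) := by
          rw [← Cardinal.aleph_succ]
          congr 1
          rw [← Ordinal.add_one_eq_succ]; norm_num
        rw [h2, Order.lt_succ_iff] at hμ
        exact hμ
      have h2 : (omega1o.{u}).card = Cardinal.aleph 1 := by
        rw [omega1o, Cardinal.card_ord]
      rw [h2]
      exact Cardinal.add_le_of_le (Cardinal.aleph0_le_aleph 1) h1 le_rfl
    have hBcard : #(↥B) ≤ Cardinal.lift.{u+1, u} (Cardinal.aleph 1) := by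
      let e : ↥B → (Set.Iio (μ + omega1o.{u})) × ℕ := fun z => (⟨z.1.1, z.2⟩, z.1.2)
      have hinj : Function.Injective e := by
        intro a b hab
        apply Subtype.ext
        exact Prod.ext (congrArg (fun q => q.1.1) hab) (congrArg (fun q => q.2) hab)
      have h1 := Cardinal.mk_le_of_injective hinj
      rw [Cardinal.mk_prod, Ordinal.mk_Iio_ordinal, Cardinal.lift_id', Cardinal.mk_nat,
        Cardinal.lift_aleph0] at h1
      calc #(↥B) ≤ Cardinal.lift.{u+1, u} (μ + omega1o.{u}).card * ℵ₀ := h1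
        _ ≤ Cardinal.lift.{u+1, u} (Cardinal.aleph 1) * Cardinal.lift.{u+1, u} (Cardinal.aleph 1) := by
            apply mul_le_mul'
            · exact Cardinal.lift_le.mpr hcard
            · rw [← Cardinal.lift_aleph0.{u+1, u}]
              exact Cardinal.lift_le.mpr (Cardinal.aleph0_le_aleph 1)
        _ = Cardinal.lift.{u+1, u} (Cardinal.aleph 1) := by
            rw [← Cardinal.lift_mul, Cardinal.mul_eq_self (Cardinal.aleph0_le_aleph 1)]
    -- countable subsets of B
    have hCS : #({S : Set (Ordinal.{u} × ℕ) // S.Countable ∧ S ⊆ B}) ≤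
        Cardinal.lift.{u+1, u} (Cardinal.aleph 1) := by
      set dec : (ℕ → Option ↥B) → Set (Ordinal.{u} × ℕ) :=
        fun g => {z | ∃ h : z ∈ B, ∃ n, g n = some ⟨z, h⟩} with hdec
      have hdecC : ∀ g, (dec g).Countable ∧ dec g ⊆ B := by
        intro g
        constructor
        · have hsub : dec g ⊆ ⋃ n : ℕ, {z | ∃ h : z ∈ B, g n = some ⟨z, h⟩} := by
            rintro z ⟨h, n, e⟩
            exact Set.mem_iUnion.mpr ⟨n, h, e⟩
          apply Set.Countable.mono hsub
          apply Set.countable_iUnion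
          intro n
          apply Set.Subsingleton.countable
          rintro z ⟨hz, ez⟩ z' ⟨hz', ez'⟩
          have : some (⟨z, hz⟩ : ↥B) = some ⟨z', hz'⟩ := by rw [← ez, ← ez']
          exact congrArg Subtype.val (Option.some_injective _ this)
        · rintro z ⟨h, _⟩; exact h
      have hsurj : Function.Surjective (fun g => (⟨dec g, hdecC g⟩ :
          {S : Set (Ordinal.{u} × ℕ) // S.Countable ∧ S ⊆ B})) := by
        rintro ⟨S, hSc, hSB⟩
        rcases S.eq_empty_or_nonempty with rfl | hne
        · refine ⟨fun _ => none, Subtype.ext ?_⟩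
          ext z
          simp only [hdec, Set.mem_setOf_eq, Set.mem_empty_iff_false, iff_false]
          rintro ⟨h, n, e⟩
          exact nomatch e
        · obtain ⟨gf, hgf⟩ := hSc.exists_eq_range hne
          refine ⟨fun n => if h : gf n ∈ B then some ⟨gf n, h⟩ else none, Subtype.ext ?_⟩
          ext z
          simp only [hdec, Set.mem_setOf_eq]
          constructor
          · rintro ⟨h, n, e⟩
            by_cases hb : gf n ∈ B
            · rw [dif_pos hb] at e
              have : gf n = z := congrArg Subtype.val (Option.some_injective _ e)
              rw [hgf, ← this]
              exact Set.mem_range_self n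
            · rw [dif_neg hb] at e
              exact absurd e (fun h => nomatch h)
          · intro hz
            have hzB : z ∈ B := hSB hz
            have : z ∈ Set.range gf := by rwa [← hgf]
            obtain ⟨n, rfl⟩ := this
            exact ⟨hzB, n, dif_pos hzB⟩
      have h1 := Cardinal.mk_le_of_surjective hsurj
      have h2 : #(ℕ → Option ↥B) ≤ Cardinal.lift.{u+1, u} (Cardinal.aleph 1) := by
        rw [Cardinal.mk_arrow, Cardinal.lift_id', Cardinal.mk_nat, Cardinal.lift_aleph0]
        have h3 : #(Option ↥B) ≤ Cardinal.lift.{u+1, u} (Cardinal.aleph 1) := by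
          rw [Cardinal.mk_option]
          calc #(↥B) + 1 ≤ Cardinal.lift.{u+1, u} (Cardinal.aleph 1) + 1 :=
                add_le_add_left hBcard 1
            _ = Cardinal.lift.{u+1, u} (Cardinal.aleph 1) := by
                apply Cardinal.add_one_eq
                rw [← Cardinal.lift_aleph0.{u+1, u}]
                exact Cardinal.lift_le.mpr (Cardinal.aleph0_le_aleph 1)
        calc #(Option ↥B) ^ (ℵ₀ : Cardinal.{u+1})
            ≤ (Cardinal.lift.{u+1, u} (Cardinal.aleph 1)) ^ (ℵ₀ : Cardinal.{u+1}) :=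
              Cardinal.power_le_power_right h3
          _ = Cardinal.lift.{u+1, u} (Cardinal.aleph 1) := by
              rw [← Cardinal.lift_aleph0.{u+1, u}, ← Cardinal.lift_power, hpow]
      exact h1.trans h2
    -- pairs
    have hpair : #({O : Set (Ordinal.{u} × ℕ) × Set (Ordinal.{u} × ℕ) // GoodO O ∧ m O = μ}) ≤
        Cardinal.lift.{u+1, u} (Cardinal.aleph 1) := by
      have hsubB : ∀ (O : Set (Ordinal.{u} × ℕ) × Set (Ordinal.{u} × ℕ)),
          GoodO O → m O = μ → O.1 ⊆ B ∧ O.2 ⊆ B := by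
        intro O hO hμO
        have hb1 : ∀ z ∈ O.1 ∪ O.2, z.1 < μ + omega1o := by
          intro z hz
          have := bset_spec (hGb O hO) z hz
          have h2 := hblt O
          rw [hμO] at h2
          exact this.trans h2
        exact ⟨fun z hz => hb1 z (Set.mem_union_left _ hz),
          fun z hz => hb1 z (Set.mem_union_right _ hz)⟩
      let e : {O : Set (Ordinal.{u} × ℕ) × Set (Ordinal.{u} × ℕ) // GoodO O ∧ m O = μ} →
          {S : Set (Ordinal.{u} × ℕ) // S.Countable ∧ S ⊆ B} ×
          {S : Set (Ordinal.{u} × ℕ) // S.Countable ∧ S ⊆ B} :=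
        fun O => (⟨O.1.1, O.2.1.1, (hsubB O.1 O.2.1 O.2.2).1⟩,
          ⟨O.1.2, O.2.1.2.1, (hsubB O.1 O.2.1 O.2.2).2⟩)
      have hinj : Function.Injective e := by
        intro a b hab
        apply Subtype.ext
        apply Prod.ext
        · exact congrArg (fun q => q.1.1) hab
        · exact congrArg (fun q => q.2.1) hab
      calc #({O : Set (Ordinal.{u} × ℕ) × Set (Ordinal.{u} × ℕ) // GoodO O ∧ m O = μ})
          ≤ #({S : Set (Ordinal.{u} × ℕ) // S.Countable ∧ S ⊆ B} ×
              {S : Set (Ordinal.{u} × ℕ) // S.Countable ∧ S ⊆ B}) :=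
            Cardinal.mk_le_of_injective hinj
        _ ≤ Cardinal.lift.{u+1, u} (Cardinal.aleph 1) := by
            rw [Cardinal.mk_prod, Cardinal.lift_id]
            calc #({S : Set (Ordinal.{u} × ℕ) // S.Countable ∧ S ⊆ B}) *
                #({S : Set (Ordinal.{u} × ℕ) // S.Countable ∧ S ⊆ B})
                ≤ Cardinal.lift.{u+1, u} (Cardinal.aleph 1) *
                  Cardinal.lift.{u+1, u} (Cardinal.aleph 1) := mul_le_mul' hCS hCS
              _ = Cardinal.lift.{u+1, u} (Cardinal.aleph 1) := by
                  rw [← Cardinal.lift_mul, Cardinal.mul_eq_self (Cardinal.aleph0_le_aleph 1)]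
    have hIio : #(Set.Iio omega1o.{u}) = Cardinal.lift.{u+1, u} (Cardinal.aleph 1) := by
      rw [Ordinal.mk_Iio_ordinal, omega1o, Cardinal.card_ord]
    rw [← hIio] at hpair
    exact Cardinal.le_def _ _ |>.mp hpair
  -- choose embeddings
  have EM : ∀ μ : Ordinal.{u}, μ < omega2.{u} →
      ({O : Set (Ordinal.{u} × ℕ) × Set (Ordinal.{u} × ℕ) // GoodO O ∧ m O = μ} ↪
        (Set.Iio omega1o.{u})) := fun μ hμ => (hblock μ hμ).some
  have hmlt : ∀ O, GoodO O → m O < omega2.{u} := fun O hO => (hble O).trans_lt (hGm O hO)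
  refine ⟨fun O => if h : GoodO O then
    m O + (EM (m O) (hmlt O h) ⟨O, h, rfl⟩).1 else 0, ?_, ?_⟩
  · -- injectivity
    intro O O' hO hO' heq
    dsimp only at heq
    rw [dif_pos hO, dif_pos hO'] at heq
    -- first, m O = m O'
    have hkey : ∀ (P Q : Set (Ordinal.{u} × ℕ) × Set (Ordinal.{u} × ℕ))
        (hP : GoodO P) (hQ : GoodO Q), m P < m Q →
        m P + (EM (m P) (hmlt P hP) ⟨P, hP, rfl⟩).1 ≠
        m Q + (EM (m Q) (hmlt Q hQ) ⟨Q, hQ, rfl⟩).1 := by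
      intro P Q hP hQ hlt
      apply ne_of_lt
      have h1 : m P + (EM (m P) (hmlt P hP) ⟨P, hP, rfl⟩).1 < m P + omega1o :=
        add_lt_add_right (EM (m P) (hmlt P hP) ⟨P, hP, rfl⟩).2 _
      have hdvd : ∀ R, m R = omega1o * (bset (R.1 ∪ R.2) / omega1o) := fun R => rfl
      have h2 : m P + omega1o ≤ m Q := by
        rw [hdvd P, hdvd Q] at hlt ⊢
        have hqlt : bset (P.1 ∪ P.2) / omega1o < bset (Q.1 ∪ Q.2) / omega1o :=
          lt_of_mul_lt_mul_left hlt aux_o1pos.le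
        calc omega1o * (bset (P.1 ∪ P.2) / omega1o) + omega1o
            = omega1o * Order.succ (bset (P.1 ∪ P.2) / omega1o) := (Ordinal.mul_succ _ _).symm
          _ ≤ omega1o * (bset (Q.1 ∪ Q.2) / omega1o) :=
              mul_le_mul_right (Order.succ_le_of_lt hqlt) _
      exact h1.trans_le (h2.trans le_self_add)
    have hmm : m O = m O' := by
      rcases lt_trichotomy (m O) (m O') with h | h | h
      · exact absurd heq (hkey O O' hO hO' h)
      · exact h
      · exact absurd heq.symm (hkey O' O hO' hO h)
    have hcongr : ∀ (μ₁ μ₂ : Ordinal.{u}) (h₁ : μ₁ < omega2.{u}) (h₂ : μ₂ < omega2.{u})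
        (hμ : μ₁ = μ₂) (X : Set (Ordinal.{u} × ℕ) × Set (Ordinal.{u} × ℕ))
        (hX1 : GoodO X ∧ m X = μ₁) (hX2 : GoodO X ∧ m X = μ₂),
        ((EM μ₁ h₁ ⟨X, hX1⟩ : Set.Iio omega1o.{u}) : Ordinal.{u}) =
          ((EM μ₂ h₂ ⟨X, hX2⟩ : Set.Iio omega1o.{u}) : Ordinal.{u}) := by
      intro μ₁ μ₂ h₁ h₂ hμ X hX1 hX2
      subst hμ
      rfl
    set a : Ordinal.{u} := ((EM (m O) (hmlt O hO) ⟨O, hO, rfl⟩ : Set.Iio omega1o.{u}) :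
      Ordinal.{u}) with ha
    set b2 : Ordinal.{u} := ((EM (m O) (hmlt O hO) ⟨O', hO', hmm.symm⟩ :
      Set.Iio omega1o.{u}) : Ordinal.{u}) with hb2
    have hb : ((EM (m O') (hmlt O' hO') ⟨O', hO', rfl⟩ : Set.Iio omega1o.{u}) :
        Ordinal.{u}) = b2 :=
      hcongr (m O') (m O) (hmlt O' hO') (hmlt O hO) hmm.symm O' ⟨hO', rfl⟩ ⟨hO', hmm.symm⟩
    have heq2 : m O + a = m O' + b2 := by rw [← hb]; exact heq
    have heq3 : m O + a = m O + b2 := heq2.trans (by rw [hmm])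
    have hab : a = b2 := add_left_cancel_iff.mp heq3
    have hsub : (⟨O, hO, rfl⟩ : {X // GoodO X ∧ m X = m O}) = ⟨O', hO', hmm.symm⟩ :=
      (EM (m O) (hmlt O hO)).injective (Subtype.ext hab)
    exact congrArg Subtype.val hsub
  · -- code_lt
    intro O δ hO hcof hcl h1 h2
    dsimp only
    rw [dif_pos hO]
    have hbδ : bset (O.1 ∪ O.2) < δ := by
      obtain ⟨γ, hγ, hγb⟩ := bound_lemma (aux_a0cof1 hcof) (hO.1.union hO.2.1)
        (fun z hz => hz.elim (h1 z) (h2 z))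
      exact (bset_le hγb).trans_lt hγ
    have hmδ : m O < δ := (hble O).trans_lt hbδ
    calc m O + (EM (m O) (hmlt O hO) ⟨O, hO, rfl⟩).1
        < m O + omega1o := add_lt_add_right (EM (m O) (hmlt O hO) ⟨O, hO, rfl⟩).2 _
      _ < δ := hcl _ hmδ

lemma exists_finite_deg (G : SimpleGraph (Ordinal.{u} × ℕ)) (hG : ¬ HasInfinitePath G)
    (W : Set (Ordinal.{u} × ℕ)) (hW : W.Nonempty) :
    ∃ v ∈ W, {w | w ∈ W ∧ G.Adj v w}.Finite := by
  by_contra hcon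
  push_neg at hcon
  apply hG
  classical
  let VT := Ordinal.{u} × ℕ
  let P := {vl : VT × List VT // (vl.1 :: vl.2).Chain' G.Adj ∧ (vl.1 :: vl.2).Nodup ∧
    ∀ x ∈ vl.1 :: vl.2, x ∈ W}
  have step : ∀ q : P, ∃ w : VT, (w ∈ W ∧ G.Adj q.1.1 w) ∧ w ∉ q.1.1 :: q.1.2 := by
    intro q
    have hv : q.1.1 ∈ W := q.2.2.2 _ (List.mem_cons_self)
    have hinf : {w | w ∈ W ∧ G.Adj q.1.1 w}.Infinite := hcon _ hv
    have := (hinf.diff (List.finite_toSet (q.1.1 :: q.1.2))).nonempty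
    obtain ⟨w, hw1, hw2⟩ := this
    exact ⟨w, hw1, hw2⟩
  choose wf hw1 hw3 using step
  have hadj : ∀ q : P, G.Adj (wf q) q.1.1 := fun q => (hw1 q).2.symm
  let next : P → P := fun q => ⟨(wf q, q.1.1 :: q.1.2), by
      refine List.isChain_cons_cons.mpr ⟨hadj q, q.2.1⟩, by
      exact List.nodup_cons.mpr ⟨hw3 q, q.2.2.1⟩, by
      intro x hx
      rcases List.mem_cons.mp hx with rfl | hx
      · exact (hw1 q).1
      · exact q.2.2.2 _ hx⟩
  obtain ⟨v0, hv0⟩ := hW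
  let q0 : P := ⟨(v0, []), by exact List.isChain_singleton _, by simp, by simpa using hv0⟩
  let Q : ℕ → P := fun n => next^[n] q0
  have hQs : ∀ n, Q (n + 1) = next (Q n) := fun n => Function.iterate_succ_apply' next n q0
  let f : ℕ → VT := fun n => (Q n).1.1
  have hQ1 : ∀ n, (Q (n+1)).1.1 = wf (Q n) := by intro n; rw [hQs n]
  have hQ2 : ∀ n, (Q (n+1)).1.2 = (Q n).1.1 :: (Q n).1.2 := by intro n; rw [hQs n]
  have hmono : ∀ n m, n ≤ m → ∀ x, x ∈ (Q n).1.1 :: (Q n).1.2 → x ∈ (Q m).1.1 :: (Q m).1.2 := by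
    intro n m hnm
    induction m with
    | zero =>
      obtain rfl := Nat.le_zero.mp hnm
      exact fun x hx => hx
    | succ m ih =>
      rcases Nat.lt_or_ge n (m+1) with h | h
      · intro x hx
        rw [hQ1 m, hQ2 m]
        exact List.mem_cons_of_mem _ (ih (Nat.lt_succ_iff.mp h) x hx)
      · obtain rfl := Nat.le_antisymm hnm h
        exact fun x hx => hx
  have hfresh : ∀ n, f (n+1) ∉ (Q n).1.1 :: (Q n).1.2 := by
    intro n
    have h1 : f (n+1) = wf (Q n) := hQ1 n
    rw [h1]; exact hw3 (Q n)
  have hmem : ∀ n, f n ∈ (Q n).1.1 :: (Q n).1.2 := fun n => List.mem_cons_self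
  have hne : ∀ n m, n < m → f n ≠ f m := by
    intro n m hnm
    obtain ⟨m', rfl⟩ : ∃ m', m = m' + 1 := ⟨m - 1, by omega⟩
    intro he
    exact hfresh m' (he ▸ hmono n m' (by omega) _ (hmem n))
  refine ⟨f, ?_, ?_⟩
  · intro a b hab
    by_contra hne'
    rcases Nat.lt_or_ge a b with h | h
    · exact hne a b h hab
    · exact hne b a (by omega) hab.symm
  · intro n
    have h1 : f (n+1) = wf (Q n) := hQ1 n
    rw [h1]
    exact (hadj (Q n)).symm

open Classical in
noncomputable def pickAux (G : SimpleGraph (Ordinal.{u} × ℕ)) (V : Set (Ordinal.{u} × ℕ))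
    (hG : ¬ HasInfinitePath G) : Ordinal.{u} → Ordinal.{u} × ℕ :=
  Ordinal.lt_wf.fix fun η IH =>
    if hR : {v | v ∈ V ∧ ∀ ζ (h : ζ < η), IH ζ h ≠ v}.Nonempty then
      (exists_finite_deg G hG _ hR).choose
    else (0, 0)

def Rem (G : SimpleGraph (Ordinal.{u} × ℕ)) (V : Set (Ordinal.{u} × ℕ))
    (hG : ¬ HasInfinitePath G) (η : Ordinal.{u}) : Set (Ordinal.{u} × ℕ) :=
  {v | v ∈ V ∧ ∀ ζ (_ : ζ < η), pickAux G V hG ζ ≠ v}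

open Classical in
lemma pickAux_eq (G : SimpleGraph (Ordinal.{u} × ℕ)) (V : Set (Ordinal.{u} × ℕ))
    (hG : ¬ HasInfinitePath G) (η : Ordinal.{u}) :
    pickAux G V hG η = if hR : (Rem G V hG η).Nonempty then
      (exists_finite_deg G hG _ hR).choose else (0, 0) := by
  rw [pickAux, WellFounded.fix_eq]
  rfl

lemma pick_spec (G : SimpleGraph (Ordinal.{u} × ℕ)) (V : Set (Ordinal.{u} × ℕ))
    (hG : ¬ HasInfinitePath G) (η : Ordinal.{u}) (hR : (Rem G V hG η).Nonempty) :
    pickAux G V hG η ∈ Rem G V hG η ∧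
      {w | w ∈ Rem G V hG η ∧ G.Adj (pickAux G V hG η) w}.Finite := by
  have h := (exists_finite_deg G hG (Rem G V hG η) hR).choose_spec
  rw [pickAux_eq G V hG η, dif_pos hR]
  exact h

lemma Rem_antitone (G : SimpleGraph (Ordinal.{u} × ℕ)) (V : Set (Ordinal.{u} × ℕ))
    (hG : ¬ HasInfinitePath G) {ζ η : Ordinal.{u}} (h : ζ ≤ η) :
    Rem G V hG η ⊆ Rem G V hG ζ := by
  intro v hv
  exact ⟨hv.1, fun ζ' hζ' => hv.2 ζ' (lt_of_lt_of_le hζ' h)⟩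

lemma Rem_empty (G : SimpleGraph (Ordinal.{u} × ℕ)) (V : Set (Ordinal.{u} × ℕ))
    (hV : ∀ z ∈ V, z.1 < omega2.{u}) (hG : ¬ HasInfinitePath G) :
    ∃ η, ¬ (Rem G V hG η).Nonempty := by
  by_contra h
  push_neg at h
  set Θ : Ordinal.{u} := (Cardinal.aleph 3).ord with hΘ
  have hmemV : ∀ η : Ordinal.{u}, (pickAux G V hG η).1 < omega2 := by
    intro η
    exact hV _ ((pick_spec G V hG η (h η)).1).1
  let e : Set.Iio Θ → {z : Ordinal.{u} × ℕ // z.1 < omega2} :=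
    fun η => ⟨pickAux G V hG η.1, hmemV η.1⟩
  have hinj : Function.Injective e := by
    intro a b hab
    by_contra hne
    have hne' : a.1 ≠ b.1 := fun hh => hne (Subtype.ext hh)
    have key : ∀ x y : Set.Iio Θ, x.1 < y.1 → e x ≠ e y := by
      intro x y hxy heq
      have := ((pick_spec G V hG y.1 (h y.1)).1).2 x.1 hxy
      exact this (congrArg Subtype.val heq)
    rcases lt_or_gt_of_ne hne' with hlt | hlt
    · exact key a b hlt hab
    · exact key b a hlt hab.symm
  have h1 := Cardinal.mk_le_of_injective hinj
  have hL : #(Set.Iio Θ) = Cardinal.lift.{u+1, u} (Cardinal.aleph 3) := by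
    rw [Ordinal.mk_Iio_ordinal, hΘ, Cardinal.card_ord]
  let e2 : {z : Ordinal.{u} × ℕ // z.1 < omega2} → (Set.Iio omega2.{u}) × ℕ :=
    fun z => (⟨z.1.1, z.2⟩, z.1.2)
  have hinj2 : Function.Injective e2 := by
    intro a b hab
    apply Subtype.ext
    have h1 : a.1.1 = b.1.1 := congrArg (fun q => q.1.1) hab
    have h2 : a.1.2 = b.1.2 := congrArg (fun q => q.2) hab
    exact Prod.ext h1 h2
  have h2 := Cardinal.mk_le_of_injective hinj2
  rw [Cardinal.mk_prod, Ordinal.mk_Iio_ordinal, omega2, Cardinal.card_ord,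
    Cardinal.lift_id'] at h2
  have h3 : Cardinal.lift.{u+1, u} (Cardinal.aleph 3) ≤
      Cardinal.lift.{u+1, u} (Cardinal.aleph 2) * Cardinal.lift.{u+1, 0} #ℕ := by
    rw [← hL]
    exact h1.trans h2
  rw [Cardinal.mk_nat, Cardinal.lift_aleph0] at h3
  have h4 : Cardinal.lift.{u+1, u} (Cardinal.aleph 2) * ℵ₀ =
      Cardinal.lift.{u+1, u} (Cardinal.aleph 2) := by
    apply Cardinal.mul_eq_left
    · rw [← Cardinal.lift_aleph0.{u+1, u}]
      exact Cardinal.lift_le.mpr (Cardinal.aleph0_le_aleph 2)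
    · rw [← Cardinal.lift_aleph0.{u+1, u}]
      exact Cardinal.lift_le.mpr (Cardinal.aleph0_le_aleph 2)
    · exact Cardinal.aleph0_ne_zero
  rw [h4, Cardinal.lift_le] at h3
  exact (Cardinal.aleph_lt_aleph.mpr (show (2:Ordinal) < 3 by exact_mod_cast (by norm_num : (2:ℕ) < 3))).not_ge h3

lemma exists_stage (G : SimpleGraph (Ordinal.{u} × ℕ)) (V : Set (Ordinal.{u} × ℕ))
    (hV : ∀ z ∈ V, z.1 < omega2.{u}) (hG : ¬ HasInfinitePath G) (v : Ordinal.{u} × ℕ)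
    (hv : v ∈ V) :
    ∃ η, (Rem G V hG η).Nonempty ∧ pickAux G V hG η = v ∧ v ∈ Rem G V hG η := by
  obtain ⟨η₀, h0⟩ := Rem_empty G V hV hG
  have hvn : v ∉ Rem G V hG η₀ := fun hmem => h0 ⟨v, hmem⟩
  have hex : ∃ ζ, pickAux G V hG ζ = v := by
    by_contra hno
    push_neg at hno
    exact hvn ⟨hv, fun ζ _ => hno ζ⟩
  set ζ₀ := sInf {ζ | pickAux G V hG ζ = v} with hζ₀
  have hmem : pickAux G V hG ζ₀ = v := csInf_mem hex
  have hvr : v ∈ Rem G V hG ζ₀ := by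
    refine ⟨hv, fun ζ hζ heq => ?_⟩
    exact hζ.not_ge (csInf_le' heq)
  exact ⟨ζ₀, ⟨v, hvr⟩, hmem, hvr⟩

lemma exists_Fmap (G : SimpleGraph (Ordinal.{u} × ℕ)) (V : Set (Ordinal.{u} × ℕ))
    (hV : ∀ z ∈ V, z.1 < omega2.{u})
    (hE : ∀ x y : Ordinal.{u} × ℕ, G.Adj x y → x ∈ V ∧ y ∈ V)
    (hG : ¬ HasInfinitePath G) :
    ∃ F : (Ordinal.{u} × ℕ) → Set (Ordinal.{u} × ℕ),
      (∀ v, (F v).Finite) ∧ (∀ v, F v ⊆ V) ∧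
      (∀ u v, G.Adj u v → v ∈ F u ∨ u ∈ F v) := by
  classical
  choose η hη1 hη2 hη3 using exists_stage G V hV hG
  refine ⟨fun v => if h : v ∈ V then {w | w ∈ Rem G V hG (η v h) ∧ G.Adj v w} else ∅,
    ?_, ?_, ?_⟩
  · intro v
    by_cases h : v ∈ V
    · dsimp only
      rw [dif_pos h]
      have hfin := (pick_spec G V hG (η v h) (hη1 v h)).2
      rw [hη2 v h] at hfin
      exact hfin
    · dsimp only
      rw [dif_neg h]; exact Set.finite_empty
  · intro v w hw
    by_cases h : v ∈ V
    · dsimp only at hw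
      rw [dif_pos h] at hw; exact hw.1.1
    · dsimp only at hw
      rw [dif_neg h] at hw; exact absurd hw (Set.notMem_empty w)
  · intro x y hxy
    obtain ⟨hx, hy⟩ := hE x y hxy
    rcases lt_trichotomy (η x hx) (η y hy) with h | h | h
    · left
      dsimp only
      rw [dif_pos hx]
      exact ⟨Rem_antitone G V hG h.le (hη3 y hy), hxy⟩
    · exfalso
      have : x = y := by rw [← hη2 x hx, ← hη2 y hy, h]
      exact hxy.ne this
    · right
      dsimp only
      rw [dif_pos hy]
      exact ⟨Rem_antitone G V hG h.le (hη3 x hx), hxy.symm⟩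

lemma club_of (H : Ordinal.{u} → Ordinal.{u}) (hH : ∀ γ < omega2.{u}, H γ < omega2.{u}) :
    IsClubIn {δ | δ < omega2.{u} ∧ ∀ γ < δ, H γ < δ} omega2.{u} := by
  refine ⟨fun δ hδ => hδ.1, ?_, ?_⟩
  · intro a ha
    -- iterate
    let T : Ordinal.{u} → Ordinal.{u} := fun b => max (b + 1) (Ordinal.blsub b (fun γ _ => H γ))
    have hT : ∀ b < omega2.{u}, T b < omega2.{u} := by
      intro b hb
      apply max_lt
      · rw [Ordinal.add_one_eq_succ]
        exact aux_omega2_limit.succ_lt hb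
      · apply Ordinal.blsub_lt_ord
        · rw [aux_cof]
          rw [omega2, Cardinal.lt_ord] at hb
          exact hb
        · intro i hi
          exact hH i (hi.trans hb)
    let s : ℕ → Ordinal.{u} := fun n => T^[n] (a + 1)
    have hs : ∀ n, s n < omega2.{u} := by
      intro n
      induction n with
      | zero =>
        show a + 1 < omega2.{u}
        rw [Ordinal.add_one_eq_succ]
        exact aux_omega2_limit.succ_lt ha
      | succ n ih =>
        have : s (n+1) = T (s n) := Function.iterate_succ_apply' T n (a+1)
        rw [this]
        exact hT _ ih
    refine ⟨iSup s, ⟨natSup_lt aux_a02 hs, ?_⟩, ?_⟩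
    · intro γ hγ
      obtain ⟨n, hn⟩ := Ordinal.lt_iSup_iff.mp hγ
      have h1 : H γ < Ordinal.blsub (s n) (fun γ _ => H γ) := Ordinal.lt_blsub _ γ hn
      have h2 : Ordinal.blsub (s n) (fun γ _ => H γ) ≤ T (s n) := le_max_right _ _
      have h3 : T (s n) = s (n+1) := (Function.iterate_succ_apply' T n (a+1)).symm
      exact lt_of_lt_of_le (h1.trans_le (h2.trans_eq h3)) (Ordinal.le_iSup s (n+1))
    · have h0 : a < s 0 := by
        show a < a + 1
        rw [Ordinal.add_one_eq_succ]; exact Order.lt_succ a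
      exact h0.trans_le (Ordinal.le_iSup s 0)
  · intro δ hδ _ hun
    refine ⟨hδ, fun γ hγ => ?_⟩
    obtain ⟨c, hcC, hγc, hcδ⟩ := hun γ hγ
    exact (hcC.2 γ hγc).trans hcδ

lemma lift_omega2 : Ordinal.lift.{v} omega2.{u} = Ordinal.lift.{u} omega2.{v} := by
  rw [omega2, omega2, Cardinal.lift_ord, Cardinal.lift_ord]
  rw [Cardinal.lift_aleph, Cardinal.lift_aleph]
  congr 1
  simp

noncomputable def iota : Ordinal.{u} → Ordinal.{v} := fun a =>
  if h : Ordinal.lift.{v} a ≤ Ordinal.lift.{u} omega2.{v} then (Set.mem_range.mp (Ordinal.mem_range_lift_of_le h)).choose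
  else 0

lemma iota_lift {a : Ordinal.{u}} (h : a < omega2.{u}) :
    Ordinal.lift.{u} (iota.{u, v} a) = Ordinal.lift.{v} a := by
  have h1 : Ordinal.lift.{v} a ≤ Ordinal.lift.{u} omega2.{v} := by
    rw [← lift_omega2]
    exact (Ordinal.lift_lt.mpr h).le
  rw [iota, dif_pos h1]
  exact (Set.mem_range.mp (Ordinal.mem_range_lift_of_le h1)).choose_spec

lemma iota_lt {a : Ordinal.{u}} (h : a < omega2.{u}) : iota.{u, v} a < omega2.{v} := by
  have := iota_lift.{u, v} h
  have h2 : Ordinal.lift.{u} (iota.{u, v} a) < Ordinal.lift.{u} omega2.{v} := by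
    rw [this, ← lift_omega2]
    exact Ordinal.lift_lt.mpr h
  exact Ordinal.lift_lt.mp h2

lemma iota_inj {a b : Ordinal.{u}} (ha : a < omega2.{u}) (hb : b < omega2.{u})
    (h : iota.{u, v} a = iota.{u, v} b) : a = b := by
  have h1 : Ordinal.lift.{v} a = Ordinal.lift.{v} b := by
    rw [← iota_lift.{u, v} ha, ← iota_lift.{u, v} hb, h]
  exact Ordinal.lift_inj.mp h1

noncomputable def imgset (A : Set (Ordinal.{u} × ℕ)) : Set (Ordinal.{v} × ℕ) :=
  (fun z : Ordinal.{u} × ℕ => ((iota.{u, v} z.1, z.2) : Ordinal.{v} × ℕ)) '' A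

lemma imgset_inj {A B : Set (Ordinal.{u} × ℕ)} (hA : ∀ z ∈ A, z.1 < omega2.{u})
    (hB : ∀ z ∈ B, z.1 < omega2.{u}) (h : imgset.{u, v} A = imgset.{u, v} B) : A = B := by
  ext z
  constructor
  · intro hz
    have : (iota.{u, v} z.1, z.2) ∈ imgset.{u, v} B := by
      rw [← h]; exact ⟨z, hz, rfl⟩
    obtain ⟨w, hw, hwe⟩ := this
    have hwe' : ((iota.{u, v} w.1, w.2) : Ordinal.{v} × ℕ) = (iota.{u, v} z.1, z.2) := hwe
    rw [Prod.mk.injEq] at hwe'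
    obtain ⟨h1, h2⟩ := hwe'
    have h3 : w.1 = z.1 := iota_inj (hB w hw) (hA z hz) h1
    have : w = z := Prod.ext h3 h2
    rwa [← this]
  · intro hz
    have : (iota.{u, v} z.1, z.2) ∈ imgset.{u, v} A := by
      rw [h]; exact ⟨z, hz, rfl⟩
    obtain ⟨w, hw, hwe⟩ := this
    have hwe' : ((iota.{u, v} w.1, w.2) : Ordinal.{v} × ℕ) = (iota.{u, v} z.1, z.2) := hwe
    rw [Prod.mk.injEq] at hwe'
    obtain ⟨h1, h2⟩ := hwe'
    have h3 : w.1 = z.1 := iota_inj (hA w hw) (hB z hz) h1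
    have : w = z := Prod.ext h3 h2
    rwa [← this]

lemma imgset_mem {A : Set (Ordinal.{u} × ℕ)} {z : Ordinal.{u} × ℕ} (hz : z ∈ A) :
    ((iota.{u, v} z.1, z.2) : Ordinal.{v} × ℕ) ∈ imgset.{u, v} A := ⟨z, hz, rfl⟩

lemma CH_transfer (h : (2 : Cardinal.{u}) ^ Cardinal.aleph 0 = Cardinal.aleph 1) :
    (2 : Cardinal.{v}) ^ Cardinal.aleph 0 = Cardinal.aleph 1 := by
  have h1 := congrArg (Cardinal.lift.{v}) h
  rw [Cardinal.lift_power, Cardinal.lift_aleph, Cardinal.lift_aleph] at h1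
  have h2 : (Cardinal.lift.{v} (2 : Cardinal.{u})) = (2 : Cardinal.{max u v}) := by simp
  rw [h2] at h1
  have h3 : Ordinal.lift.{v} (0 : Ordinal.{u}) = (0 : Ordinal.{max u v}) := by simp
  have h4 : Ordinal.lift.{v} (1 : Ordinal.{u}) = (1 : Ordinal.{max u v}) := by simp
  rw [h3, h4] at h1
  -- now transfer down to v
  apply Cardinal.lift_injective.{max u v, v}
  rw [Cardinal.lift_power, Cardinal.lift_aleph, Cardinal.lift_aleph]
  have h5 : (Cardinal.lift.{max u v} (2 : Cardinal.{v})) = (2 : Cardinal.{max u v}) := by simp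
  have h6 : Ordinal.lift.{max u v} (0 : Ordinal.{v}) = (0 : Ordinal.{max u v}) := by simp
  have h7 : Ordinal.lift.{max u v} (1 : Ordinal.{v}) = (1 : Ordinal.{max u v}) := by simp
  rw [h5, h6, h7, h1]


/-- Assume CH.  Let `H = (V, E)` be a graph with `V ⊆ ω₂ × ω` and no infinite path, and
let `(p_α : α < ω₂)` be countable independent subsets of `V`.  Then there are a club
`C ⊆ ω₂` and a function `f : ω₂ → ω₂` regressive on `C ∩ S^{ω₂}_{ω₁}` such that for all
`α, β ∈ C ∩ S^{ω₂}_{ω₁}`, if `f(α) = f(β)` then `p_α ∪ p_β` is independent. -/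
theorem stmt10
    (hCH : (2 : Cardinal) ^ Cardinal.aleph 0 = Cardinal.aleph 1)
    (G : SimpleGraph (Ordinal × ℕ)) (V : Set (Ordinal × ℕ))
    (hV : ∀ p ∈ V, p.1 < omega2)
    (hE : ∀ x y : Ordinal × ℕ, G.Adj x y → x ∈ V ∧ y ∈ V)
    (hG : ¬ HasInfinitePath G)
    (p : Ordinal → Set (Ordinal × ℕ))
    (hp : ∀ α < omega2, p α ⊆ V ∧ (p α).Countable ∧ IsIndependent G (p α)) :
    ∃ C : Set Ordinal, ∃ f : Ordinal → Ordinal,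
      IsClubIn C omega2 ∧
      (∀ α ∈ C ∩ Somega2omega1, 0 < α → f α < α) ∧
      (∀ α ∈ C ∩ Somega2omega1, ∀ β ∈ C ∩ Somega2omega1,
        f α = f β → IsIndependent G (p α ∪ p β)) := by
  classical
  obtain ⟨F, hFfin, hFV, hFdich⟩ := exists_Fmap G V hV hE hG
  obtain ⟨code, hcinj, hclt⟩ := exists_code (CH_transfer hCH)
  -- countability / bound transfer helpers
  have himg_bd : ∀ A : Set (Ordinal × ℕ), (∀ z ∈ A, z.1 < omega2) →
      ∀ w ∈ imgset A, w.1 < omega2 := by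
    rintro A hA w ⟨z, hz, rfl⟩
    exact iota_lt (hA z hz)
  have hfib_cnt : ∀ γ : Ordinal,
      ({z : Ordinal × ℕ | z.1 < omega2 ∧ iota z.1 = γ}).Countable := by
    intro γ
    by_cases hex : ∃ a : Ordinal, a < omega2 ∧ iota a = γ
    · obtain ⟨a, ha1, ha2⟩ := hex
      have hsub : {z : Ordinal × ℕ | z.1 < omega2 ∧ iota z.1 = γ} ⊆
          Set.range (fun n : ℕ => ((a, n) : Ordinal × ℕ)) := by
        rintro z ⟨hz1, hz2⟩
        have h3 : z.1 = a := iota_inj hz1 ha1 (hz2.trans ha2.symm)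
        exact ⟨z.2, Prod.ext h3.symm rfl⟩
      exact Set.Countable.mono hsub (Set.countable_range _)
    · have hempty : {z : Ordinal × ℕ | z.1 < omega2 ∧ iota z.1 = γ} = ∅ := by
        ext z
        simp only [Set.mem_setOf_eq, Set.mem_empty_iff_false, iff_false, not_and]
        intro h1 h2
        exact hex ⟨z.1, h1, h2⟩
      rw [hempty]; exact Set.countable_empty
  -- the fiber union of F-sets
  set fib : Ordinal → Set (Ordinal × ℕ) := fun γ =>
    ⋃ z ∈ {z : Ordinal × ℕ | z.1 < omega2 ∧ iota z.1 = γ}, F z with hfibdef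
  have hfib_cnt2 : ∀ γ : Ordinal, (fib γ).Countable :=
    fun γ => (hfib_cnt γ).biUnion (fun z _ => (hFfin z).countable)
  have hfib_bd : ∀ γ : Ordinal, ∀ z ∈ fib γ, z.1 < omega2 := by
    intro γ z hz
    rw [hfibdef] at hz
    obtain ⟨w, _, hw3⟩ := Set.mem_iUnion₂.mp hz
    exact hV z (hFV w hw3)
  -- the closure function
  set H : Ordinal → Ordinal := fun γ =>
    max (max (bset (imgset (p γ))) (bset (imgset (fib γ)))) (γ + omega1o) with hHdef
  have hHlt : ∀ γ < omega2, H γ < omega2 := by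
    intro γ hγ
    rw [hHdef]
    refine max_lt (max_lt ?_ ?_) (aux_add_lt γ hγ)
    · obtain ⟨γ', h1, h2⟩ := bound_lemma aux_a02 ((hp γ hγ).2.1.image _)
        (himg_bd _ (fun z hz => hV z ((hp γ hγ).1 hz)))
      exact (bset_le h2).trans_lt h1
    · obtain ⟨γ', h1, h2⟩ := bound_lemma aux_a02 ((hfib_cnt2 γ).image _)
        (himg_bd _ (hfib_bd γ))
      exact (bset_le h2).trans_lt h1
  set C : Set Ordinal := {δ | δ < omega2 ∧ ∀ γ < δ, H γ < δ} with hCdef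
  have hclub : IsClubIn C omega2 := club_of H hHlt
  have hCmem : ∀ δ, δ ∈ C → δ < omega2 ∧ ∀ γ < δ, H γ < δ := fun δ hδ => hδ
  have hSmem : ∀ δ, δ ∈ Somega2omega1 → δ < omega2 ∧ δ.cof = Cardinal.aleph 1 :=
    fun δ hδ => hδ
  -- trace and low-link sets
  set rset : Ordinal → Set (Ordinal × ℕ) := fun δ => {z | z ∈ p δ ∧ iota z.1 < δ}
    with hrdef
  set wset : Ordinal → Set (Ordinal × ℕ) := fun δ =>
    {z | iota z.1 < δ ∧ ∃ y, (y ∈ p δ ∧ ¬ iota y.1 < δ) ∧ z ∈ F y} with hwdef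
  have hrV : ∀ δ, δ < omega2 → ∀ z ∈ rset δ, z.1 < omega2 :=
    fun δ hδ z hz => hV z ((hp δ hδ).1 hz.1)
  have hwV : ∀ δ, ∀ z ∈ wset δ, z.1 < omega2 := by
    rintro δ z ⟨_, y, _, hzF⟩
    exact hV z (hFV y hzF)
  have hGood : ∀ δ, δ ∈ C → δ ∈ Somega2omega1 →
      GoodO (imgset (rset δ), imgset (wset δ)) := by
    intro δ hδC hδS
    have hδ2 : δ < omega2 := (hCmem δ hδC).1
    obtain ⟨hsub, hcnt, hind⟩ := hp δ hδ2
    refine ⟨(hcnt.mono (fun z hz => hz.1)).image _, ?_,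
      himg_bd _ (hrV δ hδ2), himg_bd _ (hwV δ)⟩
    have hq : ({y | y ∈ p δ ∧ ¬ iota y.1 < δ}).Countable := hcnt.mono (fun z hz => hz.1)
    have hsubw : wset δ ⊆ ⋃ y ∈ {y | y ∈ p δ ∧ ¬ iota y.1 < δ}, F y := by
      rintro z ⟨hz1, y, hy, hzF⟩
      exact Set.mem_biUnion hy hzF
    exact (Set.Countable.mono hsubw (hq.biUnion (fun y _ => (hFfin y).countable))).image _
  set f : Ordinal → Ordinal := fun δ => if h : δ ∈ C ∧ δ ∈ Somega2omega1 then
    code (imgset (rset δ), imgset (wset δ)) else 0 with hfdef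
  have hfval : ∀ δ, δ ∈ C → δ ∈ Somega2omega1 →
      f δ = code (imgset (rset δ), imgset (wset δ)) := by
    intro δ h1 h2
    rw [hfdef]
    exact dif_pos ⟨h1, h2⟩
  have hreg : ∀ δ, δ ∈ C → δ ∈ Somega2omega1 → f δ < δ := by
    intro δ hδC hδS
    rw [hfval δ hδC hδS]
    apply hclt _ _ (hGood δ hδC hδS) (hSmem δ hδS).2
    · intro γ hγ
      have h1 : γ + omega1o ≤ H γ := by rw [hHdef]; exact le_max_right _ _
      exact h1.trans_lt ((hCmem δ hδC).2 γ hγ)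
    · rintro z ⟨w, hw, rfl⟩
      exact hw.2
    · rintro z ⟨w, hw, rfl⟩
      exact hw.1
  -- the core independence argument
  have hcore : ∀ α β, α ∈ C → α ∈ Somega2omega1 → β ∈ C → β ∈ Somega2omega1 → α < β →
      rset α = rset β → wset α = wset β →
      ∀ x ∈ p α, ∀ y ∈ p β, ¬ G.Adj x y := by
    intro α β hαC hαS hβC hβS hlt hrs hws x hx y hy hadj
    have hα2 : α < omega2 := (hCmem α hαC).1
    have hβ2 : β < omega2 := (hCmem β hβC).1
    have hindα := (hp α hα2).2.2
    have hindβ := (hp β hβ2).2.2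
    have hx1 : iota x.1 < β := by
      have h1 : iota x.1 < bset (imgset (p α)) :=
        bset_spec ⟨omega2, himg_bd _ (fun z hz => hV z ((hp α hα2).1 hz))⟩
          (iota x.1, x.2) (imgset_mem hx)
      have h2 : bset (imgset (p α)) ≤ H α := by
        rw [hHdef]; exact (le_max_left _ _).trans (le_max_left _ _)
      exact (h1.trans_le h2).trans ((hCmem β hβC).2 α hlt)
    by_cases hy1 : iota y.1 < β
    · have hyr : y ∈ rset α := by rw [hrs]; exact ⟨hy, hy1⟩
      exact hindα x hx y hyr.1 hadj
    · by_cases hx2 : iota x.1 < α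
      · have hxr : x ∈ rset β := by rw [← hrs]; exact ⟨hx, hx2⟩
        exact hindβ x hxr.1 y hy hadj
      · rcases hFdich x y hadj with hyF | hxF
        · apply hy1
          have hxfib : x ∈ {z : Ordinal × ℕ | z.1 < omega2 ∧ iota z.1 = iota x.1} :=
            ⟨hV x ((hp α hα2).1 hx), rfl⟩
          have hyfib : y ∈ fib (iota x.1) := by
            rw [hfibdef]
            exact Set.mem_biUnion hxfib hyF
          have hyb : iota y.1 < bset (imgset (fib (iota x.1))) :=
            bset_spec ⟨omega2, himg_bd _ (hfib_bd _)⟩ (iota y.1, y.2) (imgset_mem hyfib)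
          have h2 : bset (imgset (fib (iota x.1))) ≤ H (iota x.1) := by
            rw [hHdef]; exact (le_max_right _ _).trans (le_max_left _ _)
          exact (hyb.trans_le h2).trans ((hCmem β hβC).2 (iota x.1) hx1)
        · have hxw : x ∈ wset β := ⟨hx1, y, ⟨hy, hy1⟩, hxF⟩
          rw [← hws] at hxw
          exact hx2 hxw.1
  refine ⟨C, f, hclub, ?_, ?_⟩
  · intro α hα _
    exact hreg α hα.1 hα.2
  · intro α hα β hβ hfeq
    obtain ⟨hαC, hαS⟩ := hα
    obtain ⟨hβC, hβS⟩ := hβ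
    rw [hfval α hαC hαS, hfval β hβC hβS] at hfeq
    have hα2 : α < omega2 := (hCmem α hαC).1
    have hβ2 : β < omega2 := (hCmem β hβC).1
    have hOeq := hcinj _ _ (hGood α hαC hαS) (hGood β hβC hβS) hfeq
    have hrs : rset α = rset β :=
      imgset_inj (hrV α hα2) (hrV β hβ2) (congrArg Prod.fst hOeq)
    have hws : wset α = wset β :=
      imgset_inj (hwV α) (hwV β) (congrArg Prod.snd hOeq)
    intro x hx y hy hadj
    rcases lt_trichotomy α β with h | h | h
    · rcases hx with hx | hx <;> rcases hy with hy | hy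
      · exact (hp α hα2).2.2 x hx y hy hadj
      · exact hcore α β hαC hαS hβC hβS h hrs hws x hx y hy hadj
      · exact hcore α β hαC hαS hβC hβS h hrs hws y hy x hx hadj.symm
      · exact (hp β hβ2).2.2 x hx y hy hadj
    · subst h
      rcases hx with hx | hx <;> rcases hy with hy | hy <;>
        exact (hp α hα2).2.2 x hx y hy hadj
    · rcases hx with hx | hx <;> rcases hy with hy | hy
      · exact (hp α hα2).2.2 x hx y hy hadj
      · exact hcore β α hβC hβS hαC hαS h hrs.symm hws.symm y hy x hx hadj.symm
      · exact hcore β α hβC hβS hαC hαS h hrs.symm hws.symm x hx y hy hadj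
      · exact (hp β hβ2).2.2 x hx y hy hadj
end
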